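/- arXiv:2105.04878 — 5 statements merged into one kernel-verified Lean document; each statement's English description precedes it below -/
import Mathlib

section
/- Let X and Y be graphs with bounded degree and f : X → Y a quasi-isometry. Then there exists a constant M ≥ 0 such that |∂ f^{-1}(A)| ≤ M · |∂A| for every finite subset A of vertices of Y. -/
open SimpleGraph

/-- The boundary `∂A` of a set of vertices: the vertices not in `A` adjacent to a
vertex of `A`. -/
def bdry {V : Type*} (G : SimpleGraph V) (A : Set V) : Set V :=
  {v | v ∉ A ∧ ∃ a ∈ A, G.Adj a v}

/-- `f` is a quasi-isometry between the two graphs (with their graph metrics). -/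
def IsQI {V W : Type*} (G : SimpleGraph V) (H : SimpleGraph W) (f : V → W) : Prop :=
  ∃ A B : ℝ, 0 < A ∧ 0 ≤ B ∧
    (∀ x y : V, (G.dist x y : ℝ) / A - B ≤ (H.dist (f x) (f y) : ℝ) ∧
      (H.dist (f x) (f y) : ℝ) ≤ A * (G.dist x y : ℝ) + B) ∧
    ∀ w : W, ∃ x : V, (H.dist (f x) w : ℝ) ≤ B

/-- The graph has bounded degree. -/
def BddDeg {V : Type*} (G : SimpleGraph V) : Prop :=
  ∃ D : ℕ, ∀ v : V, (G.neighborSet v).Finite ∧ (G.neighborSet v).ncard ≤ D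

/-- A walk from inside `A` to outside `A` passes through the boundary, and the
boundary vertex is within the walk's length of the endpoint. -/
lemma bdry_cross {W : Type*} (H : SimpleGraph W) (A : Set W) :
    ∀ {u v : W} (p : H.Walk u v), u ∈ A → v ∉ A →
      ∃ b ∈ bdry H A, H.dist b v ≤ p.length := by
  intro u v p
  induction p with
  | nil => intro hu hv; exact absurd hu hv
  | @cons u u' v h q ih =>
    intro hu hv
    by_cases hu' : u' ∈ A
    · obtain ⟨b, hb, hd⟩ := ih hu' hv
      exact ⟨b, hb, hd.trans (by simp)⟩
    · exact ⟨u', ⟨hu', u, hu, h⟩, (SimpleGraph.dist_le q).trans (by simp)⟩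

/-- Balls in a connected graph of bounded degree are finite, with cardinality at
most `(D+1)^r`. -/
lemma ball_bound {V : Type*} (G : SimpleGraph V) (hc : G.Connected) (D : ℕ)
    (hD : ∀ v : V, (G.neighborSet v).Finite ∧ (G.neighborSet v).ncard ≤ D) (x₀ : V) :
    ∀ r : ℕ, {x | G.dist x₀ x ≤ r}.Finite ∧ {x | G.dist x₀ x ≤ r}.ncard ≤ (D + 1) ^ r := by
  classical
  intro r
  induction r with
  | zero =>
    have hsub : {x | G.dist x₀ x ≤ 0} ⊆ {x₀} := by
      intro x hx
      simp only [Set.mem_setOf_eq, Nat.le_zero] at hx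
      have hx0 := (hc.dist_eq_zero_iff).mp hx
      simp [hx0.symm]
    refine ⟨(Set.finite_singleton x₀).subset hsub, ?_⟩
    calc {x | G.dist x₀ x ≤ 0}.ncard ≤ ({x₀} : Set V).ncard :=
          Set.ncard_le_ncard hsub (Set.finite_singleton x₀)
      _ = 1 := Set.ncard_singleton x₀
      _ ≤ (D + 1) ^ 0 := by simp
  | succ r ih =>
    obtain ⟨hfin, hcard⟩ := ih
    set s : Finset V := hfin.toFinset with hs
    set t : Finset V := s ∪ s.biUnion (fun y => (hD y).1.toFinset) with ht
    have hsub : {x | G.dist x₀ x ≤ r + 1} ⊆ ↑t := by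
      intro x hx
      simp only [Set.mem_setOf_eq] at hx
      by_cases hle : G.dist x₀ x ≤ r
      · simp only [ht, Finset.coe_union, Set.mem_union, Finset.mem_coe, hs,
          Set.Finite.mem_toFinset]
        exact Or.inl hle
      · have hdx : G.dist x x₀ = r + 1 := by rw [SimpleGraph.dist_comm]; omega
        have hne : G.dist x x₀ ≠ 0 := by omega
        obtain ⟨p, hp⟩ := SimpleGraph.exists_walk_of_dist_ne_zero hne
        rw [hdx] at hp
        cases p with
        | nil => simp at hp
        | @cons _ y _ h q =>
          have hql : q.length = r := by
            simpa using hp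
          have hy : G.dist x₀ y ≤ r := by
            rw [SimpleGraph.dist_comm]
            exact (SimpleGraph.dist_le q).trans (le_of_eq hql)
          simp only [ht, Finset.coe_union, Set.mem_union, Finset.mem_coe,
            Finset.mem_biUnion, hs, Set.Finite.mem_toFinset]
          exact Or.inr ⟨y, hy, by simpa [SimpleGraph.mem_neighborSet] using h.symm⟩
    refine ⟨(t.finite_toSet).subset hsub, ?_⟩
    have hscard : s.card ≤ (D + 1) ^ r := by
      rwa [hs, ← Set.ncard_eq_toFinset_card _ hfin]
    calc {x | G.dist x₀ x ≤ r + 1}.ncard ≤ t.card := by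
          rw [← Set.ncard_coe_finset]
          exact Set.ncard_le_ncard hsub t.finite_toSet
      _ ≤ s.card + (s.biUnion (fun y => (hD y).1.toFinset)).card :=
          Finset.card_union_le _ _
      _ ≤ s.card + s.card * D := by
          have h1 : (s.biUnion (fun y => (hD y).1.toFinset)).card ≤ s.card * D := by
            refine Finset.card_biUnion_le.trans ?_
            have := Finset.sum_le_card_nsmul s (fun y => (hD y).1.toFinset.card) D
              (fun y _ => le_trans (Set.ncard_eq_toFinset_card _ (hD y).1).symm.le (hD y).2)
            simpa [smul_eq_mul] using this
          omega
      _ = s.card * (D + 1) := by ring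
      _ ≤ (D + 1) ^ r * (D + 1) := Nat.mul_le_mul_right _ hscard
      _ = (D + 1) ^ (r + 1) := (pow_succ _ _).symm

/-- For a quasi-isometry `f` between graphs of bounded degree, there is a constant `M`
with `|∂ f⁻¹(A)| ≤ M * |∂A|` for every finite set `A` of vertices of the target. -/
theorem stmt4 {V W : Type*} (G : SimpleGraph V) (Hgr : SimpleGraph W)
    (hGc : G.Connected) (hHc : Hgr.Connected) (hGd : BddDeg G) (hHd : BddDeg Hgr)
    (f : V → W) (hf : IsQI G Hgr f) :
    ∃ M : ℕ, ∀ A : Finset W,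
      (bdry G (f ⁻¹' (A : Set W))).ncard ≤ M * (bdry Hgr (A : Set W)).ncard := by
  classical
  obtain ⟨C, B, hC, hB, hbd, _⟩ := hf
  obtain ⟨DG, hDG⟩ := hGd
  obtain ⟨DH, hDH⟩ := hHd
  set R : ℕ := ⌈C + B⌉₊ with hR
  set K : ℕ := ⌈C * (2 * R + B)⌉₊ with hK
  refine ⟨(DG + 1) ^ K, ?_⟩
  intro A
  set S := bdry G (f ⁻¹' (A : Set W)) with hS
  set T := bdry Hgr (A : Set W) with hT
  have hTfin : T.Finite := by
    apply Set.Finite.subset (Set.Finite.biUnion A.finite_toSet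
      (fun a _ => (hDH a).1))
    rintro b ⟨hbA, a, haA, hadj⟩
    exact Set.mem_biUnion haA hadj
  -- every boundary point of the preimage maps within distance R of the boundary of A
  have key : ∀ x ∈ S, ∃ b ∈ T, Hgr.dist b (f x) ≤ R := by
    rintro x ⟨hx, a', ha', hadj⟩
    have hdist1 : G.dist a' x = 1 := SimpleGraph.dist_eq_one_iff_adj.mpr hadj
    have hreal : (Hgr.dist (f a') (f x) : ℝ) ≤ C + B := by
      have h2 := (hbd a' x).2
      rw [hdist1] at h2
      simpa using h2
    have hRle : Hgr.dist (f a') (f x) ≤ R := by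
      have := hreal.trans (Nat.le_ceil (C + B))
      exact_mod_cast this
    have hfa' : f a' ∈ (A : Set W) := ha'
    have hfx : f x ∉ (A : Set W) := hx
    have hne0 : Hgr.dist (f a') (f x) ≠ 0 := by
      rw [SimpleGraph.dist_ne_zero_iff_ne_and_reachable]
      exact ⟨fun hEq => hfx (hEq ▸ hfa'), hHc _ _⟩
    obtain ⟨p, hp⟩ := SimpleGraph.exists_walk_of_dist_ne_zero hne0
    obtain ⟨b, hb, hdb⟩ := bdry_cross Hgr (A : Set W) p hfa' hfx
    exact ⟨b, hb, hdb.trans (by rw [hp]; exact hRle)⟩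
  -- each "fiber" is small
  have fiber : ∀ b : W, {x | x ∈ S ∧ Hgr.dist b (f x) ≤ R}.Finite ∧
      {x | x ∈ S ∧ Hgr.dist b (f x) ≤ R}.ncard ≤ (DG + 1) ^ K := by
    intro b
    by_cases hne : {x | x ∈ S ∧ Hgr.dist b (f x) ≤ R}.Nonempty
    · obtain ⟨x₀, hx₀⟩ := hne
      have hsub : {x | x ∈ S ∧ Hgr.dist b (f x) ≤ R} ⊆ {x | G.dist x₀ x ≤ K} := by
        rintro x ⟨hxS, hxd⟩
        have h1 : Hgr.dist (f x₀) b ≤ R := by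
          rw [SimpleGraph.dist_comm]; exact hx₀.2
        have htri : Hgr.dist (f x₀) (f x) ≤ Hgr.dist (f x₀) b + Hgr.dist b (f x) :=
          hHc.dist_triangle
        have h2R : (Hgr.dist (f x₀) (f x) : ℝ) ≤ 2 * R := by
          have : Hgr.dist (f x₀) (f x) ≤ 2 * R := by omega
          exact_mod_cast this
        have hlow := (hbd x₀ x).1
        have hdivle : (G.dist x₀ x : ℝ) / C ≤ 2 * R + B := by linarith
        have hmul : (G.dist x₀ x : ℝ) ≤ C * (2 * R + B) := by
          rw [div_le_iff₀ hC] at hdivle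
          linarith [hdivle]
        have hfin : (G.dist x₀ x : ℝ) ≤ (K : ℝ) :=
          hmul.trans (Nat.le_ceil _)
        exact_mod_cast hfin
      obtain ⟨bf, bc⟩ := ball_bound G hGc DG hDG x₀ K
      exact ⟨bf.subset hsub, le_trans (Set.ncard_le_ncard hsub bf) bc⟩
    · rw [Set.not_nonempty_iff_eq_empty] at hne
      simp [hne]
  set t : Finset W := hTfin.toFinset with htdef
  set u : Finset V := t.biUnion (fun b => (fiber b).1.toFinset) with hu
  have hSsub : S ⊆ ↑u := by
    intro x hx
    obtain ⟨b, hb, hdb⟩ := key x hx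
    simp only [hu, Finset.coe_biUnion, Set.mem_iUnion, Finset.mem_coe,
      Set.Finite.mem_toFinset, htdef]
    exact ⟨b, hb, hx, hdb⟩
  calc S.ncard ≤ u.card := by
        rw [← Set.ncard_coe_finset]
        exact Set.ncard_le_ncard hSsub u.finite_toSet
    _ ≤ ∑ b ∈ t, ((fiber b).1.toFinset).card := Finset.card_biUnion_le
    _ ≤ t.card * (DG + 1) ^ K := by
        have := Finset.sum_le_card_nsmul t (fun b => ((fiber b).1.toFinset).card)
          ((DG + 1) ^ K)
          (fun b _ => le_trans (Set.ncard_eq_toFinset_card _ (fiber b).1).symm.le (fiber b).2)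
        simpa [smul_eq_mul] using this
    _ = (DG + 1) ^ K * T.ncard := by
        rw [mul_comm, htdef, ← Set.ncard_eq_toFinset_card _ hTfin]
end

section
/- Let X, Y, Z be connected graphs with bounded degree, κ1, κ2 > 0 real numbers, and f, h : X → Y and g : Y → Z quasi-isometries. Then: (i) if f and h are at bounded distance and f is quasi-κ1-to-one, then h is quasi-κ1-to-one; (ii) if f is quasi-κ1-to-one and g is quasi-κ2-to-one, then g∘f is quasi-κ1κ2-to-one; (iii) if f̄ is a quasi-inverse of f and f is quasi-κ1-to-one, then f̄ is quasi-(1/κ1)-to-one. -/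
open SimpleGraph

/-- A proper map `f` into the graph `H` is quasi-`κ`-to-one: preimages of finite sets
are finite and `| κ|A| − |f⁻¹(A)| | ≤ C|∂A|` for all finite `A`. -/
def QKTO {V W : Type*} (H : SimpleGraph W) (f : V → W) (κ : ℝ) : Prop :=
  (∀ A : Finset W, (f ⁻¹' (A : Set W)).Finite) ∧
  ∃ C : ℝ, 0 < C ∧ ∀ A : Finset W,
    |κ * (A.card : ℝ) - ((f ⁻¹' (A : Set W)).ncard : ℝ)| ≤
      C * ((bdry H (A : Set W)).ncard : ℝ)

namespace QktoAux

variable {V W : Type*}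

def nbhd (G : SimpleGraph V) (S : Set V) : Set V :=
  S ∪ {v | ∃ s ∈ S, G.Adj s v}

lemma subset_nbhd (G : SimpleGraph V) (S : Set V) : S ⊆ nbhd G S :=
  Set.subset_union_left

lemma nbhd_mono (G : SimpleGraph V) {S T : Set V} (h : S ⊆ T) : nbhd G S ⊆ nbhd G T := by
  rintro v (hv | ⟨s, hs, ha⟩)
  · exact Or.inl (h hv)
  · exact Or.inr ⟨s, h hs, ha⟩

def itN (G : SimpleGraph V) : ℕ → Set V → Set V
  | 0, S => S
  | n + 1, S => nbhd G (itN G n S)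

lemma itN_succ (G : SimpleGraph V) (n : ℕ) (S : Set V) :
    itN G (n + 1) S = nbhd G (itN G n S) := rfl

lemma subset_itN (G : SimpleGraph V) (n : ℕ) (S : Set V) : S ⊆ itN G n S := by
  induction n with
  | zero => exact subset_rfl
  | succ n ih => exact ih.trans (subset_nbhd G _)

lemma itN_mono (G : SimpleGraph V) (n : ℕ) {S T : Set V} (h : S ⊆ T) :
    itN G n S ⊆ itN G n T := by
  induction n with
  | zero => exact h
  | succ n ih => exact nbhd_mono G ih

lemma itN_nbhd (G : SimpleGraph V) (n : ℕ) (S : Set V) :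
    itN G n (nbhd G S) = nbhd G (itN G n S) := by
  induction n with
  | zero => rfl
  | succ n ih => rw [itN_succ, ih, itN_succ]

lemma itN_le (G : SimpleGraph V) {m n : ℕ} (h : m ≤ n) (S : Set V) :
    itN G m S ⊆ itN G n S := by
  induction n with
  | zero => simpa [Nat.le_zero.mp h] using subset_rfl
  | succ n ih =>
    rcases Nat.lt_or_ge m (n + 1) with hm | hm
    · exact (ih (Nat.lt_succ_iff.mp hm)).trans (subset_nbhd G _)
    · have : m = n + 1 := le_antisymm h hm
      subst this; exact subset_rfl

lemma walk_mem_itN (G : SimpleGraph V) {a v : V} (p : G.Walk a v) :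
    ∀ (n : ℕ) (S : Set V), p.length ≤ n → a ∈ S → v ∈ itN G n S := by
  induction p with
  | nil => intro n S _ ha; exact subset_itN G n S ha
  | cons hadj q ih =>
    intro n S hlen ha
    cases n with
    | zero => simp [SimpleGraph.Walk.length_cons] at hlen
    | succ n =>
      have hb : _ ∈ nbhd G S := Or.inr ⟨_, ha, hadj⟩
      have hq : q.length ≤ n := by
        simpa [SimpleGraph.Walk.length_cons] using hlen
      have := ih n (nbhd G S) hq hb
      rwa [itN_nbhd] at this

lemma dist_mem_itN {G : SimpleGraph V} (hc : G.Connected) {a v : V} {n : ℕ}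
    (hd : G.dist a v ≤ n) {S : Set V} (ha : a ∈ S) : v ∈ itN G n S := by
  obtain ⟨p, hp⟩ := hc.exists_walk_length_eq_dist a v
  exact walk_mem_itN G p n S (by omega) ha

lemma itN_diff_subset (G : SimpleGraph V) (n : ℕ) (A : Set V) :
    ∀ v, v ∈ itN G n A → v ∉ A → v ∈ itN G n (bdry G A) := by
  induction n with
  | zero => intro v hv hv'; exact absurd hv hv'
  | succ n ih =>
    rintro v (hv | ⟨w, hw, hadj⟩) hv'
    · exact subset_nbhd G _ (ih v hv hv')
    · by_cases hwA : w ∈ A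
      · exact subset_itN G (n + 1) _ ⟨hv', w, hwA, hadj⟩
      · exact Or.inr ⟨w, ih w hw hwA, hadj⟩

lemma bdry_subset_nbhd (G : SimpleGraph V) (S : Set V) : bdry G S ⊆ nbhd G S := by
  rintro v ⟨_, a, ha, hadj⟩
  exact Or.inr ⟨a, ha, hadj⟩

section card

variable {G : SimpleGraph V} {D : ℕ}
  (hD : ∀ v : V, (G.neighborSet v).Finite ∧ (G.neighborSet v).ncard ≤ D)

include hD

lemma nbhd_card {S : Set V} (hS : S.Finite) :
    (nbhd G S).Finite ∧ (nbhd G S).ncard ≤ (D + 1) * S.ncard := by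
  refine Set.Finite.induction_on
    (motive := fun S _ => (nbhd G S).Finite ∧ (nbhd G S).ncard ≤ (D + 1) * S.ncard) S hS ?_ ?_
  · have : nbhd G (∅ : Set V) = ∅ := by
      apply Set.eq_empty_iff_forall_notMem.mpr
      rintro v (hv | ⟨s, hs, _⟩) <;> simp_all
    simp [this]
  · intro a S haS hSfin ih
    have hins : nbhd G (insert a S) = (insert a (G.neighborSet a)) ∪ nbhd G S := by
      ext v
      constructor
      · rintro (hv | ⟨s, hs, hadj⟩)
        · rcases hv with rfl | hv
          · exact Or.inl (Set.mem_insert _ _)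
          · exact Or.inr (Or.inl hv)
        · rcases hs with rfl | hs
          · exact Or.inl (Set.mem_insert_of_mem _ hadj)
          · exact Or.inr (Or.inr ⟨s, hs, hadj⟩)
      · rintro (hv | hv)
        · rcases hv with rfl | hv
          · exact Or.inl (Set.mem_insert _ _)
          · exact Or.inr ⟨a, Set.mem_insert _ _, hv⟩
        · rcases hv with hv | ⟨s, hs, hadj⟩
          · exact Or.inl (Set.mem_insert_of_mem _ hv)
          · exact Or.inr ⟨s, Set.mem_insert_of_mem _ hs, hadj⟩
    have hfin1 : (insert a (G.neighborSet a)).Finite := (hD a).1.insert a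
    have hfin : (nbhd G (insert a S)).Finite := by
      rw [hins]; exact hfin1.union ih.1
    refine ⟨hfin, ?_⟩
    have h1 : (insert a (G.neighborSet a)).ncard ≤ D + 1 := by
      have := Set.ncard_insert_le a (G.neighborSet a)
      have := (hD a).2
      omega
    have h2 : (nbhd G (insert a S)).ncard ≤ (insert a (G.neighborSet a)).ncard
        + (nbhd G S).ncard := by
      rw [hins]; exact Set.ncard_union_le _ _
    have h3 : (insert a S).ncard = S.ncard + 1 := Set.ncard_insert_of_notMem haS hSfin
    have h4 := ih.2
    rw [h3, Nat.mul_add, Nat.mul_one]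
    omega

lemma itN_card (n : ℕ) {S : Set V} (hS : S.Finite) :
    (itN G n S).Finite ∧ (itN G n S).ncard ≤ (D + 1) ^ n * S.ncard := by
  induction n with
  | zero => simpa using ⟨hS, le_rfl⟩
  | succ n ih =>
    obtain ⟨hfin, hcard⟩ := ih
    obtain ⟨hfin', hcard'⟩ := nbhd_card hD hfin
    refine ⟨hfin', hcard'.trans ?_⟩
    calc (D + 1) * (itN G n S).ncard ≤ (D + 1) * ((D + 1) ^ n * S.ncard) :=
          Nat.mul_le_mul_left _ hcard
      _ = (D + 1) ^ (n + 1) * S.ncard := by ring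

lemma bdry_finite {S : Set V} (hS : S.Finite) : (bdry G S).Finite :=
  ((nbhd_card hD hS).1).subset (bdry_subset_nbhd G S)

end card

lemma qkto_set {H : SimpleGraph W} {f : V → W} {κ C : ℝ}
    (hprop : ∀ A : Finset W, (f ⁻¹' (A : Set W)).Finite)
    (hC : ∀ A : Finset W,
      |κ * (A.card : ℝ) - ((f ⁻¹' (A : Set W)).ncard : ℝ)| ≤
        C * ((bdry H (A : Set W)).ncard : ℝ))
    {S : Set W} (hS : S.Finite) :
    (f ⁻¹' S).Finite ∧
      |κ * (S.ncard : ℝ) - ((f ⁻¹' S).ncard : ℝ)| ≤ C * ((bdry H S).ncard : ℝ) := by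
  have h1 : (hS.toFinset : Set W) = S := hS.coe_toFinset
  have h2 : hS.toFinset.card = S.ncard := (Set.ncard_eq_toFinset_card S hS).symm
  refine ⟨?_, ?_⟩
  · have := hprop hS.toFinset; rwa [h1] at this
  · have := hC hS.toFinset; rwa [h1, h2] at this

lemma preimage_card_le {H : SimpleGraph W} {f : V → W} {κ C : ℝ} {D : ℕ}
    (hD : ∀ v : W, (H.neighborSet v).Finite ∧ (H.neighborSet v).ncard ≤ D)
    (hCpos : 0 < C)
    (hprop : ∀ A : Finset W, (f ⁻¹' (A : Set W)).Finite)
    (hC : ∀ A : Finset W,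
      |κ * (A.card : ℝ) - ((f ⁻¹' (A : Set W)).ncard : ℝ)| ≤
        C * ((bdry H (A : Set W)).ncard : ℝ))
    {S : Set W} (hS : S.Finite) :
    ((f ⁻¹' S).ncard : ℝ) ≤ (κ + C * ((D : ℝ) + 1)) * (S.ncard : ℝ) := by
  obtain ⟨hfin, habs⟩ := qkto_set hprop hC hS
  have hb : (bdry H S).ncard ≤ (D + 1) * S.ncard :=
    le_trans (Set.ncard_le_ncard (bdry_subset_nbhd H S) (nbhd_card hD hS).1)
      (nbhd_card hD hS).2
  have hb' : ((bdry H S).ncard : ℝ) ≤ ((D : ℝ) + 1) * (S.ncard : ℝ) := by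
    exact_mod_cast hb
  have h1 := (abs_le.mp habs).1
  nlinarith [(Nat.cast_nonneg (S.ncard) : (0:ℝ) ≤ S.ncard), (Nat.cast_nonneg ((bdry H S).ncard) : (0:ℝ) ≤ ((bdry H S).ncard : ℝ))]

lemma stab {VX VY : Type*} {GY : SimpleGraph VY} (hYc : GY.Connected)
    {D : ℕ} (hD : ∀ v : VY, (GY.neighborSet v).Finite ∧ (GY.neighborSet v).ncard ≤ D)
    {κ : ℝ} (hκ : 0 < κ) {f h : VX → VY} {R : ℕ}
    (hfh : ∀ x, GY.dist (f x) (h x) ≤ R)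
    (hf : QKTO GY f κ) : QKTO GY h κ := by
  obtain ⟨hfp, C1, hC1pos, hC1⟩ := hf
  set Ep : ℝ := ((D : ℝ) + 1) ^ (R + 1) with hEp
  set Cfin : ℝ := (κ + C1) * Ep + 1 with hCfin
  have key : ∀ S : Set VY, S.Finite →
      (h ⁻¹' S).Finite ∧
      |κ * (S.ncard : ℝ) - ((h ⁻¹' S).ncard : ℝ)| ≤ Cfin * ((bdry GY S).ncard : ℝ) := by
    intro S hS
    set b : ℕ := (bdry GY S).ncard with hbdef
    have hbfin : (bdry GY S).Finite := bdry_finite hD hS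
    set NS : Set VY := itN GY R S with hNSdef
    have hNSfin : NS.Finite := (itN_card hD R hS).1
    have hSN : S ⊆ NS := subset_itN GY R S
    have hsub1 : h ⁻¹' S ⊆ f ⁻¹' NS := by
      intro x hx
      exact dist_mem_itN hYc (by rw [GY.dist_comm]; exact hfh x) hx
    have hitfin : ∀ n : ℕ, (itN GY n (bdry GY S)).Finite := fun n => (itN_card hD n hbfin).1
    have hEcast : (((D + 1) ^ (R + 1) * b : ℕ) : ℝ) = Ep * (b : ℝ) := by
      push_cast [hEp]; ring
    have hitcard : ∀ T : Set VY, T ⊆ itN GY (R + 1) (bdry GY S) →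
        (T.ncard : ℝ) ≤ Ep * (b : ℝ) := by
      intro T hT
      have h1 : T.ncard ≤ (D + 1) ^ (R + 1) * b :=
        (Set.ncard_le_ncard hT (hitfin (R + 1))).trans (itN_card hD (R + 1) hbfin).2
      calc (T.ncard : ℝ) ≤ (((D + 1) ^ (R + 1) * b : ℕ) : ℝ) := by exact_mod_cast h1
        _ = Ep * (b : ℝ) := hEcast
    have hNcard : (NS.ncard : ℝ) ≤ (S.ncard : ℝ) + Ep * (b : ℝ) := by
      have hsplit : NS ⊆ S ∪ itN GY (R + 1) (bdry GY S) := by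
        intro v hv
        by_cases hvS : v ∈ S
        · exact Or.inl hvS
        · exact Or.inr (itN_le GY (Nat.le_succ R) _ (itN_diff_subset GY R S v hv hvS))
      have h1 : NS.ncard ≤ S.ncard + (itN GY (R + 1) (bdry GY S)).ncard :=
        (Set.ncard_le_ncard hsplit (hS.union (hitfin (R + 1)))).trans
          (Set.ncard_union_le _ _)
      have h2 := hitcard _ (subset_rfl)
      have h1' : (NS.ncard : ℝ) ≤ (S.ncard : ℝ) + ((itN GY (R + 1) (bdry GY S)).ncard : ℝ) := by
        exact_mod_cast h1
      linarith
    have hbN : ((bdry GY NS).ncard : ℝ) ≤ Ep * (b : ℝ) := by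
      refine hitcard _ ?_
      rintro v ⟨hvN, a, haN, hadj⟩
      have hv1 : v ∈ itN GY (R + 1) S := Or.inr ⟨a, haN, hadj⟩
      exact itN_diff_subset GY (R + 1) S v hv1 (fun hvS => hvN (hSN hvS))
    have hqN := qkto_set hfp hC1 hNSfin
    have hhfin : (h ⁻¹' S).Finite := hqN.1.subset hsub1
    set B : Set VY := S \ itN GY R (Sᶜ) with hBdef
    have hBS : B ⊆ S := Set.diff_subset
    have hBfin : B.Finite := hS.subset hBS
    have hsub2 : f ⁻¹' B ⊆ h ⁻¹' S := by
      intro x hx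
      have hx' : f x ∈ S \ itN GY R (Sᶜ) := hx
      obtain ⟨hfx, hfx'⟩ := hx'
      by_contra hhx
      exact hfx' (dist_mem_itN hYc (by rw [GY.dist_comm]; exact hfh x) hhx)
    have hdiff : S \ B ⊆ itN GY (R + 1) (bdry GY S) := by
      intro v hv
      obtain ⟨hvS, hvB⟩ := hv
      have hvit : v ∈ itN GY R (Sᶜ) := by
        by_contra hcon
        exact hvB ⟨hvS, hcon⟩
      have h1 : v ∈ itN GY R (bdry GY (Sᶜ)) :=
        itN_diff_subset GY R (Sᶜ) v hvit (by simpa using hvS)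
      have h2 : bdry GY (Sᶜ) ⊆ nbhd GY (bdry GY S) := by
        rintro w ⟨hwc, a, hac, hadj⟩
        have hwS : w ∈ S := by simpa using hwc
        exact Or.inr ⟨a, ⟨hac, w, hwS, hadj.symm⟩, hadj⟩
      have h3 := itN_mono GY R h2 h1
      rwa [itN_nbhd] at h3
    have hScard : (S.ncard : ℝ) ≤ (B.ncard : ℝ) + Ep * (b : ℝ) := by
      have h1 : S.ncard ≤ B.ncard + (S \ B).ncard := by
        have := Set.ncard_diff_add_ncard_of_subset hBS hS
        omega
      have h2 := hitcard _ hdiff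
      have h1' : (S.ncard : ℝ) ≤ (B.ncard : ℝ) + ((S \ B).ncard : ℝ) := by exact_mod_cast h1
      linarith
    have hbB : ((bdry GY B).ncard : ℝ) ≤ Ep * (b : ℝ) := by
      refine hitcard _ ?_
      rintro v ⟨hvB, a, haB, hadj⟩
      by_cases hvS : v ∈ S
      · exact hdiff ⟨hvS, hvB⟩
      · exact subset_itN GY (R + 1) _ ⟨hvS, a, hBS haB, hadj⟩
    have hqB := qkto_set hfp hC1 hBfin
    refine ⟨hhfin, ?_⟩
    have m1 : ((h ⁻¹' S).ncard : ℝ) ≤ ((f ⁻¹' NS).ncard : ℝ) := by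
      exact_mod_cast Set.ncard_le_ncard hsub1 hqN.1
    have m2 : ((f ⁻¹' B).ncard : ℝ) ≤ ((h ⁻¹' S).ncard : ℝ) := by
      exact_mod_cast Set.ncard_le_ncard hsub2 hhfin
    have hbpos : (0 : ℝ) ≤ (b : ℝ) := Nat.cast_nonneg b
    have hupper := (abs_le.mp hqN.2).1
    have hlower := (abs_le.mp hqB.2).2
    have p1 : κ * (NS.ncard : ℝ) ≤ κ * ((S.ncard : ℝ) + Ep * (b : ℝ)) :=
      mul_le_mul_of_nonneg_left hNcard hκ.le
    have p2 : C1 * ((bdry GY NS).ncard : ℝ) ≤ C1 * (Ep * (b : ℝ)) :=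
      mul_le_mul_of_nonneg_left hbN hC1pos.le
    have p3 : κ * (S.ncard : ℝ) ≤ κ * ((B.ncard : ℝ) + Ep * (b : ℝ)) :=
      mul_le_mul_of_nonneg_left hScard hκ.le
    have p4 : C1 * ((bdry GY B).ncard : ℝ) ≤ C1 * (Ep * (b : ℝ)) :=
      mul_le_mul_of_nonneg_left hbB hC1pos.le
    rw [abs_le]
    constructor
    · simp only [hCfin]
      linarith
    · simp only [hCfin]
      linarith
  have hCpos : 0 < Cfin := by
    have h1 : 0 ≤ (κ + C1) * Ep := by positivity
    linarith
  refine ⟨fun A => (key _ A.finite_toSet).1, Cfin, hCpos, fun A => ?_⟩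
  rw [← Set.ncard_coe_finset]
  exact (key _ A.finite_toSet).2

lemma comp {VX VY VZ : Type*} {GY : SimpleGraph VY} {GZ : SimpleGraph VZ}
    (hZc : GZ.Connected)
    {DZ : ℕ} (hDZ : ∀ v : VZ, (GZ.neighborSet v).Finite ∧ (GZ.neighborSet v).ncard ≤ DZ)
    {κ1 κ2 : ℝ} (hκ1 : 0 < κ1) (hκ2 : 0 < κ2)
    {f : VX → VY} {g : VY → VZ} {s : ℕ}
    (hgl : ∀ y y' : VY, GY.Adj y' y → GZ.dist (g y') (g y) ≤ s)
    (hf : QKTO GY f κ1) (hg : QKTO GZ g κ2) :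
    QKTO GZ (g ∘ f) (κ1 * κ2) := by
  obtain ⟨hfp, C1, hC1pos, hC1⟩ := hf
  obtain ⟨hgp, C2, hC2pos, hC2⟩ := hg
  set Mg : ℝ := κ2 + C2 * ((DZ : ℝ) + 1) with hMgdef
  have hMgpos : 0 < Mg := add_pos hκ2 (mul_pos hC2pos (by positivity))
  set Ep : ℝ := ((DZ : ℝ) + 1) ^ s with hEpdef
  have hEppos : 0 < Ep := by positivity
  set Cfin : ℝ := κ1 * C2 + C1 * (Mg * Ep) + 1 with hCfindef
  have key : ∀ S : Set VZ, S.Finite →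
      ((g ∘ f) ⁻¹' S).Finite ∧
      |κ1 * κ2 * (S.ncard : ℝ) - (((g ∘ f) ⁻¹' S).ncard : ℝ)| ≤
        Cfin * ((bdry GZ S).ncard : ℝ) := by
    intro S hS
    set b : ℕ := (bdry GZ S).ncard with hbdef
    have hbfin : (bdry GZ S).Finite := bdry_finite hDZ hS
    set B : Set VY := g ⁻¹' S with hBdef
    have hgS := qkto_set hgp hC2 hS
    have hBfin : B.Finite := hgS.1
    have hfB := qkto_set hfp hC1 hBfin
    have hcomp : (g ∘ f) ⁻¹' S = f ⁻¹' B := Set.preimage_comp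
    -- boundary of B bound
    have hitfin : (itN GZ s (bdry GZ S)).Finite := (itN_card hDZ s hbfin).1
    have hsubB : bdry GY B ⊆ g ⁻¹' (itN GZ s (bdry GZ S)) := by
      rintro y ⟨hyB, y', hy'B, hadj⟩
      have h1 : g y ∈ itN GZ s S := dist_mem_itN hZc (hgl y y' hadj) hy'B
      exact itN_diff_subset GZ s S (g y) h1 hyB
    have hpre := preimage_card_le hDZ hC2pos hgp hC2 hitfin
    have hitc : ((itN GZ s (bdry GZ S)).ncard : ℝ) ≤ Ep * (b : ℝ) := by
      have h1 : (itN GZ s (bdry GZ S)).ncard ≤ (DZ + 1) ^ s * b := (itN_card hDZ s hbfin).2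
      calc ((itN GZ s (bdry GZ S)).ncard : ℝ) ≤ (((DZ + 1) ^ s * b : ℕ) : ℝ) := by
            exact_mod_cast h1
        _ = Ep * (b : ℝ) := by push_cast [hEpdef]; ring
    have hbB : ((bdry GY B).ncard : ℝ) ≤ Mg * (Ep * (b : ℝ)) := by
      have hfin' : (g ⁻¹' (itN GZ s (bdry GZ S))).Finite :=
        (qkto_set hgp hC2 hitfin).1
      have h1 : ((bdry GY B).ncard : ℝ) ≤ ((g ⁻¹' (itN GZ s (bdry GZ S))).ncard : ℝ) := by
        exact_mod_cast Set.ncard_le_ncard hsubB hfin'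
      have h2 : ((g ⁻¹' (itN GZ s (bdry GZ S))).ncard : ℝ) ≤ Mg * ((itN GZ s (bdry GZ S)).ncard : ℝ) := hpre
      have h3 : Mg * ((itN GZ s (bdry GZ S)).ncard : ℝ) ≤ Mg * (Ep * (b : ℝ)) :=
        mul_le_mul_of_nonneg_left hitc hMgpos.le
      linarith
    refine ⟨by rw [hcomp]; exact hfB.1, ?_⟩
    rw [hcomp]
    have habs1 := hgS.2
    have habs2 := hfB.2
    have hbpos : (0 : ℝ) ≤ (b : ℝ) := Nat.cast_nonneg b
    have htri : |κ1 * κ2 * (S.ncard : ℝ) - ((f ⁻¹' B).ncard : ℝ)| ≤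
        |κ1 * κ2 * (S.ncard : ℝ) - κ1 * (B.ncard : ℝ)| +
        |κ1 * (B.ncard : ℝ) - ((f ⁻¹' B).ncard : ℝ)| := abs_sub_le _ _ _
    have heq1 : |κ1 * κ2 * (S.ncard : ℝ) - κ1 * (B.ncard : ℝ)| =
        κ1 * |κ2 * (S.ncard : ℝ) - (B.ncard : ℝ)| := by
      rw [show κ1 * κ2 * ((S.ncard : ℕ) : ℝ) - κ1 * ((B.ncard : ℕ) : ℝ) =
        κ1 * (κ2 * ((S.ncard : ℕ) : ℝ) - ((B.ncard : ℕ) : ℝ)) by ring, abs_mul,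
        abs_of_pos hκ1]
    have q1 : κ1 * |κ2 * (S.ncard : ℝ) - (B.ncard : ℝ)| ≤ κ1 * (C2 * (b : ℝ)) :=
      mul_le_mul_of_nonneg_left habs1 hκ1.le
    have q2 : C1 * ((bdry GY B).ncard : ℝ) ≤ C1 * (Mg * (Ep * (b : ℝ))) :=
      mul_le_mul_of_nonneg_left hbB hC1pos.le
    simp only [hCfindef]
    linarith
  have hCpos : 0 < Cfin := by
    have h1 : 0 ≤ κ1 * C2 := by positivity
    have h2 : 0 ≤ C1 * (Mg * Ep) := by positivity
    linarith
  refine ⟨fun A => (key _ A.finite_toSet).1, Cfin, hCpos, fun A => ?_⟩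
  rw [← Set.ncard_coe_finset]
  exact (key _ A.finite_toSet).2

lemma inv {VX VY : Type*} {GX : SimpleGraph VX} {GY : SimpleGraph VY}
    (hXc : GX.Connected) (hYc : GY.Connected)
    {DX DY : ℕ}
    (hDX : ∀ v : VX, (GX.neighborSet v).Finite ∧ (GX.neighborSet v).ncard ≤ DX)
    (hDY : ∀ v : VY, (GY.neighborSet v).Finite ∧ (GY.neighborSet v).ncard ≤ DY)
    {κ1 : ℝ} (hκ1 : 0 < κ1) {f : VX → VY} {fb : VY → VX}
    {R' s' : ℕ}
    (hR' : ∀ y, GY.dist (f (fb y)) y ≤ R')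
    (hs' : ∀ y y' : VY, GY.Adj y' y → GX.dist (fb y') (fb y) ≤ s')
    (hfbf : QKTO GX (fb ∘ f) 1)
    (hf : QKTO GY f κ1) : QKTO GX fb (1 / κ1) := by
  obtain ⟨hfp, C1, hC1pos, hC1⟩ := hf
  obtain ⟨hfbfp, C', hC'pos, hC'⟩ := hfbf
  set M : ℝ := ((DY : ℝ) + 1) ^ R' with hMdef
  have hMpos : 0 < M := by positivity
  set Ep : ℝ := ((DX : ℝ) + 1) ^ s' with hEpdef
  have hEppos : 0 < Ep := by positivity
  set Cfin : ℝ := (1 / κ1) * (C1 * (M * Ep) + C') + 1 with hCfindef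
  have hfib : ∀ T : Set VX, fb ⁻¹' T ⊆ itN GY R' (f '' T) := by
    intro T y hy
    exact dist_mem_itN hYc (hR' y) (Set.mem_image_of_mem f hy)
  have hprefin : ∀ T : Set VX, T.Finite →
      (fb ⁻¹' T).Finite ∧ ((fb ⁻¹' T).ncard : ℝ) ≤ M * (T.ncard : ℝ) := by
    intro T hT
    have him : (f '' T).Finite := hT.image f
    have h1 := itN_card hDY R' him
    have hfin : (fb ⁻¹' T).Finite := h1.1.subset (hfib T)
    refine ⟨hfin, ?_⟩
    have h2 : (fb ⁻¹' T).ncard ≤ (DY + 1) ^ R' * (f '' T).ncard :=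
      (Set.ncard_le_ncard (hfib T) h1.1).trans h1.2
    have h3 : (f '' T).ncard ≤ T.ncard := Set.ncard_image_le hT
    have h4 : (fb ⁻¹' T).ncard ≤ (DY + 1) ^ R' * T.ncard :=
      h2.trans (Nat.mul_le_mul_left _ h3)
    calc ((fb ⁻¹' T).ncard : ℝ) ≤ (((DY + 1) ^ R' * T.ncard : ℕ) : ℝ) := by exact_mod_cast h4
      _ = M * (T.ncard : ℝ) := by push_cast [hMdef]; ring
  have key : ∀ S : Set VX, S.Finite →
      (fb ⁻¹' S).Finite ∧
      |(1 / κ1) * (S.ncard : ℝ) - ((fb ⁻¹' S).ncard : ℝ)| ≤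
        Cfin * ((bdry GX S).ncard : ℝ) := by
    intro S hS
    set b : ℕ := (bdry GX S).ncard with hbdef
    have hbfin : (bdry GX S).Finite := bdry_finite hDX hS
    set B : Set VY := fb ⁻¹' S with hBdef
    have hBfin : B.Finite := (hprefin S hS).1
    have hfB := qkto_set hfp hC1 hBfin
    have hitfin : (itN GX s' (bdry GX S)).Finite := (itN_card hDX s' hbfin).1
    have hsubB : bdry GY B ⊆ fb ⁻¹' (itN GX s' (bdry GX S)) := by
      rintro y ⟨hyB, y', hy'B, hadj⟩
      have h1 : fb y ∈ itN GX s' S := dist_mem_itN hXc (hs' y y' hadj) hy'B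
      exact itN_diff_subset GX s' S (fb y) h1 hyB
    have hitc : ((itN GX s' (bdry GX S)).ncard : ℝ) ≤ Ep * (b : ℝ) := by
      have h1 : (itN GX s' (bdry GX S)).ncard ≤ (DX + 1) ^ s' * b := (itN_card hDX s' hbfin).2
      calc ((itN GX s' (bdry GX S)).ncard : ℝ) ≤ (((DX + 1) ^ s' * b : ℕ) : ℝ) := by
            exact_mod_cast h1
        _ = Ep * (b : ℝ) := by push_cast [hEpdef]; ring
    have hbB : ((bdry GY B).ncard : ℝ) ≤ M * (Ep * (b : ℝ)) := by
      have h1 : ((bdry GY B).ncard : ℝ) ≤ ((fb ⁻¹' (itN GX s' (bdry GX S))).ncard : ℝ) := by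
        exact_mod_cast Set.ncard_le_ncard hsubB (hprefin _ hitfin).1
      have h2 := (hprefin _ hitfin).2
      have h3 : M * ((itN GX s' (bdry GX S)).ncard : ℝ) ≤ M * (Ep * (b : ℝ)) :=
        mul_le_mul_of_nonneg_left hitc hMpos.le
      linarith
    -- f ⁻¹' B = (fb ∘ f) ⁻¹' S
    have hcomp : f ⁻¹' B = (fb ∘ f) ⁻¹' S := Set.preimage_comp.symm
    have hff := qkto_set hfbfp hC' hS
    have habs2 : |1 * (S.ncard : ℝ) - ((f ⁻¹' B).ncard : ℝ)| ≤ C' * (b : ℝ) := by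
      rw [hcomp]; exact hff.2
    have habs1 := hfB.2
    have hbpos : (0 : ℝ) ≤ (b : ℝ) := Nat.cast_nonneg b
    refine ⟨hBfin, ?_⟩
    have q2 : C1 * ((bdry GY B).ncard : ℝ) ≤ C1 * (M * (Ep * (b : ℝ))) :=
      mul_le_mul_of_nonneg_left hbB hC1pos.le
    have hstep : |κ1 * (B.ncard : ℝ) - (S.ncard : ℝ)| ≤
        (C1 * (M * Ep) + C') * (b : ℝ) := by
      have htri : |κ1 * (B.ncard : ℝ) - (S.ncard : ℝ)| ≤
          |κ1 * (B.ncard : ℝ) - ((f ⁻¹' B).ncard : ℝ)| +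
          |((f ⁻¹' B).ncard : ℝ) - (S.ncard : ℝ)| := abs_sub_le _ _ _
      have h5 : |((f ⁻¹' B).ncard : ℝ) - (S.ncard : ℝ)| ≤ C' * (b : ℝ) := by
        rw [abs_sub_comm]
        simpa using habs2
      have h6 := habs1
      linarith [abs_sub_comm (κ1 * (B.ncard : ℝ)) ((f ⁻¹' B).ncard : ℝ) ▸ h6]
    have heq : (1 / κ1) * (S.ncard : ℝ) - (B.ncard : ℝ) =
        (1 / κ1) * -(κ1 * (B.ncard : ℝ) - (S.ncard : ℝ)) := by
      field_simp
      ring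
    rw [heq, abs_mul, abs_neg, abs_of_pos (by positivity : (0:ℝ) < 1 / κ1)]
    have q3 : (1 / κ1) * |κ1 * (B.ncard : ℝ) - (S.ncard : ℝ)| ≤
        (1 / κ1) * ((C1 * (M * Ep) + C') * (b : ℝ)) :=
      mul_le_mul_of_nonneg_left hstep (by positivity)
    simp only [hCfindef]
    linarith
  have hCpos : 0 < Cfin := by
    have h1 : 0 ≤ (1 / κ1) * (C1 * (M * Ep) + C') := by positivity
    rw [hCfindef]
    linarith
  refine ⟨fun A => (key _ A.finite_toSet).1, Cfin, hCpos, fun A => ?_⟩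
  rw [← Set.ncard_coe_finset]
  exact (key _ A.finite_toSet).2

end QktoAux

open QktoAux

/-- Behaviour of quasi-`κ`-to-one quasi-isometries between connected bounded-degree
graphs: (i) stability under bounded distance; (ii) composition multiplies the scaling
factors; (iii) a quasi-inverse of a quasi-`κ₁`-to-one quasi-isometry is
quasi-`(1/κ₁)`-to-one. -/
theorem stmt5 {VX VY VZ : Type*}
    (GX : SimpleGraph VX) (GY : SimpleGraph VY) (GZ : SimpleGraph VZ)
    (hXc : GX.Connected) (hYc : GY.Connected) (hZc : GZ.Connected)
    (hXd : BddDeg GX) (hYd : BddDeg GY) (hZd : BddDeg GZ)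
    (κ1 κ2 : ℝ) (hκ1 : 0 < κ1) (hκ2 : 0 < κ2)
    (f h : VX → VY) (g : VY → VZ)
    (hf : IsQI GX GY f) (hh : IsQI GX GY h) (hg : IsQI GY GZ g) :
    ((∃ C : ℝ, ∀ x : VX, (GY.dist (f x) (h x) : ℝ) ≤ C) →
        QKTO GY f κ1 → QKTO GY h κ1) ∧
    (QKTO GY f κ1 → QKTO GZ g κ2 → QKTO GZ (g ∘ f) (κ1 * κ2)) ∧
    (∀ fb : VY → VX, IsQI GY GX fb →
      (∃ C : ℝ, ∀ x : VX, (GX.dist (fb (f x)) x : ℝ) ≤ C) →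
      (∃ C : ℝ, ∀ y : VY, (GY.dist (f (fb y)) y : ℝ) ≤ C) →
      QKTO GY f κ1 → QKTO GX fb (1 / κ1)) := by
  obtain ⟨DX, hDX⟩ := hXd
  obtain ⟨DY, hDY⟩ := hYd
  obtain ⟨DZ, hDZ⟩ := hZd
  refine ⟨?_, ?_, ?_⟩
  · rintro ⟨R, hR⟩ hfq
    refine stab hYc hDY hκ1 (f := f) (R := ⌈R⌉₊) (fun x => ?_) hfq
    have h1 : ((GY.dist (f x) (h x) : ℕ) : ℝ) ≤ (⌈R⌉₊ : ℝ) := (hR x).trans (Nat.le_ceil R)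
    exact_mod_cast h1
  · intro hfq hgq
    obtain ⟨Ag, Bg, hAg, hBg, hgb, -⟩ := hg
    refine comp hZc hDZ hκ1 hκ2 (s := ⌈Ag + Bg⌉₊) (fun y y' hadj => ?_) hfq hgq
    have hd1 : GY.dist y' y = 1 := SimpleGraph.dist_eq_one_iff_adj.mpr hadj
    have h2 := (hgb y' y).2
    rw [hd1] at h2
    have h3 : ((GZ.dist (g y') (g y) : ℕ) : ℝ) ≤ (⌈Ag + Bg⌉₊ : ℝ) := by
      have h4 := Nat.le_ceil (Ag + Bg)
      push_cast at h2 ⊢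
      linarith
    exact_mod_cast h3
  · rintro fb hfbQI ⟨Rb, hRb⟩ ⟨Rf, hRf⟩ hfq
    have hid : QKTO GX (id : VX → VX) 1 := by
      refine ⟨fun A => by simpa using A.finite_toSet, 1, one_pos, fun A => ?_⟩
      have hpre : ((id : VX → VX) ⁻¹' (A : Set VX)) = (A : Set VX) := Set.preimage_id
      rw [hpre, Set.ncard_coe_finset, one_mul, sub_self, abs_zero, one_mul]
      positivity
    have hfbf : QKTO GX (fb ∘ f) 1 := by
      refine stab hXc hDX one_pos (f := (id : VX → VX)) (R := ⌈Rb⌉₊) (fun x => ?_) hid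
      have h2 : GX.dist (id x) ((fb ∘ f) x) = GX.dist (fb (f x)) x := GX.dist_comm
      rw [h2]
      have h1 : ((GX.dist (fb (f x)) x : ℕ) : ℝ) ≤ (⌈Rb⌉₊ : ℝ) := (hRb x).trans (Nat.le_ceil Rb)
      exact_mod_cast h1
    obtain ⟨Ab, Bb, hAb, hBb, hfbb, -⟩ := hfbQI
    refine inv hXc hYc hDX hDY hκ1 (R' := ⌈Rf⌉₊) (s' := ⌈Ab + Bb⌉₊)
      (fun y => ?_) (fun y y' hadj => ?_) hfbf hfq
    · have h1 : ((GY.dist (f (fb y)) y : ℕ) : ℝ) ≤ (⌈Rf⌉₊ : ℝ) := (hRf y).trans (Nat.le_ceil Rf)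
      exact_mod_cast h1
    · have hd1 : GY.dist y' y = 1 := SimpleGraph.dist_eq_one_iff_adj.mpr hadj
      have h2 := (hfbb y' y).2
      rw [hd1] at h2
      have h3 : ((GX.dist (fb y') (fb y) : ℕ) : ℝ) ≤ (⌈Ab + Bb⌉₊ : ℝ) := by
        have h4 := Nat.le_ceil (Ab + Bb)
        push_cast at h2 ⊢
        linarith
      exact_mod_cast h3
end

section
/- Let F and H be groups with F nontrivial. Then H is an almost malnormal subgroup of the wreath product F ≀ H = (⊕_H F) ⋊ H: for every g ∈ F ≀ H not in H, the intersection gHg^{-1} ∩ H is finite. In particular, if H is infinite, H coincides with its commensurator in F ≀ H. -/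
/-- The direct sum `⊕_H F`, realised as the subgroup of `H → F` of finitely
supported functions. -/
def lampN (F H : Type*) [Group F] [Group H] : Subgroup (H → F) where
  carrier := {f | {h | f h ≠ 1}.Finite}
  one_mem' := Set.Finite.subset Set.finite_empty (by intro h hh; exact (hh rfl).elim)
  mul_mem' := by
    intro a b ha hb
    refine Set.Finite.subset (Set.Finite.union ha hb) ?_
    intro h hh
    by_contra hc
    simp only [Set.mem_union, Set.mem_setOf_eq, not_or, not_not] at hc
    exact hh (by simp [hc.1, hc.2])
  inv_mem' := by
    intro a ha
    refine Set.Finite.subset ha ?_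
    intro h hh
    simp only [Set.mem_setOf_eq, Pi.inv_apply, ne_eq, inv_eq_one] at hh
    exact hh

/-- The shift of a finitely supported function by `a : H`. -/
def shiftAux {F H : Type*} [Group F] [Group H] (a : H) (f : ↥(lampN F H)) :
    ↥(lampN F H) :=
  ⟨fun h => (f : H → F) (a⁻¹ * h), by
    have hf : {h : H | (f : H → F) h ≠ 1}.Finite := f.2
    show {h : H | (f : H → F) (a⁻¹ * h) ≠ 1}.Finite
    have : {h : H | (f : H → F) (a⁻¹ * h) ≠ 1} =
        (fun h : H => a⁻¹ * h) ⁻¹' {h : H | (f : H → F) h ≠ 1} := rfl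
    rw [this]
    exact Set.Finite.preimage ((mul_right_injective a⁻¹).injOn) hf⟩

/-- The shift automorphism of `⊕_H F` given by `a : H`. -/
def lampShift {F H : Type*} [Group F] [Group H] (a : H) :
    ↥(lampN F H) ≃* ↥(lampN F H) where
  toFun := shiftAux a
  invFun := shiftAux a⁻¹
  left_inv := by
    intro f; apply Subtype.ext; funext h
    show (f : H → F) (a⁻¹ * ((a⁻¹)⁻¹ * h)) = (f : H → F) h
    rw [inv_inv, inv_mul_cancel_left]
  right_inv := by
    intro f; apply Subtype.ext; funext h
    show (f : H → F) ((a⁻¹)⁻¹ * (a⁻¹ * h)) = (f : H → F) h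
    rw [inv_inv, mul_inv_cancel_left]
  map_mul' := by
    intro f g; apply Subtype.ext; funext h; rfl

/-- The action of `H` on `⊕_H F` by permuting the coordinates. -/
def lampAct (F H : Type*) [Group F] [Group H] : H →* MulAut ↥(lampN F H) where
  toFun a := lampShift (F := F) a
  map_one' := MulEquiv.ext fun f => Subtype.ext (funext fun h => by
    show (f : H → F) ((1 : H)⁻¹ * h) = (f : H → F) h
    rw [inv_one, one_mul])
  map_mul' a b := MulEquiv.ext fun f => Subtype.ext (funext fun h => by
    show (f : H → F) ((a * b)⁻¹ * h) = (f : H → F) (b⁻¹ * (a⁻¹ * h))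
    rw [mul_inv_rev, mul_assoc])

/-- The (restricted) wreath product `F ≀ H = (⊕_H F) ⋊ H`. -/
abbrev Wr (F H : Type*) [Group F] [Group H] :=
  SemidirectProduct ↥(lampN F H) H (lampAct F H)

/-- The canonical copy of `H` inside the wreath product `F ≀ H`. -/
def Hsub (F H : Type*) [Group F] [Group H] : Subgroup (Wr F H) :=
  (SemidirectProduct.inr : H →* Wr F H).range

open Pointwise

lemma mem_Hsub_iff {F H : Type*} [Group F] [Group H] (x : Wr F H) :
    x ∈ Hsub F H ↔ x.left = 1 := by
  constructor
  · rintro ⟨h, rfl⟩; rfl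
  · intro hx
    exact ⟨x.right, by ext <;> simp [hx]⟩

lemma finite_inter {F H : Type*} [Group F] [Group H] [Nontrivial F]
    (g : Wr F H) (hg : g ∉ Hsub F H) :
    (((fun x => g * x * g⁻¹) '' (Hsub F H : Set (Wr F H))) ∩
      (Hsub F H : Set (Wr F H))).Finite := by
  have hleft : (g.left : H → F) ≠ 1 := by
    intro h
    exact hg ((mem_Hsub_iff g).2 (Subtype.ext h))
  obtain ⟨s₀, hs₀⟩ : ∃ s₀, (g.left : H → F) s₀ ≠ 1 := by
    by_contra hc
    push_neg at hc
    exact hleft (funext hc)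
  have hS : {h : H | (g.left : H → F) h ≠ 1}.Finite := g.left.2
  have hT : ((fun s => s₀ * s⁻¹) '' {h : H | (g.left : H → F) h ≠ 1}).Finite :=
    hS.image _
  apply Set.Finite.of_finite_image (f := SemidirectProduct.right)
  · apply hT.subset
    rintro k ⟨x, ⟨⟨y, ⟨h, rfl⟩, rfl⟩, hx2⟩, rfl⟩
    have hxl : (g * SemidirectProduct.inr h * g⁻¹).left = 1 := (mem_Hsub_iff _).1 hx2
    set k := g.right * h * g.right⁻¹ with hk
    have hfix : (lampAct F H k) g.left = g.left := by
      have : g.left * (lampAct F H k) g.left⁻¹ = 1 := by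
        simpa [SemidirectProduct.mul_left, SemidirectProduct.mul_right,
          SemidirectProduct.inv_left, SemidirectProduct.inv_right, hk, mul_assoc,
          map_mul] using hxl
      have h2 : (lampAct F H k) g.left⁻¹ = g.left⁻¹ := eq_inv_of_mul_eq_one_right this
      have := congrArg (·⁻¹) h2
      simpa [map_inv] using this
    have hmem : (g.left : H → F) (k⁻¹ * s₀) ≠ 1 := by
      have := congrFun (congrArg (Subtype.val) hfix) s₀
      have heval : ((lampAct F H k) g.left : H → F) s₀ = (g.left : H → F) (k⁻¹ * s₀) := rfl
      rw [heval] at this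
      rw [this]; exact hs₀
    refine ⟨k⁻¹ * s₀, hmem, ?_⟩
    have : (g * SemidirectProduct.inr h * g⁻¹).right = k := by
      simp [SemidirectProduct.mul_right, SemidirectProduct.inv_right, hk]
    rw [this]
    group
  · rintro x ⟨-, hx⟩ y ⟨-, hy⟩ hxy
    have hx1 : x.left = 1 := (mem_Hsub_iff _).1 hx
    have hy1 : y.left = 1 := (mem_Hsub_iff _).1 hy
    ext
    · rw [hx1, hy1]
    · exact hxy


/-- `H` is an almost malnormal subgroup of the wreath product `F ≀ H`: for every
`g ∉ H`, the intersection `gHg⁻¹ ∩ H` is finite. In particular, if `H` is infinite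
then `H` coincides with its commensurator in `F ≀ H`. -/
theorem stmt7 (F H : Type*) [Group F] [Group H] [Nontrivial F] :
    (∀ g : Wr F H, g ∉ Hsub F H →
      (((fun x => g * x * g⁻¹) '' (Hsub F H : Set (Wr F H))) ∩
        (Hsub F H : Set (Wr F H))).Finite) ∧
    (Infinite H → Subgroup.Commensurable.commensurator (Hsub F H) = Hsub F H) := by
  constructor
  · exact fun g hg => finite_inter g hg
  · intro hH
    ext g
    rw [Subgroup.Commensurable.commensurator_mem_iff]
    constructor
    · intro hcom
      by_contra hg
      have hfin := finite_inter g hg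
      have hset : ((ConjAct.toConjAct g • Hsub F H : Subgroup (Wr F H)) : Set (Wr F H)) ⊆
          (fun x => g * x * g⁻¹) '' (Hsub F H : Set (Wr F H)) := by
        intro x hx
        rw [SetLike.mem_coe, Subgroup.mem_smul_pointwise_iff_exists] at hx
        obtain ⟨y, hy, rfl⟩ := hx
        exact ⟨y, hy, by rw [ConjAct.smul_def]; rfl⟩
      set L := (ConjAct.toConjAct g • Hsub F H).subgroupOf (Hsub F H) with hL
      have h1 : L.index ≠ 0 := hcom.1
      haveI : Finite L := by
        haveI := hfin.to_subtype
        let e : L → ↥(((fun x => g * x * g⁻¹) '' (Hsub F H : Set (Wr F H))) ∩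
            (Hsub F H : Set (Wr F H))) :=
          fun x => ⟨((x : Hsub F H) : Wr F H),
            hset (Subgroup.mem_subgroupOf.mp x.2), (x : Hsub F H).2⟩
        refine Finite.of_injective e (fun a b hab => ?_)
        simp only [e, Subtype.mk.injEq] at hab
        exact Subtype.ext (Subtype.ext (by have := Subtype.mk.inj hab; exact this))
      have hcard : Nat.card L ≠ 0 := Nat.card_ne_zero.2 ⟨⟨1⟩, inferInstance⟩
      haveI : Infinite (Hsub F H) :=
        Infinite.of_injective (fun h : H => (⟨SemidirectProduct.inr h, h, rfl⟩ : Hsub F H))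
          (fun a b hab => SemidirectProduct.inr_injective
            (congrArg Subtype.val hab))
      have := Subgroup.card_mul_index L
      have h0 : Nat.card (Hsub F H) = 0 := Nat.card_eq_zero_of_infinite
      rw [h0] at this
      rcases Nat.mul_eq_zero.1 this with h | h
      · exact hcard h
      · exact h1 h
    · intro hg
      have : ConjAct.toConjAct g • Hsub F H = Hsub F H := by
        ext x
        rw [Subgroup.mem_pointwise_smul_iff_inv_smul_mem]
        rw [ConjAct.smul_def]
        simp only [map_inv, ConjAct.ofConjAct_inv, ConjAct.ofConjAct_toConjAct, inv_inv]
        constructor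
        · intro h
          have := Subgroup.mul_mem _ (Subgroup.mul_mem _ hg h) (Subgroup.inv_mem _ hg)
          group at this
          simpa using this
        · intro h
          exact Subgroup.mul_mem _ (Subgroup.mul_mem _ (Subgroup.inv_mem _ hg) h) hg
      rw [this]
end

section
/- Let X be a quasi-median graph and C1, C2 two cliques (maximal complete subgraphs). If C1 ∩ C2 ≠ ∅ and the hyperplanes containing C1 and C2 are distinct and transverse, then C1 and C2 span a prism, i.e. the subgraph generated by C1 and C2 is isomorphic to the Cartesian product C1 × C2 as an induced subgraph of X. -/
open SimpleGraph

/-- The triangle condition of quasi-median graphs. -/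
def QMTriangle {V : Type*} (G : SimpleGraph V) : Prop :=
  ∀ a x y : V, G.Adj x y → G.dist a x = G.dist a y →
    ∃ z : V, G.Adj x z ∧ G.Adj y z ∧ G.dist a z + 1 = G.dist a x

/-- The quadrangle condition of quasi-median graphs. -/
def QMQuad {V : Type*} (G : SimpleGraph V) : Prop :=
  ∀ a x y z : V, G.Adj x z → G.Adj y z → x ≠ y → G.dist a x = G.dist a y →
    G.dist a z = G.dist a x + 1 →
    ∃ w : V, G.Adj x w ∧ G.Adj y w ∧ G.dist a w + 2 = G.dist a z

/-- `G` has no induced `K₄⁻` (complete graph on four vertices minus an edge). -/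
def NoK4minus {V : Type*} (G : SimpleGraph V) : Prop :=
  ¬ ∃ a b c d : V, a ≠ b ∧ a ≠ c ∧ a ≠ d ∧ b ≠ c ∧ b ≠ d ∧ c ≠ d ∧
    G.Adj a b ∧ G.Adj a c ∧ G.Adj a d ∧ G.Adj b c ∧ G.Adj b d ∧ ¬ G.Adj c d

/-- `G` has no induced complete bipartite graph `K_{3,2}`. -/
def NoK32 {V : Type*} (G : SimpleGraph V) : Prop :=
  ¬ ∃ x1 x2 x3 y1 y2 : V, x1 ≠ x2 ∧ x1 ≠ x3 ∧ x2 ≠ x3 ∧ y1 ≠ y2 ∧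
    G.Adj x1 y1 ∧ G.Adj x1 y2 ∧ G.Adj x2 y1 ∧ G.Adj x2 y2 ∧ G.Adj x3 y1 ∧ G.Adj x3 y2 ∧
    ¬ G.Adj x1 x2 ∧ ¬ G.Adj x1 x3 ∧ ¬ G.Adj x2 x3 ∧ ¬ G.Adj y1 y2

/-- A quasi-median graph: connected, with no induced `K₄⁻` nor `K_{3,2}`, satisfying
the triangle and quadrangle conditions. -/
def QuasiMedian {V : Type*} (G : SimpleGraph V) : Prop :=
  G.Connected ∧ NoK4minus G ∧ NoK32 G ∧ QMTriangle G ∧ QMQuad G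

/-- One step of the relation generating hyperplanes: two edges of a common
triangle, or two opposite edges of a square. -/
def hypStep {V : Type*} (G : SimpleGraph V) (e e' : Sym2 V) : Prop :=
  (∃ a b c : V, G.Adj a b ∧ G.Adj b c ∧ G.Adj a c ∧
      e ∈ ({s(a, b), s(b, c), s(a, c)} : Set (Sym2 V)) ∧
      e' ∈ ({s(a, b), s(b, c), s(a, c)} : Set (Sym2 V))) ∨
  (∃ a b c d : V, G.Adj a b ∧ G.Adj b c ∧ G.Adj c d ∧ G.Adj d a ∧ a ≠ c ∧ b ≠ d ∧
      e = s(a, b) ∧ e' = s(d, c))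

/-- The hyperplane (equivalence class of edges) of an edge `e`. -/
def hypClass {V : Type*} (G : SimpleGraph V) (e : Sym2 V) : Set (Sym2 V) :=
  {e' | Relation.ReflTransGen (hypStep G) e e'}

/-- `J` is a hyperplane of `G`. -/
def IsHyperplane {V : Type*} (G : SimpleGraph V) (J : Set (Sym2 V)) : Prop :=
  ∃ e ∈ G.edgeSet, J = hypClass G e

/-- The vertices of the carrier of a hyperplane: endpoints of its edges. -/
def hypVerts {V : Type*} (J : Set (Sym2 V)) : Set V := {v | ∃ e ∈ J, v ∈ e}

/-- Two distinct hyperplanes are transverse if the second contains an edge both of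
whose endpoints lie in the carrier of the first. -/
def Transverse {V : Type*} (G : SimpleGraph V) (J1 J2 : Set (Sym2 V)) : Prop :=
  J1 ≠ J2 ∧ ∃ u v : V, G.Adj u v ∧ s(u, v) ∈ J2 ∧ u ∈ hypVerts J1 ∧ v ∈ hypVerts J1

namespace Stmt8Aux

variable {V : Type*} {G : SimpleGraph V}

def MaxCliqueOn (G : SimpleGraph V) (C : Set V) : Prop :=
  G.IsClique C ∧ ∀ D, G.IsClique D → C ⊆ D → D = C

def GateAt (G : SimpleGraph V) (C : Set V) (a g : V) : Prop :=
  g ∈ C ∧ ∀ c ∈ C, c ≠ g → G.dist a c = G.dist a g + 1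

lemma adj_dist_one {x y : V} (h : G.Adj x y) : G.dist x y = 1 :=
  SimpleGraph.dist_eq_one_iff_adj.mpr h

lemma dist_le_adj (hc : G.Connected) {x y : V} (h : G.Adj x y) (a : V) :
    G.dist a y ≤ G.dist a x + 1 := by
  have h2 := hc.dist_triangle (u := a) (v := x) (w := y)
  rwa [adj_dist_one h] at h2

lemma adj_of_dist_one {x y : V} (h : G.dist x y = 1) : G.Adj x y :=
  SimpleGraph.dist_eq_one_iff_adj.mp h

lemma hypStep_symm : Symmetric (hypStep G) := by
  rintro e e' (⟨a,b,c,h1,h2,h3,he,he'⟩ | ⟨a,b,c,d,h1,h2,h3,h4,hac,hbd,he,he'⟩)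
  · exact Or.inl ⟨a,b,c,h1,h2,h3,he',he⟩
  · exact Or.inr ⟨d,c,b,a, h3.symm, h2.symm, h1.symm, h4.symm, hbd.symm, hac.symm, he', he⟩

lemma mem_hypClass_self (e : Sym2 V) : e ∈ hypClass G e := Relation.ReflTransGen.refl

lemma hypClass_subset_of_mem {e e' : Sym2 V} (h : e' ∈ hypClass G e) :
    hypClass G e' ⊆ hypClass G e :=
  fun _ hf => Relation.ReflTransGen.trans h hf

lemma mem_hypClass_symm {e e' : Sym2 V} (h : e' ∈ hypClass G e) : e ∈ hypClass G e' :=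
  by
    haveI : Std.Symm (hypStep G) := ⟨fun _ _ hh => hypStep_symm hh⟩
    exact Relation.ReflTransGen.symmetric.symm _ _ h

lemma hypClass_eq_of_mem {e e' : Sym2 V} (h : e' ∈ hypClass G e) :
    hypClass G e = hypClass G e' :=
  Set.Subset.antisymm (hypClass_subset_of_mem (mem_hypClass_symm h)) (hypClass_subset_of_mem h)

lemma hypClass_tail {e e' f : Sym2 V} (h : e' ∈ hypClass G e) (hs : hypStep G e' f) :
    f ∈ hypClass G e := Relation.ReflTransGen.tail h hs

lemma hypClass_edges {e : Sym2 V} (he : e ∈ G.edgeSet) : hypClass G e ⊆ G.edgeSet := by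
  intro f hf
  induction hf with
  | refl => exact he
  | tail _ h2 ih =>
    rcases h2 with ⟨a,b,c,h1,h2,h3,_,hmem⟩ | ⟨a,b,c,d,_,_,h3,_,_,_,_,he'⟩
    · rcases hmem with h | h | h <;> subst h
      · exact h1
      · exact h2
      · exact h3
    · subst he'; exact h3.symm

lemma hypStep_tri {x y z : V} (h1 : G.Adj x y) (h2 : G.Adj y z) (h3 : G.Adj x z)
    {e e' : Sym2 V}
    (he : e = s(x,y) ∨ e = s(y,z) ∨ e = s(x,z))
    (he' : e' = s(x,y) ∨ e' = s(y,z) ∨ e' = s(x,z)) : hypStep G e e' := by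
  refine Or.inl ⟨x,y,z,h1,h2,h3, ?_, ?_⟩ <;> simp only [Set.mem_insert_iff, Set.mem_singleton_iff] <;> tauto

lemma clique_edge_class (hC : G.IsClique C) {p q a b : V} (hp : p ∈ C) (hq : q ∈ C)
    (ha : a ∈ C) (hb : b ∈ C) (hpq : p ≠ q) (hab : a ≠ b) :
    s(a,b) ∈ hypClass G s(p,q) := by
  by_cases h1 : s(a,b) = s(p,q)
  · rw [h1]; exact mem_hypClass_self _
  have hne : ¬ ((a = p ∧ b = q) ∨ (a = q ∧ b = p)) := by
    rw [Sym2.eq_iff] at h1; exact h1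
  by_cases hap : a = p
  · have hbq : b ≠ q := fun h => hne (Or.inl ⟨hap, h⟩)
    have hbp : b ≠ p := by rw [← hap]; exact hab.symm
    exact Relation.ReflTransGen.single
      (hypStep_tri (hC hp hq hpq) (hC hq hb (Ne.symm hbq)) (hC hp hb (Ne.symm hbp))
        (Or.inl rfl) (by right; right; rw [Sym2.eq_iff]; tauto))
  by_cases haq : a = q
  · have hbp : b ≠ p := fun h => hne (Or.inr ⟨haq, h⟩)
    have hbq : b ≠ q := by rw [← haq]; exact hab.symm
    exact Relation.ReflTransGen.single
      (hypStep_tri (hC hp hq hpq) (hC hq hb (Ne.symm hbq)) (hC hp hb (Ne.symm hbp))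
        (Or.inl rfl) (by right; left; rw [Sym2.eq_iff]; tauto))
  by_cases hbp : b = p
  · exact Relation.ReflTransGen.single
      (hypStep_tri (hC hp hq hpq) (hC hq ha (fun h => haq h.symm)) (hC hp ha (fun h => hap h.symm))
        (Or.inl rfl) (by right; right; rw [Sym2.eq_iff]; tauto))
  by_cases hbq : b = q
  · exact Relation.ReflTransGen.single
      (hypStep_tri (hC hp hq hpq) (hC hq ha (fun h => haq h.symm)) (hC hp ha (fun h => hap h.symm))
        (Or.inl rfl) (by right; left; rw [Sym2.eq_iff]; tauto))
  · refine Relation.ReflTransGen.head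
      (hypStep_tri (hC hp hq hpq) (hC hq ha (fun h => haq h.symm)) (hC hp ha (fun h => hap h.symm))
        (Or.inl rfl) (Or.inr (Or.inr rfl))) ?_
    exact Relation.ReflTransGen.single
      (hypStep_tri (hC hp ha (fun h => hap h.symm)) (hC ha hb hab) (hC hp hb (fun h => hbp h.symm))
        (Or.inl rfl) (Or.inr (Or.inl rfl)))


lemma gate_exists (hc : G.Connected) (hT : QMTriangle G) (hK4 : NoK4minus G)
    {C : Set V} (hC : MaxCliqueOn G C) {c0 : V} (hc0 : c0 ∈ C) (a : V) :
    ∃ g, GateAt G C a g := by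
  classical
  have hSne : ((fun c => G.dist a c) '' C).Nonempty := ⟨_, ⟨c0, hc0, rfl⟩⟩
  obtain ⟨g, hg, hgd⟩ := Nat.sInf_mem hSne
  refine ⟨g, hg, ?_⟩
  intro c hcC hcg
  have hgd' : G.dist a g = sInf ((fun c => G.dist a c) '' C) := hgd
  have hmin : ∀ c' ∈ C, G.dist a g ≤ G.dist a c' := fun c' hc' => by
    rw [hgd']; exact Nat.sInf_le ⟨c', hc', rfl⟩
  have hle : G.dist a c ≤ G.dist a g + 1 := dist_le_adj hc (hC.1 hg hcC (Ne.symm hcg)) a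
  rcases Nat.lt_or_ge (G.dist a c) (G.dist a g + 1) with hlt | hge
  · exfalso
    have heq : G.dist a c = G.dist a g :=
      le_antisymm (Nat.lt_succ_iff.mp hlt) (hmin c hcC)
    obtain ⟨z, hz1, hz2, hz3⟩ := hT a g c (hC.1 hg hcC (Ne.symm hcg)) heq.symm
    have hzC : z ∉ C := fun hzmem => by have := hmin z hzmem; omega
    have hadjall : ∀ c'' ∈ C, z ≠ c'' ∧ G.Adj z c'' := by
      intro c'' hc''
      have hzc : z ≠ c'' := fun h => hzC (h ▸ hc'')
      refine ⟨hzc, ?_⟩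
      by_cases h2 : c'' = g
      · subst h2; exact hz1.symm
      by_cases h3 : c'' = c
      · subst h3; exact hz2.symm
      by_contra hna
      exact hK4 ⟨g, c, c'', z, Ne.symm hcg, fun h => h2 h.symm, hz1.ne, fun h => h3 h.symm,
        hz2.ne, hzc.symm, hC.1 hg hcC (Ne.symm hcg), hC.1 hg hc'' (fun h => h2 h.symm),
        hz1, hC.1 hcC hc'' (fun h => h3 h.symm), hz2, fun h => hna h.symm⟩
    have hclique : G.IsClique (insert z C) := by
      intro x hx y hy hxy
      rcases hx with rfl | hx
      · rcases hy with rfl | hy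
        · exact absurd rfl hxy
        · exact (hadjall y hy).2
      · rcases hy with rfl | hy
        · exact ((hadjall x hx).2).symm
        · exact hC.1 hx hy hxy
    have heqC := hC.2 _ hclique (Set.subset_insert _ _)
    have hzmem : z ∈ C := heqC ▸ Set.mem_insert z C
    have := hmin z hzmem; omega
  · omega

lemma gate_unique {C : Set V} {a g g' : V} (h1 : GateAt G C a g) (h2 : GateAt G C a g') :
    g = g' := by
  by_contra hne
  have e1 := h1.2 g' h2.1 (fun h => hne h.symm)
  have e2 := h2.2 g h1.1 hne
  omega

lemma gate_self {C : Set V} (hC : G.IsClique C) {a : V} (ha : a ∈ C) : GateAt G C a a := by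
  refine ⟨ha, fun c hc hca => ?_⟩
  rw [adj_dist_one (hC ha hc (Ne.symm hca)), SimpleGraph.dist_self]

lemma gate_step (hc : G.Connected) (hT : QMTriangle G) (hK4 : NoK4minus G)
    {C : Set V} (hC : MaxCliqueOn G C) {c0 : V} (hc0 : c0 ∈ C)
    {a g w : V} (hga : GateAt G C a g) (haw : G.Adj w a)
    (hlt : G.dist w g < G.dist a g) : GateAt G C w g := by
  obtain ⟨k, hk⟩ := gate_exists hc hT hK4 hC hc0 w
  by_cases hkg : k = g
  · exact hkg ▸ hk
  · have e1 : G.dist w g = G.dist w k + 1 := hk.2 g hga.1 (Ne.symm hkg)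
    have e2 : G.dist a k = G.dist a g + 1 := hga.2 k hk.1 hkg
    have e3 : G.dist a k ≤ 1 + G.dist w k := by
      have h2 := hc.dist_triangle (u := a) (v := w) (w := k)
      rwa [adj_dist_one haw.symm] at h2
    omega

lemma gate_dist_eq (hc : G.Connected) {C : Set V} {a b ga gb : V}
    (hga : GateAt G C a ga) (hgb : GateAt G C b gb) (hne : ga ≠ gb) (hab : G.Adj a b) :
    G.dist a ga = G.dist b gb := by
  have e1 : G.dist a gb = G.dist a ga + 1 := hga.2 gb hgb.1 (Ne.symm hne)
  have e2 : G.dist b ga = G.dist b gb + 1 := hgb.2 ga hga.1 hne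
  have e3 : G.dist a gb ≤ 1 + G.dist b gb := by
    have h2 := hc.dist_triangle (u := a) (v := b) (w := gb)
    rwa [adj_dist_one hab] at h2
  have e4 : G.dist b ga ≤ 1 + G.dist a ga := by
    have h2 := hc.dist_triangle (u := b) (v := a) (w := ga)
    rwa [adj_dist_one hab.symm] at h2
  omega

lemma lemT (hc : G.Connected) (hQ : QMQuad G) (hK4 : NoK4minus G)
    {C : Set V} {p q r g h' : V}
    (hpq : G.Adj p q) (hpr : G.Adj p r) (hqr : G.Adj q r)
    (hp : GateAt G C p g) (hq : GateAt G C q g) (hr : GateAt G C r h') :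
    h' = g := by
  by_contra hne
  have hgh : g ≠ h' := fun hh => hne hh.symm
  have e1 : G.dist r g = G.dist r h' + 1 := hr.2 g hp.1 hgh
  have e2 : G.dist p h' = G.dist p g + 1 := hp.2 h' hr.1 hne
  have e3 : G.dist q h' = G.dist q g + 1 := hq.2 h' hr.1 hne
  have b1 : G.dist r g ≤ 1 + G.dist p g := by
    have h2 := hc.dist_triangle (u := r) (v := p) (w := g)
    rwa [adj_dist_one hpr.symm] at h2
  have b2 : G.dist p h' ≤ 1 + G.dist r h' := by
    have h2 := hc.dist_triangle (u := p) (v := r) (w := h')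
    rwa [adj_dist_one hpr] at h2
  have b3 : G.dist r g ≤ 1 + G.dist q g := by
    have h2 := hc.dist_triangle (u := r) (v := q) (w := g)
    rwa [adj_dist_one hqr.symm] at h2
  have b4 : G.dist q h' ≤ 1 + G.dist r h' := by
    have h2 := hc.dist_triangle (u := q) (v := r) (w := h')
    rwa [adj_dist_one hqr] at h2
  -- so dist p g = dist q g = dist r h' =: m
  have hmp : G.dist p g = G.dist r h' := by omega
  have hmq : G.dist q g = G.dist r h' := by omega
  have hmpos : 0 < G.dist p g := by
    rcases Nat.eq_zero_or_pos (G.dist p g) with h0 | hpos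
    · exfalso
      have hpg : p = g := (hc.dist_eq_zero_iff).mp h0
      have hqg : q = g := (hc.dist_eq_zero_iff).mp (by omega)
      exact hpq.ne (hpg.trans hqg.symm)
    · exact hpos
  have cgp : G.dist g p = G.dist p g := SimpleGraph.dist_comm
  have cgq : G.dist g q = G.dist q g := SimpleGraph.dist_comm
  have cgr : G.dist g r = G.dist r g := SimpleGraph.dist_comm
  obtain ⟨w, hw1, hw2, hw3⟩ := hQ g p q r hpr hqr hpq.ne (by omega) (by omega)
  have hwr : r ≠ w := fun h => by rw [h] at hw3; omega
  have hadjwr : G.Adj w r := by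
    by_contra hna
    exact hK4 ⟨p, q, r, w, hpq.ne, hpr.ne, hw1.ne, hqr.ne, hw2.ne, hwr, hpq, hpr, hw1,
      hqr, hw2, fun h => hna h.symm⟩
  have := dist_le_adj hc hadjwr g
  omega

lemma lemW (hc : G.Connected) (hT : QMTriangle G) (hQ : QMQuad G) (hK4 : NoK4minus G)
    (hK32 : NoK32 G) {C : Set V} (hC : MaxCliqueOn G C) {c0 : V} (hc0 : c0 ∈ C)
    {a b c h' g : V} (hba : G.Adj b a) (hbc : G.Adj b c) (hac : a ≠ c)
    (hnac : ¬ G.Adj a c)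
    (hga : GateAt G C a h') (hgc : GateAt G C c h') (hgb : GateAt G C b g)
    (hne : g ≠ h') : False := by
  have heq1 : G.dist a h' = G.dist b g := gate_dist_eq hc hga hgb (fun h => hne h.symm) hba.symm
  have heq2 : G.dist c h' = G.dist b g := gate_dist_eq hc hgc hgb (fun h => hne h.symm) hbc.symm
  have hapos : 0 < G.dist a h' := by
    rcases Nat.eq_zero_or_pos (G.dist a h') with h0 | hpos
    · exfalso
      have h1 : a = h' := (hc.dist_eq_zero_iff).mp h0
      have h2 : c = h' := (hc.dist_eq_zero_iff).mp (by omega)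
      exact hac (h1.trans h2.symm)
    · exact hpos
  have ebh : G.dist b h' = G.dist b g + 1 := hgb.2 h' hga.1 (fun h => hne h.symm)
  have c1 : G.dist h' a = G.dist a h' := SimpleGraph.dist_comm
  have c2 : G.dist h' c = G.dist c h' := SimpleGraph.dist_comm
  have c3 : G.dist h' b = G.dist b h' := SimpleGraph.dist_comm
  obtain ⟨v, hv1, hv2, hv3⟩ := hQ h' a c b hba.symm hbc.symm hac (by omega) (by omega)
  have hgv : GateAt G C v h' := by
    refine gate_step hc hT hK4 hC hc0 hga hv1.symm ?_
    have c4 : G.dist h' v = G.dist v h' := SimpleGraph.dist_comm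
    omega
  have c4 : G.dist h' v = G.dist v h' := SimpleGraph.dist_comm
  have hnvb : ¬ G.Adj v b := fun h => by have := dist_le_adj hc h h'; omega
  have hvb : v ≠ b := fun h => by rw [h] at hv3; omega
  have hbv : b ≠ v := fun h => hvb h.symm
  have evg : G.dist v g = G.dist v h' + 1 := hgv.2 g hgb.1 hne
  have eag : G.dist a g = G.dist a h' + 1 := hga.2 g hgb.1 hne
  have d1 : G.dist g b = G.dist b g := SimpleGraph.dist_comm
  have d2 : G.dist g v = G.dist v g := SimpleGraph.dist_comm
  have d3 : G.dist g a = G.dist a g := SimpleGraph.dist_comm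
  obtain ⟨u, hu1, hu2, hu3⟩ := hQ g b v a hba hv1.symm hbv (by omega) (by omega)
  have hgu : GateAt G C u g := by
    refine gate_step hc hT hK4 hC hc0 hgb hu1.symm ?_
    have d4 : G.dist g u = G.dist u g := SimpleGraph.dist_comm
    omega
  have hnua : ¬ G.Adj u a := fun h =>
    hne (lemT hc hQ hK4 hu1.symm h hba hgu hgb hga).symm
  have hnuc : ¬ G.Adj u c := fun h =>
    hne (lemT hc hQ hK4 hu1.symm h hbc hgu hgb hgc).symm
  have hau : a ≠ u := fun h => by
    have h2 : GateAt G C u h' := by rw [← h]; exact hga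
    exact hne (gate_unique hgu h2)
  have hcu : c ≠ u := fun h => by
    have h2 : GateAt G C u h' := by rw [← h]; exact hgc
    exact hne (gate_unique hgu h2)
  exact hK32 ⟨a, c, u, v, b, hac, hau, hcu, hvb, hv1, hba.symm, hv2, hbc.symm,
    hu2.symm, hu1.symm, hnac, fun h => hnua h.symm, fun h => hnuc h.symm, hnvb⟩


lemma dist_two (hc : G.Connected) {x u y : V} (hxy : x ≠ y) (hnadj : ¬ G.Adj x y)
    (h1 : G.Adj x u) (h2 : G.Adj u y) : G.dist x y = 2 := by
  have hle : G.dist x y ≤ 2 := by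
    have t := hc.dist_triangle (u := x) (v := u) (w := y)
    rw [adj_dist_one h1, adj_dist_one h2] at t; omega
  have h0 : G.dist x y ≠ 0 := fun h => hxy ((hc.dist_eq_zero_iff).mp h)
  have h1' : G.dist x y ≠ 1 := fun h => hnadj (adj_of_dist_one h)
  omega

lemma lemS (hc : G.Connected) (hT : QMTriangle G) (hQ : QMQuad G) (hK4 : NoK4minus G)
    (hK32 : NoK32 G) {C : Set V} (hC : MaxCliqueOn G C) {c0 : V} (hc0 : c0 ∈ C)
    {a b c d ga gb h' : V}
    (hab : G.Adj a b) (hbc : G.Adj b c) (hcd : G.Adj c d) (hda : G.Adj d a)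
    (hac : a ≠ c) (hbd : b ≠ d)
    (hga : GateAt G C a ga) (hgb : GateAt G C b gb)
    (hgc : GateAt G C c h') (hgd : GateAt G C d h') :
    ga = gb := by
  by_cases hadjac : G.Adj a c
  · have h1 : ga = h' := lemT hc hQ hK4 hcd hadjac.symm hda hgc hgd hga
    have h2 : gb = h' := lemT hc hQ hK4 hadjac hab hbc.symm (h1 ▸ hga) hgc hgb
    rw [h1, h2]
  by_cases hadjbd : G.Adj b d
  · have h1 : gb = h' := lemT hc hQ hK4 hcd hbc.symm hadjbd.symm hgc hgd hgb
    have h2 : ga = h' := lemT hc hQ hK4 hadjbd hab.symm hda (h1 ▸ hgb) hgd hga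
    rw [h1, h2]
  by_contra hne
  by_cases hii : h' = ga
  · exact lemW hc hT hQ hK4 hK32 hC hc0 hab.symm hbc hac hadjac
      (hii ▸ hga) hgc hgb (fun h => hne (hii.symm.trans h.symm))
  by_cases hiii : h' = gb
  · exact lemW hc hT hQ hK4 hK32 hC hc0 hab hda.symm hbd hadjbd
      (hiii ▸ hgb) hgd hga (fun h => hne (h.trans hiii))
  -- main case: h' distinct from ga, gb
  have hmab : G.dist a ga = G.dist b gb := gate_dist_eq hc hga hgb hne hab
  have hmbc : G.dist b gb = G.dist c h' :=
    gate_dist_eq hc hgb hgc (fun h => hiii (h.symm)) hbc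
  have hmad : G.dist a ga = G.dist d h' :=
    gate_dist_eq hc hga hgd (fun h => hii (h.symm)) hda.symm
  have dcga : G.dist c ga = G.dist c h' + 1 := hgc.2 ga hga.1 (fun h => hii h.symm)
  have ddga : G.dist d ga = G.dist d h' + 1 := hgd.2 ga hga.1 (fun h => hii h.symm)
  have dcgb : G.dist c gb = G.dist c h' + 1 := hgc.2 gb hgb.1 (fun h => hiii h.symm)
  have hmpos : 0 < G.dist a ga := by
    rcases Nat.eq_zero_or_pos (G.dist a ga) with h0 | hpos
    · exfalso
      have h1 : c = h' := (hc.dist_eq_zero_iff).mp (by omega)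
      have h2 : d = h' := (hc.dist_eq_zero_iff).mp (by omega)
      exact hcd.ne (h1.trans h2.symm)
    · exact hpos
  have cg1 : G.dist ga c = G.dist c ga := SimpleGraph.dist_comm
  have cg2 : G.dist ga d = G.dist d ga := SimpleGraph.dist_comm
  obtain ⟨z', hz'1, hz'2, hz'3⟩ := hT ga c d hcd (by omega)
  have dz'ga : G.dist z' ga = G.dist a ga := by
    have : G.dist ga z' = G.dist z' ga := SimpleGraph.dist_comm
    omega
  obtain ⟨k0, hk0⟩ := gate_exists hc hT hK4 hC hc0 z'
  have hk0h : k0 = h' := lemT hc hQ hK4 hcd hz'1 hz'2 hgc hgd hk0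
  have hgz' : GateAt G C z' h' := hk0h ▸ hk0
  have ez'g : G.dist z' ga = G.dist z' h' + 1 := hgz'.2 ga hga.1 (fun h => hii h.symm)
  have haz' : a ≠ z' := fun h => by
    have h2 : GateAt G C z' ga := by rw [← h]; exact hga
    exact hii (gate_unique hgz' h2)
  have cga : G.dist ga a = G.dist a ga := SimpleGraph.dist_comm
  have cgz' : G.dist ga z' = G.dist z' ga := SimpleGraph.dist_comm
  obtain ⟨w, hw1, hw2, hw3⟩ := hQ ga a z' d hda.symm hz'2.symm haz' (by omega) (by omega)
  have hgw : GateAt G C w ga := by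
    refine gate_step hc hT hK4 hC hc0 hga hw1.symm ?_
    have : G.dist ga w = G.dist w ga := SimpleGraph.dist_comm
    omega
  have dwga : G.dist w ga + 2 = G.dist a ga + 1 := by
    have : G.dist ga w = G.dist w ga := SimpleGraph.dist_comm
    omega
  have hnz'a : ¬ G.Adj z' a := fun h =>
    hii (lemT hc hQ hK4 hz'2.symm h hda hgz' hgd hga).symm
  have hnz'b : ¬ G.Adj z' b := fun h =>
    hiii (lemT hc hQ hK4 hz'1.symm h hbc.symm hgz' hgc hgb).symm
  have hz'b : z' ≠ b := fun h => by
    have h2 : GateAt G C b h' := by rw [← h]; exact hgz'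
    exact hiii (gate_unique h2 hgb)
  have dz'a : G.dist z' a = 2 := dist_two hc (fun h => haz' h.symm) hnz'a hz'2.symm hda
  have dz'b : G.dist z' b = 2 := dist_two hc hz'b hnz'b hz'1.symm hbc.symm
  obtain ⟨t, ht1, ht2, ht3⟩ := hT z' a b hab (by omega)
  have hadjz't : G.Adj z' t := adj_of_dist_one (by omega)
  obtain ⟨k, hk⟩ := gate_exists hc hT hK4 hC hc0 t
  have hkga : k ≠ ga := fun h => by
    have h2 : GateAt G C t ga := by rw [← h]; exact hk
    exact hne (lemT hc hQ hK4 ht1.symm ht2.symm hab h2 hga hgb).symm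
  have hkgb : k ≠ gb := fun h => by
    have h2 : GateAt G C t gb := by rw [← h]; exact hk
    exact hne (lemT hc hQ hK4 ht2.symm ht1.symm hab.symm h2 hgb hga)
  have hkh : k = h' := by
    by_contra hkh
    have e1 : G.dist t h' = G.dist t k + 1 := hk.2 h' hgz'.1 (fun h => hkh h.symm)
    have e2 : G.dist t h' ≤ 1 + G.dist z' h' := by
      have t2 := hc.dist_triangle (u := t) (v := z') (w := h')
      rwa [adj_dist_one hadjz't.symm] at t2
    have e3 : G.dist a k = G.dist a ga + 1 := hga.2 k hk.1 hkga
    have e4 : G.dist a k ≤ 1 + G.dist t k := by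
      have t2 := hc.dist_triangle (u := a) (v := t) (w := k)
      rwa [adj_dist_one ht1] at t2
    omega
  have hgt : GateAt G C t h' := hkh ▸ hk
  have hndt : ¬ G.Adj d t := fun h =>
    hii (lemT hc hQ hK4 h.symm ht1.symm hda hgt hgd hga).symm
  have hnwt : ¬ G.Adj w t := fun h =>
    hii (lemT hc hQ hK4 hw1.symm h ht1 hgw hga hgt)
  have hndw : ¬ G.Adj d w := fun h => by
    have t3 := dist_le_adj hc h.symm ga
    have c1 : G.dist ga d = G.dist d ga := SimpleGraph.dist_comm
    have c2 : G.dist ga w = G.dist w ga := SimpleGraph.dist_comm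
    omega
  have hdw : d ≠ w := fun h => by
    have h2 : GateAt G C w h' := by rw [← h]; exact hgd
    exact hii (gate_unique hgw h2).symm
  have hdt : d ≠ t := fun h => hadjbd (by rw [h]; exact ht2)
  have hwt : w ≠ t := fun h => by
    have h2 : GateAt G C t ga := by rw [← h]; exact hgw
    exact hii (gate_unique hgt h2)
  have hz'a2 : z' ≠ a := fun h => haz' h.symm
  exact hK32 ⟨d, w, t, z', a, hdw, hdt, hwt, hz'a2, hz'2, hda, hw2.symm, hw1.symm,
    hadjz't.symm, ht1.symm, hndw, hndt, hnwt, hnz'a⟩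


def BadEdge (G : SimpleGraph V) (C : Set V) (e : Sym2 V) : Prop :=
  ∃ p q g, e = s(p,q) ∧ G.Adj p q ∧ GateAt G C p g ∧ GateAt G C q g

lemma bad_step (hc : G.Connected) (hT : QMTriangle G) (hQ : QMQuad G) (hK4 : NoK4minus G)
    (hK32 : NoK32 G) {C : Set V} (hC : MaxCliqueOn G C) {c0 : V} (hc0 : c0 ∈ C)
    {e e' : Sym2 V} (hs : hypStep G e e') (hb : BadEdge G C e) : BadEdge G C e' := by
  obtain ⟨p, q, g, hepq, hadj, hp, hq⟩ := hb
  rcases hs with ⟨x,y,z,h1,h2,h3,he,he'⟩ | ⟨x,y,z,w,h1,h2,h3,h4,hxz,hyw,he,he'⟩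
  · obtain ⟨gx, hgx⟩ := gate_exists hc hT hK4 hC hc0 x
    obtain ⟨gy, hgy⟩ := gate_exists hc hT hK4 hC hc0 y
    obtain ⟨gz, hgz⟩ := gate_exists hc hT hK4 hC hc0 z
    simp only [Set.mem_insert_iff, Set.mem_singleton_iff] at he he'
    have hxy : gx = gy := by
      rcases he with h | h | h <;>
        rcases Sym2.eq_iff.mp (hepq.symm.trans h) with ⟨h5, h6⟩ | ⟨h5, h6⟩
      · rw [gate_unique hgx (h5 ▸ hp), gate_unique hgy (h6 ▸ hq)]
      · rw [gate_unique hgx (h6 ▸ hq), gate_unique hgy (h5 ▸ hp)]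
      · have e1 : gy = g := gate_unique hgy (h5 ▸ hp)
        have e2 : gz = g := gate_unique hgz (h6 ▸ hq)
        have hgz' : GateAt G C z gy := (e2.trans e1.symm) ▸ hgz
        exact lemT hc hQ hK4 h2 h1.symm h3.symm hgy hgz' hgx
      · have e1 : gy = g := gate_unique hgy (h6 ▸ hq)
        have e2 : gz = g := gate_unique hgz (h5 ▸ hp)
        have hgz' : GateAt G C z gy := (e2.trans e1.symm) ▸ hgz
        exact lemT hc hQ hK4 h2 h1.symm h3.symm hgy hgz' hgx
      · have e1 : gx = g := gate_unique hgx (h5 ▸ hp)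
        have e2 : gz = g := gate_unique hgz (h6 ▸ hq)
        have hgz' : GateAt G C z gx := (e2.trans e1.symm) ▸ hgz
        exact (lemT hc hQ hK4 h3 h1 h2.symm hgx hgz' hgy).symm
      · have e1 : gx = g := gate_unique hgx (h6 ▸ hq)
        have e2 : gz = g := gate_unique hgz (h5 ▸ hp)
        have hgz' : GateAt G C z gx := (e2.trans e1.symm) ▸ hgz
        exact (lemT hc hQ hK4 h3 h1 h2.symm hgx hgz' hgy).symm
    have hz : gz = gx := lemT hc hQ hK4 h1 h3 h2 hgx (hxy ▸ hgy) hgz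
    rcases he' with h | h | h
    · exact ⟨x, y, gx, h, h1, hgx, hxy ▸ hgy⟩
    · exact ⟨y, z, gx, h, h2, hxy ▸ hgy, hz ▸ hgz⟩
    · exact ⟨x, z, gx, h, h3, hgx, hz ▸ hgz⟩
  · obtain ⟨gx, hgx⟩ := gate_exists hc hT hK4 hC hc0 x
    obtain ⟨gy, hgy⟩ := gate_exists hc hT hK4 hC hc0 y
    obtain ⟨gz, hgz⟩ := gate_exists hc hT hK4 hC hc0 z
    obtain ⟨gw, hgw⟩ := gate_exists hc hT hK4 hC hc0 w
    have hxy : gx = gy := by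
      rcases Sym2.eq_iff.mp (hepq.symm.trans he) with ⟨h5, h6⟩ | ⟨h5, h6⟩
      · rw [gate_unique hgx (h5 ▸ hp), gate_unique hgy (h6 ▸ hq)]
      · rw [gate_unique hgx (h6 ▸ hq), gate_unique hgy (h5 ▸ hp)]
    have hwz : gw = gz :=
      lemS hc hT hQ hK4 hK32 hC hc0 h3.symm h2.symm h1.symm h4.symm
        (fun h => hyw h.symm) (fun h => hxz h.symm) hgw hgz (hxy ▸ hgy) hgx
    exact ⟨w, z, gw, he', h3.symm, hgw, hwz ▸ hgz⟩

lemma class_gates_ne (hc : G.Connected) (hT : QMTriangle G) (hQ : QMQuad G)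
    (hK4 : NoK4minus G) (hK32 : NoK32 G) {C : Set V} (hC : MaxCliqueOn G C)
    {p0 q0 : V} (hp0 : p0 ∈ C) (hq0 : q0 ∈ C) (hne0 : p0 ≠ q0)
    {e : Sym2 V} (he : e ∈ hypClass G s(p0,q0)) {u v gu gv : V} (heuv : e = s(u,v))
    (hgu : GateAt G C u gu) (hgv : GateAt G C v gv) : gu ≠ gv := by
  intro heq
  have hbadroot : BadEdge G C s(p0,q0) := by
    have h2 : s(p0,q0) ∈ hypClass G e := mem_hypClass_symm he
    have hbe : BadEdge G C e := ⟨u, v, gu, heuv, by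
      have : e ∈ G.edgeSet := hypClass_edges (by
        rw [SimpleGraph.mem_edgeSet]; exact hC.1 hp0 hq0 hne0) he
      rw [heuv] at this; exact this, hgu, heq ▸ hgv⟩
    have hall : ∀ f, Relation.ReflTransGen (hypStep G) e f → BadEdge G C f := by
      intro f hf
      induction hf with
      | refl => exact hbe
      | tail h1 hstep ih => exact bad_step hc hT hQ hK4 hK32 hC hp0 hstep ih
    exact hall _ h2
  obtain ⟨p, q, g, hepq, _, hp, hq⟩ := hbadroot
  rcases Sym2.eq_iff.mp hepq.symm with ⟨h5, h6⟩ | ⟨h5, h6⟩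
  · subst h5; subst h6
    exact hne0 ((gate_unique (gate_self hC.1 hp0) hp).trans
      (gate_unique (gate_self hC.1 hq0) hq).symm)
  · subst h5; subst h6
    exact hne0 ((gate_unique (gate_self hC.1 hp0) hq).trans
      (gate_unique (gate_self hC.1 hq0) hp).symm)

lemma sep (hc : G.Connected) (hT : QMTriangle G) (hQ : QMQuad G) (hK4 : NoK4minus G)
    {C : Set V} (hC : MaxCliqueOn G C) {p0 q0 : V} (hp0 : p0 ∈ C) (hq0 : q0 ∈ C)
    (hne0 : p0 ≠ q0) :
    ∀ n (a b ga gb : V), G.dist a ga = n → G.Adj a b → GateAt G C a ga →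
      GateAt G C b gb → ga ≠ gb → s(a,b) ∈ hypClass G s(p0,q0) := by
  intro n
  induction n using Nat.strong_induction_on with
  | _ n ih =>
    intro a b ga gb hn hab hga hgb hne
    have hmeq : G.dist a ga = G.dist b gb := gate_dist_eq hc hga hgb hne hab
    rcases n with _ | m
    · have ha : a = ga := (hc.dist_eq_zero_iff).mp hn
      have hb : b = gb := (hc.dist_eq_zero_iff).mp (by omega)
      exact clique_edge_class hC.1 hp0 hq0 (ha ▸ hga.1) (hb ▸ hgb.1) hne0
        (fun h => hab.ne h)
    · obtain ⟨pw, hpw⟩ := SimpleGraph.exists_walk_of_dist_ne_zero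
        (show G.dist b gb ≠ 0 by omega)
      cases pw with
      | nil => rw [SimpleGraph.Walk.length_nil] at hpw; omega
      | @cons _ b'' _ hadj q =>
        rw [SimpleGraph.Walk.length_cons] at hpw
        have hd1 : G.dist b'' gb ≤ q.length := SimpleGraph.dist_le q
        have hd2 : G.dist b gb ≤ 1 + G.dist b'' gb := by
          have t2 := hc.dist_triangle (u := b) (v := b'') (w := gb)
          rwa [adj_dist_one hadj] at t2
        have hd3 : G.dist b'' gb = m := by omega
        have hgb'' : GateAt G C b'' gb :=
          gate_step hc hT hK4 hC hp0 hgb hadj.symm (by omega)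
        have hab'' : a ≠ b'' := fun h => by
          have h2 : GateAt G C b'' ga := by rw [← h]; exact hga
          exact hne (gate_unique h2 hgb'')
        have c1 : G.dist ga a = G.dist a ga := SimpleGraph.dist_comm
        have c2 : G.dist ga b'' = G.dist b'' ga := SimpleGraph.dist_comm
        have c3 : G.dist ga b = G.dist b ga := SimpleGraph.dist_comm
        have e1 : G.dist b'' ga = G.dist b'' gb + 1 := hgb''.2 ga hga.1 hne
        have e2 : G.dist b ga = G.dist b gb + 1 := hgb.2 ga hga.1 hne
        obtain ⟨w, hw1, hw2, hw3⟩ := hQ ga a b'' b hab hadj.symm hab'' (by omega) (by omega)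
        have c4 : G.dist ga w = G.dist w ga := SimpleGraph.dist_comm
        have hgw : GateAt G C w ga :=
          gate_step hc hT hK4 hC hp0 hga hw1.symm (by omega)
        have hprev : s(w,b'') ∈ hypClass G s(p0,q0) :=
          ih m (by omega) w b'' ga gb (by omega) hw2.symm hgw hgb'' hne
        have hwb : w ≠ b := by
          intro h
          subst h
          omega
        exact hypClass_tail hprev (Or.inr ⟨w, b'', b, a, hw2.symm, hadj.symm, hab.symm,
          hw1, hwb, fun h => hab'' h.symm, rfl, rfl⟩)
  

def CornerAt (G : SimpleGraph V) (x0 x y w : V) : Prop :=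
  G.Adj w x ∧ G.Adj w y ∧ ¬ G.Adj w x0 ∧ w ≠ x0

lemma CornerAt.swap {x0 x y w : V} (h : CornerAt G x0 x y w) : CornerAt G x0 y x w :=
  ⟨h.2.1, h.1, h.2.2.1, h.2.2.2⟩

lemma corner_unique (hK4 : NoK4minus G) (hK32 : NoK32 G) {x0 x y w w' : V}
    (hadjx : G.Adj x0 x) (hadjy : G.Adj x0 y) (hxy : x ≠ y) (hnxy : ¬ G.Adj x y)
    (h1 : CornerAt G x0 x y w) (h2 : CornerAt G x0 x y w') : w = w' := by
  by_contra hne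
  by_cases hadj : G.Adj w w'
  · exact hK4 ⟨w, w', x, y, hne, h1.1.ne, h1.2.1.ne, h2.1.ne, h2.2.1.ne, hxy,
      hadj, h1.1, h1.2.1, h2.1, h2.2.1, hnxy⟩
  · exact hK32 ⟨w, w', x0, x, y, hne, h1.2.2.2, h2.2.2.2, hxy,
      h1.1, h1.2.1, h2.1, h2.2.1, hadjx, hadjy,
      hadj, h1.2.2.1, h2.2.2.1, hnxy⟩

section CornerSec

variable (hc : G.Connected) (hT : QMTriangle G) (hK4 : NoK4minus G) (hK32 : NoK32 G)
variable {A B : Set V} {x0 : V}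
variable (hA : G.IsClique A) (hB : G.IsClique B) (hx0A : x0 ∈ A) (hx0B : x0 ∈ B)
variable (hcross : ∀ x ∈ A, x ≠ x0 → ∀ y ∈ B, y ≠ x0 → x ≠ y ∧ ¬ G.Adj x y)
variable (hHJ : ∀ z x y : V, x ∈ A → x ≠ x0 → y ∈ B → y ≠ x0 →
    G.Adj z x0 → G.Adj z x → G.Adj z y → False)

include hc hT hK4 hK32 hA hB hx0A hx0B hcross hHJ

lemma corner_adj {x y y' w w' : V} (hx : x ∈ A) (hxne : x ≠ x0)
    (hy : y ∈ B) (hyne : y ≠ x0) (hy' : y' ∈ B) (hy'ne : y' ≠ x0) (hyy' : y ≠ y')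
    (hw : CornerAt G x0 x y w) (hw' : CornerAt G x0 x y' w') : G.Adj w w' := by
  have hadjx0x : G.Adj x0 x := hA hx0A hx (Ne.symm hxne)
  have hadjx0y : G.Adj x0 y := hB hx0B hy (Ne.symm hyne)
  have hadjx0y' : G.Adj x0 y' := hB hx0B hy' (Ne.symm hy'ne)
  have hadjyy' : G.Adj y y' := hB hy hy' hyy'
  have hnwy' : ¬ G.Adj w y' := fun h =>
    hK4 ⟨y, y', x0, w, hyy', hyne, hw.2.1.ne', hy'ne, h.ne', fun hh => hw.2.2.2 hh.symm,
      hadjyy', hadjx0y.symm, hw.2.1.symm, hadjx0y'.symm, h.symm,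
      fun hh => hw.2.2.1 hh.symm⟩
  have hwy' : w ≠ y' := fun h => (hcross x hx hxne y' hy' hy'ne).2 (by rw [← h]; exact hw.1.symm)
  have hdy'w : G.dist y' w = 2 :=
    dist_two hc (fun h => hwy' h.symm) (fun h => hnwy' h.symm) hadjyy'.symm hw.2.1.symm
  have hdy'x : G.dist y' x = 2 :=
    dist_two hc (fun h => (hcross x hx hxne y' hy' hy'ne).1 h.symm)
      (fun h => (hcross x hx hxne y' hy' hy'ne).2 h.symm) hadjx0y'.symm hadjx0x
  obtain ⟨z, hz1, hz2, hz3⟩ := hT y' x w hw.1.symm (by omega)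
  have hadjy'z : G.Adj y' z := adj_of_dist_one (by omega)
  have hzcorner : CornerAt G x0 x y' z := by
    refine ⟨hz1.symm, hadjy'z.symm, fun h => hHJ z x y' hx hxne hy' hy'ne h hz1.symm
      hadjy'z.symm, fun h => hw.2.2.1 ?_⟩
    rw [← h]; exact hz2
  have := corner_unique hK4 hK32 hadjx0x hadjx0y' (hcross x hx hxne y' hy' hy'ne).1
    (hcross x hx hxne y' hy' hy'ne).2 hzcorner hw'
  rw [← this]
  exact hz2

lemma corner_propagate {xb yb wb x : V} (hxb : xb ∈ A) (hxbne : xb ≠ x0)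
    (hyb : yb ∈ B) (hybne : yb ≠ x0) (hwb : CornerAt G x0 xb yb wb)
    (hx : x ∈ A) (hxne : x ≠ x0) : ∃ w, CornerAt G x0 x yb w := by
  by_cases hxxb : x = xb
  · exact ⟨wb, hxxb ▸ hwb⟩
  have hadjx0x : G.Adj x0 x := hA hx0A hx (Ne.symm hxne)
  have hadjx0xb : G.Adj x0 xb := hA hx0A hxb (Ne.symm hxbne)
  have hadjx0yb : G.Adj x0 yb := hB hx0B hyb (Ne.symm hybne)
  have hadjxxb : G.Adj x xb := hA hx hxb hxxb
  have hwbx : wb ≠ x := fun h =>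
    (hcross x hx hxne yb hyb hybne).2 (by rw [← h]; exact hwb.2.1)
  have hnwbx : ¬ G.Adj wb x := fun h =>
    hK4 ⟨x, xb, x0, wb, hxxb, hxne, fun hh => hwbx hh.symm, hxbne, hwb.1.ne',
      fun hh => hwb.2.2.2 hh.symm, hadjxxb, hadjx0x.symm, h.symm, hadjx0xb.symm,
      hwb.1.symm, fun hh => hwb.2.2.1 hh.symm⟩
  have hdxwb : G.dist x wb = 2 :=
    dist_two hc (fun h => hwbx h.symm) (fun h => hnwbx h.symm) hadjxxb hwb.1.symm
  have hdxyb : G.dist x yb = 2 :=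
    dist_two hc (hcross x hx hxne yb hyb hybne).1 (hcross x hx hxne yb hyb hybne).2
      hadjx0x.symm hadjx0yb
  obtain ⟨z, hz1, hz2, hz3⟩ := hT x yb wb hwb.2.1.symm (by omega)
  have hadjxz : G.Adj x z := adj_of_dist_one (by omega)
  refine ⟨z, hadjxz.symm, hz1.symm, fun h => hHJ z x yb hx hxne hyb hybne h hadjxz.symm
    hz1.symm, fun h => hwb.2.2.1 ?_⟩
  rw [← h]; exact hz2

end CornerSec

end Stmt8Aux


open Stmt8Aux in
/-- In a quasi-median graph, two intersecting cliques whose hyperplanes are distinct and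
transverse span a prism: there is an embedding of `C1 × C2` extending the identity on
`C1` and `C2` whose image is an induced copy of the Cartesian product of the two
cliques. -/
theorem stmt8 {V : Type*} (G : SimpleGraph V) (hG : QuasiMedian G)
    (C1 C2 : Set V)
    (hC1 : G.IsClique C1 ∧ ∀ D, G.IsClique D → C1 ⊆ D → D = C1)
    (hC2 : G.IsClique C2 ∧ ∀ D, G.IsClique D → C2 ⊆ D → D = C2)
    (x0 : V) (hx1 : x0 ∈ C1) (hx2 : x0 ∈ C2)
    (J1 J2 : Set (Sym2 V)) (hJ1 : IsHyperplane G J1) (hJ2 : IsHyperplane G J2)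
    (hC1J1 : ∀ u ∈ C1, ∀ v ∈ C1, u ≠ v → s(u, v) ∈ J1)
    (hC2J2 : ∀ u ∈ C2, ∀ v ∈ C2, u ≠ v → s(u, v) ∈ J2)
    (htr : Transverse G J1 J2) :
    ∃ f : C1 × C2 → V, Function.Injective f ∧
      (∀ x : C1, f (x, ⟨x0, hx2⟩) = x) ∧
      (∀ y : C2, f (⟨x0, hx1⟩, y) = y) ∧
      ∀ p q : C1 × C2, G.Adj (f p) (f q) ↔
        ((p.1 = q.1 ∧ p.2 ≠ q.2) ∨ (p.2 = q.2 ∧ p.1 ≠ q.1)) := by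
  classical
  obtain ⟨hc, hK4, hK32, hT, hQ⟩ := hG
  by_cases hdeg1 : ∀ z ∈ C1, z = x0
  · refine ⟨fun p => (p.2 : V), ?_, ?_, ?_, ?_⟩
    · intro p q h
      exact Prod.ext (Subtype.ext ((hdeg1 _ p.1.2).trans (hdeg1 _ q.1.2).symm))
        (Subtype.ext h)
    · intro x
      exact (hdeg1 _ x.2).symm
    · intro y; rfl
    · intro p q
      constructor
      · intro h
        exact Or.inl ⟨Subtype.ext ((hdeg1 _ p.1.2).trans (hdeg1 _ q.1.2).symm),
          fun he => h.ne (congrArg Subtype.val he)⟩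
      · rintro (⟨h1, h2⟩ | ⟨h1, h2⟩)
        · exact hC2.1 p.2.2 q.2.2 (fun he => h2 (Subtype.ext he))
        · exact absurd (Subtype.ext ((hdeg1 _ p.1.2).trans (hdeg1 _ q.1.2).symm)) h2
  by_cases hdeg2 : ∀ z ∈ C2, z = x0
  · refine ⟨fun p => (p.1 : V), ?_, ?_, ?_, ?_⟩
    · intro p q h
      exact Prod.ext (Subtype.ext h)
        (Subtype.ext ((hdeg2 _ p.2.2).trans (hdeg2 _ q.2.2).symm))
    · intro x; rfl
    · intro y
      exact (hdeg2 _ y.2).symm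
    · intro p q
      constructor
      · intro h
        exact Or.inr ⟨Subtype.ext ((hdeg2 _ p.2.2).trans (hdeg2 _ q.2.2).symm),
          fun he => h.ne (congrArg Subtype.val he)⟩
      · rintro (⟨h1, h2⟩ | ⟨h1, h2⟩)
        · exact absurd (Subtype.ext ((hdeg2 _ p.2.2).trans (hdeg2 _ q.2.2).symm)) h2
        · exact hC1.1 p.1.2 q.1.2 (fun he => h2 (Subtype.ext he))
  push_neg at hdeg1 hdeg2
  obtain ⟨x1, hx1C, hx1ne⟩ := hdeg1
  obtain ⟨y1, hy1C, hy1ne⟩ := hdeg2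
  have hMC1 : MaxCliqueOn G C1 := hC1
  have hMC2 : MaxCliqueOn G C2 := hC2
  have hs1 : s(x0, x1) ∈ J1 := hC1J1 x0 hx1 x1 hx1C (Ne.symm hx1ne)
  have hs2 : s(x0, y1) ∈ J2 := hC2J2 x0 hx2 y1 hy1C (Ne.symm hy1ne)
  obtain ⟨e1, he1, hJ1e⟩ := hJ1
  obtain ⟨e2, he2, hJ2e⟩ := hJ2
  have hJ1c : J1 = hypClass G s(x0, x1) := by
    rw [hJ1e]
    exact hypClass_eq_of_mem (by rw [← hJ1e]; exact hs1)
  have hJ2c : J2 = hypClass G s(x0, y1) := by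
    rw [hJ2e]
    exact hypClass_eq_of_mem (by rw [← hJ2e]; exact hs2)
  have hJne : J1 ≠ J2 := htr.1
  have hdisj : ∀ e : Sym2 V, e ∈ J1 → e ∈ J2 → False := by
    intro e h1 h2
    apply hJne
    rw [hJ1c, hypClass_eq_of_mem (show e ∈ hypClass G s(x0,x1) by rw [← hJ1c]; exact h1)]
    rw [hJ2c, hypClass_eq_of_mem (show e ∈ hypClass G s(x0,y1) by rw [← hJ2c]; exact h2)]
  have hadjx0x1 : G.Adj x0 x1 := hC1.1 hx1 hx1C (Ne.symm hx1ne)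
  have hadjx0y1 : G.Adj x0 y1 := hC2.1 hx2 hy1C (Ne.symm hy1ne)
  have hcross : ∀ x ∈ C1, x ≠ x0 → ∀ y ∈ C2, y ≠ x0 → x ≠ y ∧ ¬ G.Adj x y := by
    intro x hx hxne y hy hyne
    have hax : G.Adj x0 x := hC1.1 hx1 hx (Ne.symm hxne)
    have hay : G.Adj x0 y := hC2.1 hx2 hy (Ne.symm hyne)
    have hsx : s(x0, x) ∈ J1 := hC1J1 x0 hx1 x hx (Ne.symm hxne)
    have hsy : s(x0, y) ∈ J2 := hC2J2 x0 hx2 y hy (Ne.symm hyne)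
    constructor
    · intro h; subst h; exact hdisj _ hsx hsy
    · intro h
      have hmem : s(x0, y) ∈ J1 := by
        rw [hJ1c] at hsx ⊢
        exact hypClass_tail hsx (hypStep_tri hax h hay (Or.inl rfl) (Or.inr (Or.inr rfl)))
      exact hdisj _ hmem hsy
  have hHJ : ∀ z x y : V, x ∈ C1 → x ≠ x0 → y ∈ C2 → y ≠ x0 →
      G.Adj z x0 → G.Adj z x → G.Adj z y → False := by
    intro z x y hx hxne hy hyne hzx0 hzx hzy
    have hax : G.Adj x0 x := hC1.1 hx1 hx (Ne.symm hxne)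
    have hay : G.Adj x0 y := hC2.1 hx2 hy (Ne.symm hyne)
    have hsx : s(x0, x) ∈ J1 := hC1J1 x0 hx1 x hx (Ne.symm hxne)
    have hsy : s(x0, y) ∈ J2 := hC2J2 x0 hx2 y hy (Ne.symm hyne)
    have hsz1 : s(x0, z) ∈ J1 := by
      rw [hJ1c] at hsx ⊢
      exact hypClass_tail hsx
        (hypStep_tri hax hzx.symm hzx0.symm (Or.inl rfl) (Or.inr (Or.inr rfl)))
    have hsz2 : s(x0, z) ∈ J2 := by
      rw [hJ2c] at hsy ⊢
      exact hypClass_tail hsy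
        (hypStep_tri hay hzy.symm hzx0.symm (Or.inl rfl) (Or.inr (Or.inr rfl)))
    exact hdisj _ hsz1 hsz2
  have hcross' : ∀ y ∈ C2, y ≠ x0 → ∀ x ∈ C1, x ≠ x0 → y ≠ x ∧ ¬ G.Adj y x := by
    intro y hy hyne x hx hxne
    obtain ⟨h1, h2⟩ := hcross x hx hxne y hy hyne
    exact ⟨Ne.symm h1, fun h => h2 h.symm⟩
  have hHJ' : ∀ z y x : V, y ∈ C2 → y ≠ x0 → x ∈ C1 → x ≠ x0 →
      G.Adj z x0 → G.Adj z y → G.Adj z x → False := by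
    intro z y x hy hyne hx hxne hzx0 hzy hzx
    exact hHJ z x y hx hxne hy hyne hzx0 hzx hzy
  -- transversality gives a basepoint on the far side of both hyperplanes
  obtain ⟨htrJ, u, v, huv, hsuv, huV, hvV⟩ := htr
  obtain ⟨g2u, hg2u⟩ := gate_exists hc hT hK4 hMC2 hx2 u
  obtain ⟨g2v, hg2v⟩ := gate_exists hc hT hK4 hMC2 hx2 v
  have hg2uv : g2u ≠ g2v :=
    class_gates_ne hc hT hQ hK4 hK32 hMC2 hx2 hy1C (Ne.symm hy1ne)
      (by rw [← hJ2c]; exact hsuv) rfl hg2u hg2v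
  have key : ∀ t : V, t ∈ hypVerts J1 → ∀ gt2, GateAt G C2 t gt2 → gt2 ≠ x0 →
      ∃ a ga1 ga2, GateAt G C1 a ga1 ∧ GateAt G C2 a ga2 ∧ ga1 ≠ x0 ∧ ga2 ≠ x0 := by
    intro t htV gt2 hgt2 hgt2ne
    obtain ⟨e, heJ, hte⟩ := htV
    have hs : s(t, Sym2.Mem.other hte) = e := Sym2.other_spec hte
    set t' := Sym2.Mem.other hte with ht'
    have hadjtt' : G.Adj t t' := by
      rw [← SimpleGraph.mem_edgeSet, hs]
      exact hypClass_edges ((SimpleGraph.mem_edgeSet G).mpr hadjx0x1) (by rw [← hJ1c]; exact heJ)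
    obtain ⟨g1t, hg1t⟩ := gate_exists hc hT hK4 hMC1 hx1 t
    obtain ⟨g1t', hg1t'⟩ := gate_exists hc hT hK4 hMC1 hx1 t'
    have hg1ne : g1t ≠ g1t' :=
      class_gates_ne hc hT hQ hK4 hK32 hMC1 hx1 hx1C (Ne.symm hx1ne)
        (by rw [← hJ1c]; exact heJ) hs.symm hg1t hg1t'
    by_cases hcase : g1t = x0
    · -- use t'
      have hg1t'ne : g1t' ≠ x0 := fun h => hg1ne (hcase.trans h.symm)
      obtain ⟨g2t', hg2t'⟩ := gate_exists hc hT hK4 hMC2 hx2 t'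
      have heq : g2t' = gt2 := by
        by_contra hne2
        have hmem := sep hc hT hQ hK4 hMC2 hx2 hy1C (Ne.symm hy1ne)
          (G.dist t' g2t') t' t g2t' gt2 rfl hadjtt'.symm hg2t' hgt2 hne2
        refine hdisj s(t', t) ?_ (by rw [hJ2c]; exact hmem)
        rw [Sym2.eq_swap, hs]
        exact heJ
      exact ⟨t', g1t', g2t', hg1t', hg2t', hg1t'ne,
        fun h => hgt2ne (heq.symm.trans h)⟩
    · exact ⟨t, g1t, gt2, hg1t, hgt2, hcase, hgt2ne⟩
  have hmain : ∃ a ga1 ga2, GateAt G C1 a ga1 ∧ GateAt G C2 a ga2 ∧ ga1 ≠ x0 ∧ ga2 ≠ x0 := by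
    by_cases hcase : g2u = x0
    · exact key v hvV g2v hg2v (fun h => hg2uv (hcase.trans h.symm))
    · exact key u huV g2u hg2u hcase
  obtain ⟨a, ga1, ga2, hga1, hga2, hga1ne, hga2ne⟩ := hmain
  have hga1C : ga1 ∈ C1 := hga1.1
  have hga2C : ga2 ∈ C2 := hga2.1
  have hd1 : G.dist a x0 = G.dist a ga1 + 1 := hga1.2 x0 hx1 (fun h => hga1ne h.symm)
  have hd2 : G.dist a x0 = G.dist a ga2 + 1 := hga2.2 x0 hx2 (fun h => hga2ne h.symm)
  have hgane : ga1 ≠ ga2 := (hcross ga1 hga1C hga1ne ga2 hga2C hga2ne).1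
  have ca1 : G.dist a ga1 = G.dist a ga1 := rfl
  obtain ⟨wst, hwst1, hwst2, hwst3⟩ := hQ a ga1 ga2 x0 (hC1.1 hga1C hx1 hga1ne)
    (hC2.1 hga2C hx2 hga2ne) hgane (by omega) (by omega)
  have hwstcorner : CornerAt G x0 ga1 ga2 wst := by
    refine ⟨hwst1.symm, hwst2.symm, fun h => hHJ wst ga1 ga2 hga1C hga1ne hga2C hga2ne h
      hwst1.symm hwst2.symm, fun h => ?_⟩
    rw [h] at hwst3; omega
  have hex : ∀ x ∈ C1, x ≠ x0 → ∀ y ∈ C2, y ≠ x0 → ∃ w, CornerAt G x0 x y w := by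
    intro x hx hxne y hy hyne
    obtain ⟨w1, hw1⟩ := corner_propagate hc hT hK4 hK32 hC1.1 hC2.1 hx1 hx2 hcross hHJ
      hga1C hga1ne hga2C hga2ne hwstcorner hx hxne
    obtain ⟨w2, hw2⟩ := corner_propagate hc hT hK4 hK32 hC2.1 hC1.1 hx2 hx1 hcross' hHJ'
      hga2C hga2ne hx hxne hw1.swap hy hyne
    exact ⟨w2, hw2.swap⟩
  have hexS : ∀ (x : C1) (y : C2), (x : V) ≠ x0 → (y : V) ≠ x0 →
      ∃ w, CornerAt G x0 (x : V) (y : V) w :=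
    fun x y hx hy => hex x x.2 hx y y.2 hy
  set F : C1 × C2 → V := fun p =>
    if h1 : (p.1 : V) = x0 then (p.2 : V)
    else if h2 : (p.2 : V) = x0 then (p.1 : V)
    else Classical.choose (hexS p.1 p.2 h1 h2) with hFdef
  have hFspec1 : ∀ p : C1 × C2, (p.1 : V) = x0 → F p = (p.2 : V) := by
    intro p h
    simp only [hFdef]
    rw [dif_pos h]
  have hFspec2 : ∀ p : C1 × C2, (p.1 : V) ≠ x0 → (p.2 : V) = x0 → F p = (p.1 : V) := by
    intro p h1 h2
    simp only [hFdef]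
    rw [dif_neg h1, dif_pos h2]
  have hFspec3 : ∀ (p : C1 × C2) (h1 : (p.1 : V) ≠ x0) (h2 : (p.2 : V) ≠ x0),
      CornerAt G x0 (p.1 : V) (p.2 : V) (F p) := by
    intro p h1 h2
    have hFeq : F p = Classical.choose (hexS p.1 p.2 h1 h2) := by
      simp only [hFdef]
      rw [dif_neg h1, dif_neg h2]
    rw [hFeq]
    exact Classical.choose_spec (hexS p.1 p.2 h1 h2)
  have hgateF1 : ∀ p : C1 × C2, GateAt G C1 (F p) (p.1 : V) := by
    intro p
    by_cases h1 : (p.1 : V) = x0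
    · rw [hFspec1 p h1, h1]
      by_cases h2 : (p.2 : V) = x0
      · rw [h2]; exact gate_self hC1.1 hx1
      · refine ⟨hx1, fun c hc' hcne => ?_⟩
        have hyx0 : G.Adj (p.2 : V) x0 := hC2.1 p.2.2 hx2 h2
        obtain ⟨hne', hnadj⟩ := hcross c hc' hcne (p.2 : V) p.2.2 h2
        rw [adj_dist_one hyx0, dist_two hc (fun h => hne' h.symm) (fun h => hnadj h.symm)
          hyx0 (hC1.1 hx1 hc' (Ne.symm hcne))]
    · by_cases h2 : (p.2 : V) = x0
      · rw [hFspec2 p h1 h2]; exact gate_self hC1.1 p.1.2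
      · have hcor := hFspec3 p h1 h2
        refine ⟨p.1.2, fun c hc' hcne => ?_⟩
        rw [adj_dist_one hcor.1]
        by_cases hcx0 : c = x0
        · subst hcx0
          exact dist_two hc hcor.2.2.2 hcor.2.2.1 hcor.1 (hC1.1 p.1.2 hx1 h1)
        · have hwc : F p ≠ c := fun h =>
            (hcross c hc' hcx0 (p.2 : V) p.2.2 h2).2 (by rw [← h]; exact hcor.2.1)
          have hnwc : ¬ G.Adj (F p) c := fun h =>
            hK4 ⟨(p.1 : V), c, x0, F p, Ne.symm hcne, h1, hcor.1.ne', hcx0,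
              fun hh => hwc hh.symm, Ne.symm hcor.2.2.2,
              hC1.1 p.1.2 hc' (Ne.symm hcne), hC1.1 p.1.2 hx1 h1, hcor.1.symm,
              hC1.1 hc' hx1 hcx0, h.symm, fun hh => hcor.2.2.1 hh.symm⟩
          exact dist_two hc hwc hnwc hcor.1 (hC1.1 p.1.2 hc' (Ne.symm hcne))
  have hgateF2 : ∀ p : C1 × C2, GateAt G C2 (F p) (p.2 : V) := by
    intro p
    by_cases h1 : (p.1 : V) = x0
    · rw [hFspec1 p h1]
      exact gate_self hC2.1 p.2.2
    · by_cases h2 : (p.2 : V) = x0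
      · rw [hFspec2 p h1 h2, h2]
        refine ⟨hx2, fun c hc' hcne => ?_⟩
        have hxx0 : G.Adj (p.1 : V) x0 := hC1.1 p.1.2 hx1 h1
        obtain ⟨hne', hnadj⟩ := hcross' c hc' hcne (p.1 : V) p.1.2 h1
        rw [adj_dist_one hxx0, dist_two hc (fun h => hne' h.symm) (fun h => hnadj h.symm)
          hxx0 (hC2.1 hx2 hc' (Ne.symm hcne))]
      · have hcor := hFspec3 p h1 h2
        refine ⟨p.2.2, fun c hc' hcne => ?_⟩
        rw [adj_dist_one hcor.2.1]
        by_cases hcx0 : c = x0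
        · subst hcx0
          exact dist_two hc hcor.2.2.2 hcor.2.2.1 hcor.2.1 (hC2.1 p.2.2 hx2 h2)
        · have hwc : F p ≠ c := fun h =>
            (hcross' c hc' hcx0 (p.1 : V) p.1.2 h1).2 (by rw [← h]; exact hcor.1)
          have hnwc : ¬ G.Adj (F p) c := fun h =>
            hK4 ⟨(p.2 : V), c, x0, F p, Ne.symm hcne, h2, hcor.2.1.ne', hcx0,
              fun hh => hwc hh.symm, Ne.symm hcor.2.2.2,
              hC2.1 p.2.2 hc' (Ne.symm hcne), hC2.1 p.2.2 hx2 h2, hcor.2.1.symm,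
              hC2.1 hc' hx2 hcx0, h.symm, fun hh => hcor.2.2.1 hh.symm⟩
          exact dist_two hc hwc hnwc hcor.2.1 (hC2.1 p.2.2 hc' (Ne.symm hcne))
  refine ⟨F, ?_, ?_, ?_, ?_⟩
  · intro p q h
    have t1 := hgateF1 p
    have t2 := hgateF1 q
    rw [h] at t1
    have s1' := hgateF2 p
    have s2 := hgateF2 q
    rw [h] at s1'
    exact Prod.ext (Subtype.ext (gate_unique t1 t2)) (Subtype.ext (gate_unique s1' s2))
  · intro x
    by_cases h1 : (x : V) = x0
    · rw [hFspec1 _ h1]; exact h1.symm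
    · exact hFspec2 (x, ⟨x0, hx2⟩) h1 rfl
  · intro y
    exact hFspec1 (⟨x0, hx1⟩, y) rfl
  · intro p q
    constructor
    · intro h
      have hor : (p.1 : V) = (q.1 : V) ∨ (p.2 : V) = (q.2 : V) := by
        by_contra hcon
        push_neg at hcon
        have m1 := sep hc hT hQ hK4 hMC1 hx1 hx1C (Ne.symm hx1ne)
          (G.dist (F p) (p.1 : V)) (F p) (F q) (p.1 : V) (q.1 : V) rfl h
          (hgateF1 p) (hgateF1 q) hcon.1
        have m2 := sep hc hT hQ hK4 hMC2 hx2 hy1C (Ne.symm hy1ne)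
          (G.dist (F p) (p.2 : V)) (F p) (F q) (p.2 : V) (q.2 : V) rfl h
          (hgateF2 p) (hgateF2 q) hcon.2
        exact hdisj _ (by rw [hJ1c]; exact m1) (by rw [hJ2c]; exact m2)
      have hnboth : ¬ (p.1 = q.1 ∧ p.2 = q.2) := by
        rintro ⟨hp1, hp2⟩
        have hpq : p = q := Prod.ext hp1 hp2
        rw [hpq] at h
        exact G.loopless.irrefl _ h
      rcases hor with h1 | h2
      · exact Or.inl ⟨Subtype.ext h1, fun he => hnboth ⟨Subtype.ext h1, he⟩⟩
      · exact Or.inr ⟨Subtype.ext h2, fun he => hnboth ⟨he, Subtype.ext h2⟩⟩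
    · rintro (⟨h1, h2⟩ | ⟨h1, h2⟩)
      · obtain ⟨x, y⟩ := p
        obtain ⟨x', y'⟩ := q
        replace h1 : x = x' := h1
        replace h2 : y ≠ y' := h2
        subst h1
        have hyy' : (y : V) ≠ (y' : V) := fun he => h2 (Subtype.ext he)
        by_cases hx0 : (x : V) = x0
        · rw [hFspec1 (x, y) hx0, hFspec1 (x, y') hx0]
          exact hC2.1 y.2 y'.2 hyy'
        · by_cases hy0 : (y : V) = x0
          · have hy'0 : (y' : V) ≠ x0 := fun he => hyy' (hy0.trans he.symm)
            rw [hFspec2 (x, y) hx0 hy0]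
            exact (hFspec3 (x, y') hx0 hy'0).1.symm
          · by_cases hy'0 : (y' : V) = x0
            · rw [hFspec2 (x, y') hx0 hy'0]
              exact (hFspec3 (x, y) hx0 hy0).1
            · exact corner_adj hc hT hK4 hK32 hC1.1 hC2.1 hx1 hx2 hcross hHJ
                x.2 hx0 y.2 hy0 y'.2 hy'0 hyy'
                (hFspec3 (x, y) hx0 hy0) (hFspec3 (x, y') hx0 hy'0)
      · obtain ⟨x, y⟩ := p
        obtain ⟨x', y'⟩ := q
        replace h1 : y = y' := h1
        replace h2 : x ≠ x' := h2
        subst h1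
        have hxx' : (x : V) ≠ (x' : V) := fun he => h2 (Subtype.ext he)
        by_cases hy0 : (y : V) = x0
        · by_cases hx0 : (x : V) = x0
          · rw [hFspec1 (x, y) hx0]
            have hx'0 : (x' : V) ≠ x0 := fun he => hxx' (hx0.trans he.symm)
            rw [hFspec2 (x', y) hx'0 hy0, hy0]
            exact hC1.1 hx1 x'.2 (Ne.symm hx'0)
          · by_cases hx'0 : (x' : V) = x0
            · rw [hFspec2 (x, y) hx0 hy0, hFspec1 (x', y) hx'0, hy0]
              exact hC1.1 x.2 hx1 hx0
            · rw [hFspec2 (x, y) hx0 hy0, hFspec2 (x', y) hx'0 hy0]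
              exact hC1.1 x.2 x'.2 hxx'
        · by_cases hx0 : (x : V) = x0
          · rw [hFspec1 (x, y) hx0]
            have hx'0 : (x' : V) ≠ x0 := fun he => hxx' (hx0.trans he.symm)
            exact (hFspec3 (x', y) hx'0 hy0).2.1.symm
          · by_cases hx'0 : (x' : V) = x0
            · rw [hFspec1 (x', y) hx'0]
              exact (hFspec3 (x, y) hx0 hy0).2.1
            · exact corner_adj hc hT hK4 hK32 hC2.1 hC1.1 hx2 hx1 hcross' hHJ'
                y.2 hy0 x.2 hx0 x'.2 hx'0 hxx'
                (hFspec3 (x, y) hx0 hy0).swap (hFspec3 (x', y) hx'0 hy0).swap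
end

section
/- Let X be a quasi-median graph of cubical dimension dim_□(X) (the maximal cardinality of a family of pairwise transverse hyperplanes), and let x, y be vertices. If N is the maximal number of pairwise non-transverse hyperplanes separating x and y, then d(x,y) ≤ dim_□(X) · N. -/
open SimpleGraph

/-- The hyperplane `J` separates `x` from `y`: every walk from `x` to `y` crosses an
edge of `J`. -/
def Separates {V : Type*} (G : SimpleGraph V) (J : Set (Sym2 V)) (x y : V) : Prop :=
  ∀ w : G.Walk x y, ∃ e ∈ w.edges, e ∈ J

section Chunk1

variable {V : Type*} {G : SimpleGraph V}

namespace QM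

/-! ### distance helpers -/

lemma dist_le_add_one (hconn : G.Connected) {a b : V} (hab : G.Adj a b) (c : V) :
    G.dist a c ≤ G.dist b c + 1 := by
  calc G.dist a c ≤ G.dist a b + G.dist b c := hconn.dist_triangle
    _ ≤ 1 + G.dist b c := by
        have : G.dist a b ≤ 1 := by
          have := SimpleGraph.dist_le (SimpleGraph.Walk.cons hab SimpleGraph.Walk.nil)
          simpa using this
        omega
    _ = G.dist b c + 1 := by omega

lemma dist_eq_zero (hconn : G.Connected) {a b : V} (h : G.dist a b = 0) : a = b :=
  (hconn.dist_eq_zero_iff).mp h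

/-- there is a neighbour one step closer -/
lemma exists_closer (hconn : G.Connected) {a u : V} (h : 0 < G.dist a u) :
    ∃ a', G.Adj a a' ∧ G.dist a' u + 1 = G.dist a u := by
  obtain ⟨p, hp⟩ := hconn.exists_walk_length_eq_dist a u
  match p, hp with
  | .nil, hp => simp at hp; simp_all
  | .cons (v := b) hadj q, hp =>
    refine ⟨b, hadj, ?_⟩
    have h1 : G.dist b u ≤ q.length := SimpleGraph.dist_le q
    have h2 : G.dist a u ≤ G.dist a b + G.dist b u := hconn.dist_triangle
    have h3 : G.dist a b ≤ 1 := by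
      have := SimpleGraph.dist_le (SimpleGraph.Walk.cons hadj SimpleGraph.Walk.nil)
      simpa using this
    have h4 : G.dist b u + 1 ≤ G.dist a u := by
      simp only [SimpleGraph.Walk.length_cons] at hp
      omega
    omega

/-! ### the clique of an edge -/

/-- The clique spanned by an edge `u v` : `u`, `v` and their common neighbours. -/
def inC (G : SimpleGraph V) (u v : V) : Set V :=
  {c | c = u ∨ c = v ∨ (G.Adj u c ∧ G.Adj v c)}

lemma u_mem_inC (u v : V) : u ∈ inC G u v := Or.inl rfl
lemma v_mem_inC (u v : V) : v ∈ inC G u v := Or.inr (Or.inl rfl)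

lemma inC_clique (hG : QuasiMedian G) {u v : V} (huv : G.Adj u v) :
    ∀ c ∈ inC G u v, ∀ c' ∈ inC G u v, c ≠ c' → G.Adj c c' := by
  rintro c hc c' hc' hne
  rcases hc with rfl | rfl | ⟨h1, h2⟩
  · rcases hc' with rfl | rfl | ⟨h1', h2'⟩
    · exact absurd rfl hne
    · exact huv
    · exact h1'
  · rcases hc' with rfl | rfl | ⟨h1', h2'⟩
    · exact huv.symm
    · exact absurd rfl hne
    · exact h2'
  · rcases hc' with rfl | rfl | ⟨h1', h2'⟩
    · exact h1.symm
    · exact h2.symm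
    · -- two common neighbours: use NoK4minus on (u,v,c,c')
      by_contra hadj
      exact hG.2.1 ⟨u, v, c, c', huv.ne, h1.ne, h1'.ne, h2.ne, h2'.ne, hne,
        huv, h1, h1', h2, h2', hadj⟩

/-- a vertex adjacent to two distinct members of the clique is adjacent to `u` (or equal). -/
lemma adj_all_of_adj_two (hG : QuasiMedian G) {u v : V} (huv : G.Adj u v)
    {c c' z : V} (hc : c ∈ inC G u v) (hc' : c' ∈ inC G u v) (hne : c ≠ c')
    (hzc : G.Adj c z) (hzc' : G.Adj c' z) {t : V} (ht : t ∈ inC G u v)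
    (htz : t ≠ z) (htc : t ≠ c) (htc' : t ≠ c') : G.Adj t z := by
  by_contra hadj
  exact hG.2.1 ⟨c, c', z, t, hne, hzc.ne, htc.symm, hzc'.ne, htc'.symm, htz.symm,
    inC_clique hG huv c hc c' hc' hne, hzc, inC_clique hG huv c hc t ht htc.symm,
    hzc', inC_clique hG huv c' hc' t ht htc'.symm, fun h => hadj h.symm⟩

end QM
end Chunk1
section Chunk2
variable {V : Type*} {G : SimpleGraph V}
namespace QM


lemma dist_le_right (hconn : G.Connected) {a b : V} (hab : G.Adj a b) (w : V) :
    G.dist w b ≤ G.dist w a + 1 := by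
  have h2 : G.dist w b ≤ G.dist w a + G.dist a b := hconn.dist_triangle
  have h3 : G.dist a b ≤ 1 := by
    have := SimpleGraph.dist_le (SimpleGraph.Walk.cons hab SimpleGraph.Walk.nil)
    simpa using this
  omega

/-- `c` is the gate of `w` in the clique of `u v`. -/
def gateSpec (G : SimpleGraph V) (u v c w : V) : Prop :=
  c ∈ inC G u v ∧ ∀ c' ∈ inC G u v, c' ≠ c → G.dist w c' = G.dist w c + 1

lemma exists_gate (hG : QuasiMedian G) {u v : V} (huv : G.Adj u v) (w : V) :
    ∃ c, gateSpec G u v c w := by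
  have hconn := hG.1
  -- minimal distance to the clique
  have hne : ∃ n, ∃ c ∈ inC G u v, G.dist w c = n := ⟨_, u, u_mem_inC u v, rfl⟩
  classical
  set m := Nat.find hne with hm
  obtain ⟨c₀, hc₀, hd₀⟩ := Nat.find_spec hne
  have hmin : ∀ c ∈ inC G u v, m ≤ G.dist w c := by
    intro c hc
    by_contra h
    push_neg at h
    exact Nat.find_min hne h ⟨c, hc, rfl⟩
  -- uniqueness of the minimiser
  have huniq : ∀ c ∈ inC G u v, c ≠ c₀ → G.dist w c ≠ m := by
    intro c hc hne' heq
    -- two minimisers c₀ c: triangle condition gives closer common neighbour in clique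
    have hmpos : 0 < m := by
      rcases Nat.eq_zero_or_pos m with h0 | h
      · exfalso
        have h1 : w = c₀ := dist_eq_zero hconn (by omega)
        have h2 : w = c := dist_eq_zero hconn (by omega)
        exact hne' (h2 ▸ h1 ▸ rfl)
      · exact h
    obtain ⟨z, hz1, hz2, hz3⟩ := hG.2.2.2.1 w c₀ c
      (inC_clique hG huv c₀ hc₀ c hc (Ne.symm hne')) (by omega)
    have hzdist : G.dist w z + 1 = m := by omega
    -- z is adjacent to everything in the clique, hence in the clique: contradiction
    have hz_ne : ∀ t ∈ inC G u v, z ≠ t := by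
      intro t ht hzt
      subst hzt
      have := hmin z ht
      omega
    have hzu : G.Adj u z ∨ z = u := by
      by_cases h : u = c₀ ∨ u = c
      · rcases h with rfl | rfl
        · exact Or.inl hz1
        · exact Or.inl hz2
      · push_neg at h
        exact Or.inl (adj_all_of_adj_two hG huv hc₀ hc (fun hh => hne' hh.symm) hz1 hz2
          (u_mem_inC u v) (Ne.symm (hz_ne u (u_mem_inC u v))) h.1 h.2)
    have hzv : G.Adj v z ∨ z = v := by
      by_cases h : v = c₀ ∨ v = c
      · rcases h with rfl | rfl
        · exact Or.inl hz1
        · exact Or.inl hz2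
      · push_neg at h
        exact Or.inl (adj_all_of_adj_two hG huv hc₀ hc (fun hh => hne' hh.symm) hz1 hz2
          (v_mem_inC u v) (Ne.symm (hz_ne v (v_mem_inC u v))) h.1 h.2)
    rcases hzu with hzu | hzu
    · rcases hzv with hzv | hzv
      · exact (hz_ne z (Or.inr (Or.inr ⟨hzu, hzv⟩))) rfl
      · exact (hz_ne v (v_mem_inC u v)) hzv
    · exact (hz_ne u (u_mem_inC u v)) hzu
  refine ⟨c₀, hc₀, fun c' hc' hnec => ?_⟩
  have h1 : m ≤ G.dist w c' := hmin c' hc'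
  have h2 : G.dist w c' ≠ m := huniq c' hc' hnec
  have h3 : G.dist w c' ≤ G.dist w c₀ + 1 :=
    dist_le_right hconn (inC_clique hG huv c₀ hc₀ c' hc' (fun h => hnec h.symm)) w
  omega

open Classical in
/-- the gate of `w` in the clique of the edge `u v`. -/
noncomputable def gate (G : SimpleGraph V) (u v w : V) : V :=
  if h : ∃ c, gateSpec G u v c w then h.choose else w

lemma gate_spec (hG : QuasiMedian G) {u v : V} (huv : G.Adj u v) (w : V) :
    gateSpec G u v (gate G u v w) w := by
  rw [gate, dif_pos (exists_gate hG huv w)]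
  exact (exists_gate hG huv w).choose_spec

lemma gate_mem (hG : QuasiMedian G) {u v : V} (huv : G.Adj u v) (w : V) :
    gate G u v w ∈ inC G u v := (gate_spec hG huv w).1

lemma dist_gate_other (hG : QuasiMedian G) {u v : V} (huv : G.Adj u v) (w : V)
    {c : V} (hc : c ∈ inC G u v) (hne : c ≠ gate G u v w) :
    G.dist w c = G.dist w (gate G u v w) + 1 := (gate_spec hG huv w).2 c hc hne

lemma lvl_le (hG : QuasiMedian G) {u v : V} (huv : G.Adj u v) (w : V)
    {c : V} (hc : c ∈ inC G u v) :
    G.dist w (gate G u v w) ≤ G.dist w c := by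
  by_cases h : c = gate G u v w
  · rw [h]
  · rw [dist_gate_other hG huv w hc h]; omega

/-- criterion : if `dist w u = r`, `dist w v = r+1` then the gate of `w` is `u`. -/
lemma gate_eq_left (hG : QuasiMedian G) {u v : V} (huv : G.Adj u v) {w : V} {r : ℕ}
    (h1 : G.dist w u = r) (h2 : G.dist w v = r + 1) : gate G u v w = u := by
  by_contra hne
  have hu := dist_gate_other hG huv w (u_mem_inC u v) (fun h => hne h.symm)
  -- dist w gate = r - 1
  by_cases hv : gate G u v w = v
  · rw [hv] at hu; omega
  · have hgv : G.Adj v (gate G u v w) := by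
      have := gate_mem hG huv w
      rcases this with h | h | ⟨ha, hb⟩
      · exact absurd h.symm (fun hh => hne hh.symm)
      · exact absurd h hv
      · exact hb
    have : G.dist w v ≤ G.dist w (gate G u v w) + 1 :=
      dist_le_right hG.1 hgv.symm w
    omega

lemma gate_eq_right (hG : QuasiMedian G) {u v : V} (huv : G.Adj u v) {w : V} {r : ℕ}
    (h1 : G.dist w v = r) (h2 : G.dist w u = r + 1) : gate G u v w = v := by
  by_contra hne
  have hu := dist_gate_other hG huv w (v_mem_inC u v) (fun h => hne h.symm)
  by_cases hv : gate G u v w = u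
  · rw [hv] at hu; omega
  · have hgv : G.Adj u (gate G u v w) := by
      have := gate_mem hG huv w
      rcases this with h | h | ⟨ha, hb⟩
      · exact absurd h hv
      · exact absurd h.symm (fun hh => hne hh.symm)
      · exact ha
    have : G.dist w u ≤ G.dist w (gate G u v w) + 1 :=
      dist_le_right hG.1 hgv.symm w
    omega

lemma gate_base_left (hG : QuasiMedian G) {u v : V} (huv : G.Adj u v) :
    gate G u v u = u :=
  gate_eq_left hG huv (SimpleGraph.dist_self)
    (by have := SimpleGraph.dist_eq_one_iff_adj.mpr huv; omega)

lemma gate_base_right (hG : QuasiMedian G) {u v : V} (huv : G.Adj u v) :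
    gate G u v v = v :=
  gate_eq_right hG huv (SimpleGraph.dist_self)
    (by have := SimpleGraph.dist_eq_one_iff_adj.mpr huv.symm; omega)

/-- crossing pattern: adjacent vertices with different gates have equal levels. -/
lemma cross_pattern (hG : QuasiMedian G) {u v : V} (huv : G.Adj u v) {a b : V}
    (hab : G.Adj a b) (hg : gate G u v a ≠ gate G u v b) :
    G.dist a (gate G u v a) = G.dist b (gate G u v b) := by
  have h1 : G.dist a (gate G u v b) = G.dist a (gate G u v a) + 1 :=
    dist_gate_other hG huv a (gate_mem hG huv b) (fun h => hg h.symm)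
  have h2 : G.dist b (gate G u v a) = G.dist b (gate G u v b) + 1 :=
    dist_gate_other hG huv b (gate_mem hG huv a) hg
  have h3 : G.dist a (gate G u v b) ≤ G.dist b (gate G u v b) + 1 := by
    have := dist_le_add_one hG.1 hab (gate G u v b); omega
  have h4 : G.dist b (gate G u v a) ≤ G.dist a (gate G u v a) + 1 := by
    have := dist_le_add_one hG.1 hab.symm (gate G u v a); omega
  omega

end QM
end Chunk2
section Chunk3
variable {V : Type*} {G : SimpleGraph V}
namespace QM

lemma gate_eq_of_closer (hG : QuasiMedian G) {u v : V} (huv : G.Adj u v) {z a : V}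
    (hza : G.Adj z a) (hlt : G.dist z (gate G u v a) < G.dist a (gate G u v a)) :
    gate G u v z = gate G u v a := by
  by_contra h
  have h1 := cross_pattern hG huv hza h
  have h2 := lvl_le hG huv z (gate_mem hG huv a)
  omega

/-- no triangle with two vertices in one sector and the third in another. -/
lemma no_badtri (hG : QuasiMedian G) {u v : V} (huv : G.Adj u v) {a b c : V}
    (hab : G.Adj a b) (hbc : G.Adj b c) (hac : G.Adj a c)
    (h1 : gate G u v a ≠ gate G u v b) (h2 : gate G u v c = gate G u v a) : False := by
  have hconn := hG.1
  have hp1 : G.dist a (gate G u v a) = G.dist b (gate G u v b) :=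
    cross_pattern hG huv hab h1
  have hgbc : gate G u v b ≠ gate G u v c := fun h => h1 (h2 ▸ h.symm)
  have hp2 : G.dist b (gate G u v b) = G.dist c (gate G u v c) :=
    cross_pattern hG huv hbc hgbc
  set k := G.dist a (gate G u v a) with hk
  rcases Nat.eq_zero_or_pos k with h0 | hpos
  · have ha : a = gate G u v a := dist_eq_zero hconn (by omega)
    have hc : c = gate G u v c := dist_eq_zero hconn (by omega)
    exact hac.ne (by rw [ha, hc, h2])
  · have hcA : G.dist c (gate G u v a) = k := by rw [← h2]; omega
    obtain ⟨z, hz1, hz2, hz3⟩ := hG.2.2.2.1 (gate G u v a) a c hac (by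
      rw [SimpleGraph.dist_comm (u := gate G u v a) (v := a),
        SimpleGraph.dist_comm (u := gate G u v a) (v := c), hcA])
    rw [SimpleGraph.dist_comm (v := a)] at hz3
    have hzd : G.dist z (gate G u v a) = k - 1 := by rw [SimpleGraph.dist_comm]; omega
    have hgz : gate G u v z = gate G u v a :=
      gate_eq_of_closer hG huv hz1.symm (by omega)
    have hlz : G.dist z (gate G u v z) = k - 1 := by rw [hgz]; exact hzd
    have hnzb : ¬ G.Adj z b := by
      intro hzb
      have := cross_pattern hG huv hzb (by rw [hgz]; exact h1)
      omega
    have hznb : z ≠ b := by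
      intro h; rw [h] at hgz; exact h1 hgz.symm
    refine hG.2.1 ⟨a, c, z, b, hac.ne, ?_, ?_, ?_, ?_, hznb, hac, hz1, hab, hz2, hbc.symm, hnzb⟩
    · intro h
      have hza : G.dist z (gate G u v a) = k := by rw [← h]
      omega
    · intro h; rw [h] at h1; exact h1 rfl
    · intro h
      rw [h] at hcA
      omega
    · intro h; rw [h] at h2; exact h1 h2.symm

/-- no two vertices of one sector adjacent to a common vertex of another sector. -/
lemma no_cherry (hG : QuasiMedian G) {u v : V} (huv : G.Adj u v) {p q b : V}
    (hpb : G.Adj p b) (hqb : G.Adj q b) (hpq : p ≠ q)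
    (hgpq : gate G u v p = gate G u v q) (hgb : gate G u v b ≠ gate G u v p) : False := by
  have hconn := hG.1
  by_cases hadj : G.Adj p q
  · exact no_badtri hG huv hpb hqb.symm hadj (Ne.symm hgb) hgpq.symm
  have hp1 : G.dist p (gate G u v p) = G.dist b (gate G u v b) :=
    cross_pattern hG huv hpb (Ne.symm hgb)
  have hq1 : G.dist q (gate G u v q) = G.dist b (gate G u v b) :=
    cross_pattern hG huv hqb (by rw [← hgpq]; exact Ne.symm hgb)
  set k := G.dist p (gate G u v p) with hk
  have hqk : G.dist q (gate G u v q) = k := by omega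
  have hbk : G.dist b (gate G u v b) = k := by omega
  have hdqA : G.dist q (gate G u v p) = k := by rw [hgpq]; omega
  have hdbA : G.dist b (gate G u v p) = k + 1 := by
    have := dist_gate_other hG huv b (gate_mem hG huv p) (Ne.symm hgb)
    omega
  have hdpB : G.dist p (gate G u v b) = k + 1 := by
    have := dist_gate_other hG huv p (gate_mem hG huv b) hgb
    omega
  have hdqB : G.dist q (gate G u v b) = k + 1 := by
    have := dist_gate_other hG huv q (gate_mem hG huv b)
      (fun h => hgb (h.trans hgpq.symm))
    omega
  -- the vertex w below p, q
  obtain ⟨w, hw1, hw2, hw3⟩ := hG.2.2.2.2 (gate G u v p) p q b hpb hqb hpq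
    (by rw [SimpleGraph.dist_comm (v := p), SimpleGraph.dist_comm (v := q), hdqA]; try omega)
    (by rw [SimpleGraph.dist_comm (v := b), SimpleGraph.dist_comm (v := p), hdbA]; try omega)
  rw [SimpleGraph.dist_comm (v := b), hdbA] at hw3
  rw [SimpleGraph.dist_comm (v := w)] at hw3
  have hdwA : G.dist w (gate G u v p) = k - 1 := by omega
  have hkpos : 1 ≤ k := by omega
  have hgw : gate G u v w = gate G u v p :=
    gate_eq_of_closer hG huv hw1.symm (by omega)
  have hlw : G.dist w (gate G u v w) = k - 1 := by rw [hgw]; exact hdwA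
  have hnwb : ¬ G.Adj w b := by
    intro hwb
    exact no_badtri hG huv hwb hpb.symm hw1.symm
      (by rw [hgw]; exact Ne.symm hgb) hgw.symm
  have hwb : w ≠ b := by
    intro h; rw [h] at hgw; exact hgb hgw
  have hdwB : G.dist w (gate G u v b) = k := by
    have := dist_gate_other hG huv w (gate_mem hG huv b)
      (fun h => hgb (h.trans hgw))
    omega
  -- the vertex v' below b, w
  obtain ⟨v', hv1, hv2, hv3⟩ := hG.2.2.2.2 (gate G u v b) b w p hpb.symm hw1.symm
    (Ne.symm hwb)
    (by rw [SimpleGraph.dist_comm (v := b), SimpleGraph.dist_comm (v := w), hdwB]; try omega)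
    (by rw [SimpleGraph.dist_comm (v := p), SimpleGraph.dist_comm (v := b), hdpB]; try omega)
  rw [SimpleGraph.dist_comm (v := p), hdpB] at hv3
  rw [SimpleGraph.dist_comm (v := v')] at hv3
  have hdv'B : G.dist v' (gate G u v b) = k - 1 := by omega
  have hgv' : gate G u v v' = gate G u v b :=
    gate_eq_of_closer hG huv hv1.symm (by omega)
  have hnv'p : ¬ G.Adj v' p := by
    intro hvp
    exact no_badtri hG huv hv2 hvp hw1.symm
      (by rw [hgw, hgv']; exact Ne.symm hgb) hgw.symm
  have hnv'q : ¬ G.Adj v' q := by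
    intro hvq
    exact no_badtri hG huv hv2 hvq hw2.symm
      (by rw [hgw, hgv']; exact Ne.symm hgb) (by rw [hgw, ← hgpq])
  refine hG.2.2.1 ⟨p, q, v', w, b, hpq, ?_, ?_, hwb, hw1, hpb, hw2, hqb, hv2.symm, hv1.symm,
    hadj, fun h => hnv'p h.symm, fun h => hnv'q h.symm, hnwb⟩
  · intro h; apply hgb; rw [← hgv', ← h]
  · intro h; apply hgb; rw [← hgv', ← h, ← hgpq]
end QM
end Chunk3
section Chunk4
variable {V : Type*} {G : SimpleGraph V}
namespace QM

/-- no square with one edge crossing sectors and the opposite edge inside one sector -/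
lemma no_badsq (hG : QuasiMedian G) {u v : V} (huv : G.Adj u v) {α β γ δ : V}
    (hαβ : G.Adj α β) (hβγ : G.Adj β γ) (hγδ : G.Adj γ δ) (hδα : G.Adj δ α)
    (hαγ : α ≠ γ) (hβδ : β ≠ δ)
    (h1 : gate G u v α ≠ gate G u v β) (h2 : gate G u v γ = gate G u v δ) : False := by
  have hconn := hG.1
  have hpαβ : G.dist α (gate G u v α) = G.dist β (gate G u v β) :=
    cross_pattern hG huv hαβ h1
  set k := G.dist α (gate G u v α) with hk
  by_cases hΓA : gate G u v γ = gate G u v α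
  · exact no_cherry hG huv hαβ hβγ.symm hαγ hΓA.symm (fun h => h1 h.symm)
  by_cases hΓB : gate G u v γ = gate G u v β
  · exact no_cherry hG huv hαβ.symm hδα hβδ (by rw [← h2, hΓB]) h1
  -- γ, δ lie in a third sector Γ := gate γ
  have hgδα : gate G u v δ ≠ gate G u v α := by rw [← h2]; exact hΓA
  have hgβγ : gate G u v β ≠ gate G u v γ := Ne.symm hΓB
  have hpαδ : G.dist δ (gate G u v δ) = k := by
    have := cross_pattern hG huv hδα.symm (Ne.symm hgδα)
    omega
  have hpβγ : G.dist γ (gate G u v γ) = k := by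
    have := cross_pattern hG huv hβγ hgβγ
    omega
  have hdαΓ : G.dist α (gate G u v γ) = k + 1 := by
    have := dist_gate_other hG huv α (gate_mem hG huv γ) hΓA
    omega
  have hdβΓ : G.dist β (gate G u v γ) = k + 1 := by
    have := dist_gate_other hG huv β (gate_mem hG huv γ) hΓB
    omega
  obtain ⟨h', hh1, hh2, hh3⟩ := hG.2.2.2.1 (gate G u v γ) α β hαβ
    (by rw [SimpleGraph.dist_comm (v := α), SimpleGraph.dist_comm (v := β), hdαΓ, hdβΓ])
  rw [SimpleGraph.dist_comm (v := α), hdαΓ, SimpleGraph.dist_comm (v := h')] at hh3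
  have hdh'Γ : G.dist h' (gate G u v γ) = k := by omega
  have hgh : gate G u v h' = gate G u v γ := by
    by_contra hne
    have hlvl : G.dist h' (gate G u v h') = k := by
      by_cases hA : gate G u v h' = gate G u v α
      · have := cross_pattern hG huv hh2.symm (by rw [hA]; exact h1)
        omega
      · have := cross_pattern hG huv hh1.symm hA
        omega
    have := dist_gate_other hG huv h' (gate_mem hG huv γ) (Ne.symm hne)
    omega
  by_cases hhγ : h' = γ
  · subst hhγ
    exact no_badtri hG huv hh1.symm hδα.symm hγδ hΓA h2.symm
  · exact no_cherry hG huv hh2.symm hβγ.symm hhγ hgh (by rw [hgh]; exact hgβγ)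

end QM
end Chunk4
section Chunk5
variable {V : Type*} {G : SimpleGraph V}
namespace QM

lemma adj_dist_le (hconn : G.Connected) {a b : V} (hab : G.Adj a b) (w : V) :
    G.dist a w ≤ G.dist b w + 1 := by
  have h2 : G.dist a w ≤ G.dist a b + G.dist b w := hconn.dist_triangle
  have h3 : G.dist a b ≤ 1 := by
    have := SimpleGraph.dist_le (SimpleGraph.Walk.cons hab SimpleGraph.Walk.nil)
    simpa using this
  omega

lemma hypStep_symm {e e' : Sym2 V} (h : hypStep G e e') : hypStep G e' e := by
  rcases h with ⟨a, b, c, h1, h2, h3, he, he'⟩ | ⟨a, b, c, d, h1, h2, h3, h4, h5, h6, he, he'⟩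
  · exact Or.inl ⟨a, b, c, h1, h2, h3, he', he⟩
  · exact Or.inr ⟨d, c, b, a, h3.symm, h2.symm, h1.symm, h4.symm, h6.symm, h5.symm,
      he', he⟩

lemma mem_hypClass_self (e : Sym2 V) : e ∈ hypClass G e := Relation.ReflTransGen.refl

lemma hypClass_mono {e e' : Sym2 V} (h : e' ∈ hypClass G e) :
    hypClass G e' ⊆ hypClass G e := fun _ h' => Relation.ReflTransGen.trans h h'

lemma hypClass_eq_of_mem {e e' : Sym2 V} (h : e' ∈ hypClass G e) :
    hypClass G e' = hypClass G e := by
  have hrev : e ∈ hypClass G e' := by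
    induction h with
    | refl => exact Relation.ReflTransGen.refl
    | tail _ hstep ih => exact Relation.ReflTransGen.head (hypStep_symm hstep) ih
  exact Set.Subset.antisymm (hypClass_mono h) (hypClass_mono hrev)

lemma mem_hypClass_step {e₀ e e' : Sym2 V} (h : e ∈ hypClass G e₀) (hs : hypStep G e e') :
    e' ∈ hypClass G e₀ := Relation.ReflTransGen.tail h hs

lemma hypClass_disjoint {e e' f : Sym2 V} (h : hypClass G e ≠ hypClass G e')
    (hf : f ∈ hypClass G e) (hf' : f ∈ hypClass G e') : False :=
  h ((hypClass_eq_of_mem hf).symm.trans (hypClass_eq_of_mem hf'))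

/-- the Djokovic-Winkler style lemma: an edge `a b` in crossing position relative to
the edge `u' v'` lies in its hyperplane class.  Induction on the distance. -/
lemma theta (hG : QuasiMedian G) : ∀ k : ℕ, ∀ a b u' v' : V, G.Adj u' v' → G.Adj a b →
    G.dist a u' = k → G.dist b v' = k → G.dist a v' = k + 1 → G.dist b u' = k + 1 →
    s(a, b) ∈ hypClass G s(u', v') := by
  intro k
  induction k with
  | zero =>
    intro a b u' v' huv hab h1 h2 h3 h4
    have ha : a = u' := dist_eq_zero hG.1 h1
    have hb : b = v' := dist_eq_zero hG.1 h2
    rw [ha, hb]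
    exact mem_hypClass_self _
  | succ n ih =>
    intro a b u' v' huv hab h1 h2 h3 h4
    obtain ⟨a', ha'1, ha'2⟩ := exists_closer hG.1 (u := u') (a := a) (by omega)
    rw [h1] at ha'2
    have ha'u : G.dist a' u' = n := by omega
    have ha'v : G.dist a' v' = n + 1 := by
      have hle : G.dist a' v' ≤ n + 1 := by
        have := dist_le_right hG.1 huv a'
        omega
      have hge : n + 1 ≤ G.dist a' v' := by
        have := adj_dist_le hG.1 ha'1 v'
        omega
      omega
    have ha'b : a' ≠ b := by
      intro h; rw [h] at ha'u; omega
    obtain ⟨w, hw1, hw2, hw3⟩ := hG.2.2.2.2 v' a' b a ha'1.symm hab.symm ha'b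
      (by rw [SimpleGraph.dist_comm (v := a'), SimpleGraph.dist_comm (v := b), ha'v, h2])
      (by rw [SimpleGraph.dist_comm (v := a), SimpleGraph.dist_comm (v := a'), h3, ha'v])
    rw [SimpleGraph.dist_comm (v := a), h3, SimpleGraph.dist_comm (v := w)] at hw3
    have hwv : G.dist w v' = n := by omega
    have hwu : G.dist w u' = n + 1 := by
      have hle : G.dist w u' ≤ n + 1 := by
        have := adj_dist_le hG.1 hw1.symm u'
        omega
      have hge : n + 1 ≤ G.dist w u' := by
        have := adj_dist_le hG.1 hw2 u'
        omega
      omega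
    have hmem : s(a', w) ∈ hypClass G s(u', v') :=
      ih a' w u' v' huv hw1 ha'u hwv ha'v hwu
    refine mem_hypClass_step hmem (Or.inr ⟨a', w, b, a, hw1, hw2.symm, hab.symm, ha'1,
      ha'b, ?_, rfl, rfl⟩)
    intro h
    rw [← h] at h3
    omega

/-- every edge of the clique of `u v` is in the hyperplane of `u v`. -/
lemma clique_edge_mem (hG : QuasiMedian G) {u v : V} (huv : G.Adj u v) {A B : V}
    (hA : A ∈ inC G u v) (hB : B ∈ inC G u v) (hAB : A ≠ B) :
    s(A, B) ∈ hypClass G s(u, v) := by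
  have hC : ∀ c : V, G.Adj u c → G.Adj v c →
      s(u, c) ∈ hypClass G s(u, v) ∧ s(v, c) ∈ hypClass G s(u, v) := by
    intro c h1 h2
    constructor
    · exact mem_hypClass_step (mem_hypClass_self _)
        (Or.inl ⟨u, v, c, huv, h2, h1, by left; rfl, by right; right; rfl⟩)
    · exact mem_hypClass_step (mem_hypClass_self _)
        (Or.inl ⟨u, v, c, huv, h2, h1, by left; rfl, by right; left; rfl⟩)
  rcases hA with rfl | rfl | ⟨hA1, hA2⟩
  · rcases hB with rfl | rfl | ⟨hB1, hB2⟩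
    · exact absurd rfl hAB
    · exact mem_hypClass_self _
    · exact (hC B hB1 hB2).1
  · rcases hB with rfl | rfl | ⟨hB1, hB2⟩
    · have h : s(A, B) = s(B, A) := Sym2.eq_swap
      rw [h]
      exact mem_hypClass_self _
    · exact absurd rfl hAB
    · exact (hC B hB1 hB2).2
  · rcases hB with rfl | rfl | ⟨hB1, hB2⟩
    · have h : s(A, B) = s(B, A) := Sym2.eq_swap
      rw [h]
      exact (hC A hA1 hA2).1
    · have h : s(A, B) = s(B, A) := Sym2.eq_swap
      rw [h]
      exact (hC A hA1 hA2).2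
    · have hABadj : G.Adj A B := inC_clique hG huv A (Or.inr (Or.inr ⟨hA1, hA2⟩))
        B (Or.inr (Or.inr ⟨hB1, hB2⟩)) hAB
      refine mem_hypClass_step (hC A hA1 hA2).1
        (Or.inl ⟨u, A, B, hA1, hABadj, hB1, by left; rfl, by right; left; rfl⟩)

/-- an edge crossing two sectors of the clique of `u v` is in the hyperplane of `u v`. -/
lemma cross_mem (hG : QuasiMedian G) {u v : V} (huv : G.Adj u v) {a b : V}
    (hab : G.Adj a b) (hg : gate G u v a ≠ gate G u v b) :
    s(a, b) ∈ hypClass G s(u, v) := by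
  have hpat := cross_pattern hG huv hab hg
  have h3 : G.dist a (gate G u v b) = G.dist a (gate G u v a) + 1 :=
    dist_gate_other hG huv a (gate_mem hG huv b) (fun h => hg h.symm)
  have h4 : G.dist b (gate G u v a) = G.dist b (gate G u v b) + 1 :=
    dist_gate_other hG huv b (gate_mem hG huv a) hg
  have hadj : G.Adj (gate G u v a) (gate G u v b) :=
    inC_clique hG huv _ (gate_mem hG huv a) _ (gate_mem hG huv b) hg
  have hmem : s(a, b) ∈ hypClass G s(gate G u v a, gate G u v b) :=
    theta hG (G.dist a (gate G u v a)) a b _ _ hadj hab rfl (by omega) (by omega) (by omega)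
  have hcl : s(gate G u v a, gate G u v b) ∈ hypClass G s(u, v) :=
    clique_edge_mem hG huv (gate_mem hG huv a) (gate_mem hG huv b) hg
  rw [← hypClass_eq_of_mem hcl]
  exact hmem

/-- conversely, every member of the hyperplane of `u v` is an edge crossing two
sectors. -/
lemma class_edge_cross (hG : QuasiMedian G) {u v : V} (huv : G.Adj u v) {e : Sym2 V}
    (he : e ∈ hypClass G s(u, v)) :
    ∃ a b : V, e = s(a, b) ∧ G.Adj a b ∧ gate G u v a ≠ gate G u v b := by
  induction he with
  | refl =>
    exact ⟨u, v, rfl, huv, by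
      rw [gate_base_left hG huv, gate_base_right hG huv]; exact huv.ne⟩
  | tail hmem hstep ih =>
    obtain ⟨p, q, hpq, hadj, hg⟩ := ih
    -- a symmetric "crossing" property of an unordered pair
    have crossing : ∀ x y : V, s(p, q) = s(x, y) → G.Adj x y ∧
        gate G u v x ≠ gate G u v y := by
      intro x y hxy
      rcases Sym2.eq_iff.mp hxy.symm with ⟨rfl, rfl⟩ | ⟨rfl, rfl⟩
      · exact ⟨hadj, hg⟩
      · exact ⟨hadj.symm, fun h => hg h.symm⟩
    rcases hstep with ⟨a, b, c, h1, h2, h3, he1, he2⟩ |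
      ⟨a, b, c, d, h1, h2, h3, h4, h5, h6, he1, he2⟩
    · -- triangle case : all three edges cross
      simp only [Set.mem_insert_iff, Set.mem_singleton_iff] at he1 he2
      have main : gate G u v a ≠ gate G u v b →
          gate G u v a ≠ gate G u v b ∧ gate G u v b ≠ gate G u v c ∧
            gate G u v a ≠ gate G u v c := by
        intro h
        refine ⟨h, ?_, ?_⟩
        · intro heq
          exact no_badtri hG huv h1.symm h3 h2 (Ne.symm h) heq.symm
        · intro heq
          exact no_badtri hG huv h1 h2 h3 h heq.symm
      have hall : gate G u v a ≠ gate G u v b ∧ gate G u v b ≠ gate G u v c ∧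
          gate G u v a ≠ gate G u v c := by
        rcases he1 with h | h | h
        · exact main (crossing a b (hpq.symm.trans h)).2
        · have hbc := (crossing b c (hpq.symm.trans h)).2
          exact main (fun heq => no_badtri hG huv h2 h3.symm h1.symm hbc heq)
        · have hac := (crossing a c (hpq.symm.trans h)).2
          exact main (fun heq => no_badtri hG huv h3 h2.symm h1 hac heq.symm)
      rcases he2 with h | h | h
      · exact ⟨a, b, h, h1, hall.1⟩
      · exact ⟨b, c, h, h2, hall.2.1⟩
      · exact ⟨a, c, h, h3, hall.2.2⟩
    · -- square case
      have hgab := (crossing a b (hpq.symm.trans he1)).2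
      have hgdc : gate G u v d ≠ gate G u v c := by
        intro heq
        exact no_badsq hG huv h1 h2 h3 h4 h5 h6 hgab heq.symm
      exact ⟨d, c, he2, h3.symm, hgdc⟩

end QM
end Chunk5
section Chunk6
variable {V : Type*} {G : SimpleGraph V}
namespace QM

/-- adjacency within the carrier of a hyperplane -/
def carrierAdj (G : SimpleGraph V) (J : Set (Sym2 V)) (s t : V) : Prop :=
  G.Adj s t ∧ s ∈ hypVerts J ∧ t ∈ hypVerts J

lemma gates_ne_of_mem (hG : QuasiMedian G) {u v : V} (huv : G.Adj u v) {a b : V}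
    (hmem : s(a, b) ∈ hypClass G s(u, v)) : gate G u v a ≠ gate G u v b := by
  obtain ⟨x, y, heq, hadj, hg⟩ := class_edge_cross hG huv hmem
  rcases Sym2.eq_iff.mp heq with ⟨rfl, rfl⟩ | ⟨rfl, rfl⟩
  · exact hg
  · exact fun h => hg h.symm

lemma adj_of_mem (hG : QuasiMedian G) {u v : V} (huv : G.Adj u v) {a b : V}
    (hmem : s(a, b) ∈ hypClass G s(u, v)) : G.Adj a b := by
  obtain ⟨x, y, heq, hadj, hg⟩ := class_edge_cross hG huv hmem
  rcases Sym2.eq_iff.mp heq with ⟨rfl, rfl⟩ | ⟨rfl, rfl⟩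
  · exact hadj
  · exact hadj.symm

/-- every vertex of the carrier can be reached from `u` inside the carrier. -/
lemma carrier_reach (hG : QuasiMedian G) {u v : V} (huv : G.Adj u v) :
    ∀ e ∈ hypClass G s(u, v), ∀ z ∈ e,
      Relation.ReflTransGen (carrierAdj G (hypClass G s(u, v))) u z := by
  intro e he
  induction he with
  | refl =>
    intro z hz
    have hu : u ∈ hypVerts (hypClass G s(u, v)) :=
      ⟨s(u, v), mem_hypClass_self _, Sym2.mem_mk_left u v⟩
    have hv : v ∈ hypVerts (hypClass G s(u, v)) :=
      ⟨s(u, v), mem_hypClass_self _, Sym2.mem_mk_right u v⟩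
    rcases Sym2.mem_iff.mp hz with rfl | rfl
    · exact Relation.ReflTransGen.refl
    · exact Relation.ReflTransGen.single ⟨huv, hu, hv⟩
  | tail hmem hstep ih =>
    rename_i e₁ e₂
    have he₂ : e₂ ∈ hypClass G s(u, v) := mem_hypClass_step hmem hstep
    rcases hstep with ⟨a, b, c, h1, h2, h3, he1, he2⟩ |
      ⟨a, b, c, d, h1, h2, h3, h4, h5, h6, he1, he2⟩
    · -- triangle
      have hedges : ∀ f ∈ ({s(a, b), s(b, c), s(a, c)} : Set (Sym2 V)),
          f ∈ hypClass G s(u, v) :=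
        fun f hf => mem_hypClass_step hmem (Or.inl ⟨a, b, c, h1, h2, h3, he1, hf⟩)
      have hva : a ∈ hypVerts (hypClass G s(u, v)) :=
        ⟨s(a, b), hedges _ (by left; rfl), Sym2.mem_mk_left a b⟩
      have hvb : b ∈ hypVerts (hypClass G s(u, v)) :=
        ⟨s(a, b), hedges _ (by left; rfl), Sym2.mem_mk_right a b⟩
      have hvc : c ∈ hypVerts (hypClass G s(u, v)) :=
        ⟨s(a, c), hedges _ (by right; right; rfl), Sym2.mem_mk_right a c⟩
      have key : Relation.ReflTransGen (carrierAdj G (hypClass G s(u, v))) u a ∧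
          Relation.ReflTransGen (carrierAdj G (hypClass G s(u, v))) u b ∧
          Relation.ReflTransGen (carrierAdj G (hypClass G s(u, v))) u c := by
        rcases he1 with h | h | h
        · have ra := ih a (by rw [h]; exact Sym2.mem_mk_left a b)
          have rb := ih b (by rw [h]; exact Sym2.mem_mk_right a b)
          exact ⟨ra, rb, rb.tail ⟨h2, hvb, hvc⟩⟩
        · have rb := ih b (by rw [h]; exact Sym2.mem_mk_left b c)
          have rc := ih c (by rw [h]; exact Sym2.mem_mk_right b c)
          exact ⟨rb.tail ⟨h1.symm, hvb, hva⟩, rb, rc⟩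
        · have ra := ih a (by rw [h]; exact Sym2.mem_mk_left a c)
          have rc := ih c (by rw [h]; exact Sym2.mem_mk_right a c)
          exact ⟨ra, ra.tail ⟨h1, hva, hvb⟩, rc⟩
      intro z hz
      rcases he2 with h | h | h
      · rw [h] at hz
        rcases Sym2.mem_iff.mp hz with rfl | rfl
        · exact key.1
        · exact key.2.1
      · rw [h] at hz
        rcases Sym2.mem_iff.mp hz with rfl | rfl
        · exact key.2.1
        · exact key.2.2
      · rw [h] at hz
        rcases Sym2.mem_iff.mp hz with rfl | rfl
        · exact key.1
        · exact key.2.2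
    · -- square
      have he₁' : s(a, b) ∈ hypClass G s(u, v) := by rw [← he1]; exact hmem
      have hva : a ∈ hypVerts (hypClass G s(u, v)) := ⟨s(a, b), he₁', Sym2.mem_mk_left a b⟩
      have hvb : b ∈ hypVerts (hypClass G s(u, v)) := ⟨s(a, b), he₁', Sym2.mem_mk_right a b⟩
      have he₂' : s(d, c) ∈ hypClass G s(u, v) := by rw [← he2]; exact he₂
      have hvd : d ∈ hypVerts (hypClass G s(u, v)) := ⟨s(d, c), he₂', Sym2.mem_mk_left d c⟩
      have hvc : c ∈ hypVerts (hypClass G s(u, v)) := ⟨s(d, c), he₂', Sym2.mem_mk_right d c⟩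
      have ra := ih a (by rw [he1]; exact Sym2.mem_mk_left a b)
      have rb := ih b (by rw [he1]; exact Sym2.mem_mk_right a b)
      intro z hz
      rw [he2] at hz
      rcases Sym2.mem_iff.mp hz with rfl | rfl
      · exact ra.tail ⟨h4.symm, hva, hvd⟩
      · exact rb.tail ⟨h2, hvb, hvc⟩

/-- if two hyperplanes are not transverse, the gate function of the second is
constant on the carrier of the first. -/
lemma gate_const_carrier (hG : QuasiMedian G) {u v u2 v2 : V} (huv : G.Adj u v)
    (h2uv : G.Adj u2 v2)
    (hne : hypClass G s(u, v) ≠ hypClass G s(u2, v2))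
    (hnT : ¬ Transverse G (hypClass G s(u, v)) (hypClass G s(u2, v2))) :
    ∀ z ∈ hypVerts (hypClass G s(u, v)), gate G u2 v2 z = gate G u2 v2 u := by
  intro z hz
  obtain ⟨e, he, hze⟩ := hz
  have reach := carrier_reach hG huv e he z hze
  clear hze he
  induction reach with
  | refl => rfl
  | tail hr hstep ih =>
    rename_i sv tv
    obtain ⟨hadj, hs, ht⟩ := hstep
    have hgate : gate G u2 v2 tv = gate G u2 v2 sv := by
      by_contra hgg
      have hmem : s(sv, tv) ∈ hypClass G s(u2, v2) :=
        cross_mem hG h2uv hadj (fun h => hgg h.symm)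
      exact hnT ⟨hne, sv, tv, hadj, hmem, hs, ht⟩
    rw [hgate, ih]

end QM
end Chunk6
section Chunk7
variable {V : Type*} {G : SimpleGraph V}
namespace QM

lemma exists_carrier_neighbor (hG : QuasiMedian G) {u v : V} (huv : G.Adj u v) {z : V}
    (hz : z ∈ hypVerts (hypClass G s(u, v))) :
    ∃ z', G.Adj z z' ∧ s(z, z') ∈ hypClass G s(u, v) ∧
      gate G u v z' ≠ gate G u v z := by
  obtain ⟨e, he, hze⟩ := hz
  obtain ⟨x, y, heq, hadj, hg⟩ := class_edge_cross hG huv he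
  rw [heq] at hze he
  rcases Sym2.mem_iff.mp hze with rfl | rfl
  · exact ⟨y, hadj, he, fun h => hg h.symm⟩
  · refine ⟨x, hadj.symm, ?_, hg⟩
    have h : s(z, x) = s(x, z) := Sym2.eq_swap
    rw [h]
    exact he

/-- main step : given an edge of `K` in the carrier of `J` which moves one step
towards the `J`-gate, build a square crossed by both hyperplanes. -/
lemma square_step (hG : QuasiMedian G) {u v u2 v2 : V} (huv : G.Adj u v)
    (h2uv : G.Adj u2 v2) (hne : hypClass G s(u, v) ≠ hypClass G s(u2, v2))
    {p q p' : V} (hpq : G.Adj p q) (hKpq : s(p, q) ∈ hypClass G s(u2, v2))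
    (hpp' : G.Adj p p') (hJpp' : s(p, p') ∈ hypClass G s(u, v))
    (hdq : G.dist q (gate G u v p) + 1 = G.dist p (gate G u v p)) :
    ∃ p₁ q₁ w₁ p₁' : V, G.Adj p₁ q₁ ∧ G.Adj p₁ p₁' ∧ G.Adj q₁ w₁ ∧ G.Adj p₁' w₁ ∧
      s(p₁, q₁) ∈ hypClass G s(u2, v2) ∧ s(p₁', w₁) ∈ hypClass G s(u2, v2) ∧
      s(p₁, p₁') ∈ hypClass G s(u, v) ∧ s(q₁, w₁) ∈ hypClass G s(u, v) := by
  have hconn := hG.1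
  -- gates with respect to K
  have hg'pq : gate G u2 v2 p ≠ gate G u2 v2 q := gates_ne_of_mem hG h2uv hKpq
  -- gates with respect to J
  have hgpp' : gate G u v p ≠ gate G u v p' := gates_ne_of_mem hG huv hJpp'
  have hgpq : gate G u v p = gate G u v q := by
    by_contra hgg
    exact hypClass_disjoint hne (cross_mem hG huv hpq hgg) hKpq
  have hg'pp' : gate G u2 v2 p = gate G u2 v2 p' := by
    by_contra hgg
    exact hypClass_disjoint hne hJpp' (cross_mem hG h2uv hpp' hgg)
  -- levels
  have hL : G.dist p (gate G u v p) = G.dist p' (gate G u v p') :=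
    cross_pattern hG huv hpp' hgpp'
  set L := G.dist p (gate G u v p) with hLdef
  have hdq' : G.dist q (gate G u v q) = L - 1 ∧ 1 ≤ L := by
    rw [← hgpq]; omega
  have hdqp' : G.dist q (gate G u v p') = L := by
    have := dist_gate_other hG huv q (gate_mem hG huv p')
      (fun h => hgpp' ((hgpq.trans h.symm)))
    omega
  have hdpp' : G.dist p (gate G u v p') = L + 1 := by
    have := dist_gate_other hG huv p (gate_mem hG huv p') (fun h => hgpp' h.symm)
    omega
  have hp'q : p' ≠ q := by
    intro h
    rw [h] at hg'pp'
    exact hg'pq hg'pp'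
  obtain ⟨w, hw1, hw2, hw3⟩ := hG.2.2.2.2 (gate G u v p') p' q p hpp'.symm hpq.symm hp'q
    (by rw [SimpleGraph.dist_comm (v := p'), SimpleGraph.dist_comm (v := q), hdqp', ← hL])
    (by rw [SimpleGraph.dist_comm (v := p), SimpleGraph.dist_comm (v := p'), hdpp', ← hL])
  rw [SimpleGraph.dist_comm (v := p), hdpp', SimpleGraph.dist_comm (v := w)] at hw3
  have hdw : G.dist w (gate G u v p') = L - 1 := by omega
  have hgw : gate G u v w = gate G u v p' :=
    gate_eq_of_closer hG huv hw1.symm (by omega)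
  have hJqw : s(q, w) ∈ hypClass G s(u, v) := by
    refine cross_mem hG huv hw2 ?_
    rw [hgw, ← hgpq]
    exact hgpp'
  have hg'qw : gate G u2 v2 q = gate G u2 v2 w := by
    by_contra hgg
    exact hypClass_disjoint hne hJqw (cross_mem hG h2uv hw2 hgg)
  have hKp'w : s(p', w) ∈ hypClass G s(u2, v2) := by
    refine cross_mem hG h2uv hw1 ?_
    rw [← hg'pp', ← hg'qw]
    exact hg'pq
  exact ⟨p, q, w, p', hpq, hpp', hw2, hw1, hKpq, hKp'w, hJpp', hJqw⟩

/-- a transversality witness yields a square with opposite sides in the two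
hyperplanes. -/
lemma trans_to_square (hG : QuasiMedian G) {u v u2 v2 : V} (huv : G.Adj u v)
    (h2uv : G.Adj u2 v2)
    (hT : Transverse G (hypClass G s(u, v)) (hypClass G s(u2, v2))) :
    ∃ p₁ q₁ w₁ p₁' : V, G.Adj p₁ q₁ ∧ G.Adj p₁ p₁' ∧ G.Adj q₁ w₁ ∧ G.Adj p₁' w₁ ∧
      s(p₁, q₁) ∈ hypClass G s(u2, v2) ∧ s(p₁', w₁) ∈ hypClass G s(u2, v2) ∧
      s(p₁, p₁') ∈ hypClass G s(u, v) ∧ s(q₁, w₁) ∈ hypClass G s(u, v) := by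
  obtain ⟨hne, p, q, hpq, hKpq, hpJ, hqJ⟩ := hT
  obtain ⟨p', hpp', hJpp', hgp'⟩ := exists_carrier_neighbor hG huv hpJ
  obtain ⟨q', hqq', hJqq', hgq'⟩ := exists_carrier_neighbor hG huv hqJ
  have hgpq : gate G u v p = gate G u v q := by
    by_contra hgg
    exact hypClass_disjoint hne (cross_mem hG huv hpq hgg) hKpq
  have hd1 : G.dist p (gate G u v p) ≤ G.dist q (gate G u v p) + 1 :=
    adj_dist_le hG.1 hpq _
  have hd2 : G.dist q (gate G u v p) ≤ G.dist p (gate G u v p) + 1 :=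
    adj_dist_le hG.1 hpq.symm _
  rcases Nat.lt_trichotomy (G.dist q (gate G u v p)) (G.dist p (gate G u v p))
    with hlt | heq | hgt
  · -- q is lower : direct
    exact square_step hG huv h2uv hne hpq hKpq hpp' hJpp' (by omega)
  · -- equal : use the triangle condition to go lower
    obtain ⟨z, hz1, hz2, hz3⟩ := hG.2.2.2.1 (gate G u v p) p q hpq
      (by rw [SimpleGraph.dist_comm (v := p), SimpleGraph.dist_comm (v := q), heq])
    rw [SimpleGraph.dist_comm (v := p)] at hz3
    rw [SimpleGraph.dist_comm (v := z)] at hz3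
    have hKpz : s(p, z) ∈ hypClass G s(u2, v2) := by
      refine mem_hypClass_step hKpq (Or.inl ⟨p, q, z, hpq, hz2, hz1, by left; rfl,
        by right; right; rfl⟩)
    exact square_step hG huv h2uv hne hz1 hKpz hpp' hJpp' (by omega)
  · -- p is lower : swap the roles of p and q
    have hKqp : s(q, p) ∈ hypClass G s(u2, v2) := by
      have h : s(q, p) = s(p, q) := Sym2.eq_swap
      rw [h]; exact hKpq
    refine square_step hG huv h2uv hne hpq.symm hKqp hqq' hJqq' ?_
    rw [← hgpq]
    omega

/-- a square crossed by both hyperplanes yields transversality in both directions. -/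
lemma square_to_trans {J K : Set (Sym2 V)} (hne : J ≠ K) {p q w p' : V}
    (hpq : G.Adj p q) (hpp' : G.Adj p p') (hqw : G.Adj q w) (hp'w : G.Adj p' w)
    (hKpq : s(p, q) ∈ K) (hKp'w : s(p', w) ∈ K)
    (hJpp' : s(p, p') ∈ J) (hJqw : s(q, w) ∈ J) :
    Transverse G J K ∧ Transverse G K J := by
  constructor
  · exact ⟨hne, p, q, hpq, hKpq, ⟨s(p, p'), hJpp', Sym2.mem_mk_left p p'⟩,
      ⟨s(q, w), hJqw, Sym2.mem_mk_left q w⟩⟩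
  · exact ⟨hne.symm, p, p', hpp', hJpp', ⟨s(p, q), hKpq, Sym2.mem_mk_left p q⟩,
      ⟨s(p', w), hKp'w, Sym2.mem_mk_left p' w⟩⟩

end QM
end Chunk7
section Chunk8
variable {V : Type*} {G : SimpleGraph V}
namespace QM

lemma gate_const_walk (hG : QuasiMedian G) {u v : V} (huv : G.Adj u v) :
    ∀ {x' y' : V} (w' : G.Walk x' y'), (∀ e ∈ w'.edges, e ∉ hypClass G s(u, v)) →
      gate G u v x' = gate G u v y' := by
  intro x' y' w'
  induction w' with
  | nil => intro _; rfl
  | cons hadj rest ih =>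
    intro h
    rename_i a b c
    have h1 : s(a, b) ∉ hypClass G s(u, v) := h _ (by simp)
    have h2 : gate G u v a = gate G u v b := by
      by_contra hg
      exact h1 (cross_mem hG huv hadj hg)
    rw [h2]
    exact ih (fun e he => h e (by simp [he]))

lemma separates_of_gates_ne (hG : QuasiMedian G) {u v : V} (huv : G.Adj u v) {a b : V}
    (hg : gate G u v a ≠ gate G u v b) : Separates G (hypClass G s(u, v)) a b := by
  intro w'
  by_contra hcon
  push_neg at hcon
  exact hg (gate_const_walk hG huv w' hcon)

end QM
end Chunk8

open QM

/-- In a quasi-median graph of cubical dimension at most `D` (every family of pairwise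
transverse hyperplanes has at most `D` members), if every family of pairwise
non-transverse hyperplanes separating `x` and `y` has at most `N` members, then
`d(x,y) ≤ D * N`. -/
theorem stmt9 {V : Type*} (G : SimpleGraph V) (hG : QuasiMedian G) (x y : V)
    (D N : ℕ)
    (hD : ∀ S : Finset (Set (Sym2 V)), (∀ J ∈ S, IsHyperplane G J) →
      (∀ J ∈ S, ∀ J' ∈ S, J ≠ J' → Transverse G J J') → S.card ≤ D)
    (hN : ∀ S : Finset (Set (Sym2 V)),
      (∀ J ∈ S, IsHyperplane G J ∧ Separates G J x y) →
      (∀ J ∈ S, ∀ J' ∈ S, J ≠ J' → ¬ Transverse G J J') → S.card ≤ N) :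
    G.dist x y ≤ D * N := by
  classical
  have hconn := hG.1
  by_cases hd0 : G.dist x y = 0
  · rw [hd0]; exact Nat.zero_le _
  obtain ⟨wk, hwk⟩ := hconn.exists_walk_length_eq_dist x y
  set d := G.dist x y with hd
  have hdpos : 0 < d := Nat.pos_of_ne_zero hd0
  set p : ℕ → V := wk.getVert with hp
  have hadj : ∀ i, i < d → G.Adj (p i) (p (i + 1)) := by
    intro i hi
    exact wk.adj_getVert_succ (by omega)
  have hp0 : p 0 = x := wk.getVert_zero
  have hpd : p d = y := by
    rw [hp, ← hwk]
    exact wk.getVert_length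
  -- distances along the geodesic
  have hub : ∀ i k : ℕ, i + k ≤ d → G.dist (p i) (p (i + k)) ≤ k := by
    intro i k
    induction k with
    | zero => intro _; simp
    | succ n ih =>
      intro hik
      have h1 := ih (by omega)
      have h2 : G.dist (p i) (p (i + n + 1)) ≤ G.dist (p i) (p (i + n)) + 1 :=
        dist_le_right hconn (hadj (i + n) (by omega)) (p i)
      have : i + n + 1 = i + (n + 1) := by omega
      rw [this] at h2
      omega
  have hdist : ∀ i j : ℕ, i ≤ j → j ≤ d → G.dist (p i) (p j) = j - i := by
    intro i j hij hjd
    have h1 : G.dist (p i) (p j) ≤ j - i := by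
      have := hub i (j - i) (by omega)
      rw [show i + (j - i) = j by omega] at this
      exact this
    have h2 : G.dist x (p i) ≤ i := by
      have := hub 0 i (by omega)
      rw [show (0 : ℕ) + i = i by omega, hp0] at this
      exact this
    have h3 : G.dist (p j) y ≤ d - j := by
      have := hub j (d - j) (by omega)
      rw [show j + (d - j) = d by omega, hpd] at this
      exact this
    have h4 : d ≤ G.dist x (p i) + G.dist (p i) (p j) + G.dist (p j) y := by
      have t1 : G.dist x y ≤ G.dist x (p i) + G.dist (p i) y := hconn.dist_triangle
      have t2 : G.dist (p i) y ≤ G.dist (p i) (p j) + G.dist (p j) y := hconn.dist_triangle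
      omega
    omega
  have hdx : ∀ i, i ≤ d → G.dist x (p i) = i := by
    intro i hi
    have := hdist 0 i (by omega) hi
    rw [hp0] at this
    simpa using this
  have hdy : ∀ i, i ≤ d → G.dist (p i) y = d - i := by
    intro i hi
    have := hdist i d hi (le_refl d)
    rw [hpd] at this
    exact this
  -- the hyperplanes crossed by the geodesic
  set J : ℕ → Set (Sym2 V) := fun i => hypClass G s(p i, p (i + 1)) with hJ
  -- gates of geodesic vertices
  have gle : ∀ i, i < d → ∀ l, l ≤ i → gate G (p i) (p (i + 1)) (p l) = p i := by
    intro i hi l hl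
    refine gate_eq_left hG (hadj i hi) (r := i - l) ?_ ?_
    · exact hdist l i hl (by omega)
    · rw [hdist l (i + 1) (by omega) (by omega)]; omega
  have gge : ∀ i, i < d → ∀ l, i + 1 ≤ l → l ≤ d →
      gate G (p i) (p (i + 1)) (p l) = p (i + 1) := by
    intro i hi l hl hld
    refine gate_eq_right hG (hadj i hi) (r := l - (i + 1)) ?_ ?_
    · rw [SimpleGraph.dist_comm]
      exact hdist (i + 1) l hl hld
    · rw [SimpleGraph.dist_comm, hdist i l (by omega) hld]
      omega
  have gx : ∀ i, i < d → gate G (p i) (p (i + 1)) x = p i := by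
    intro i hi
    have := gle i hi 0 (by omega)
    rwa [hp0] at this
  have gy : ∀ i, i < d → gate G (p i) (p (i + 1)) y = p (i + 1) := by
    intro i hi
    have := gge i hi d (by omega) (le_refl d)
    rwa [hpd] at this
  -- basic properties of the J i
  have hyp : ∀ i, i < d → IsHyperplane G (J i) := by
    intro i hi
    exact ⟨s(p i, p (i + 1)), (G.mem_edgeSet).mpr (hadj i hi), rfl⟩
  have sep : ∀ i, i < d → Separates G (J i) x y := by
    intro i hi
    refine separates_of_gates_ne hG (hadj i hi) ?_
    rw [gx i hi, gy i hi]
    exact (hadj i hi).ne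
  have inj : ∀ i, i < d → ∀ j, j < d → i ≠ j → J i ≠ J j := by
    have key : ∀ i j, i < j → j < d → J i ≠ J j := by
      intro i j hij hjd heq
      have hmem : s(p j, p (j + 1)) ∈ J i := by
        rw [heq]; exact mem_hypClass_self _
      have := gates_ne_of_mem hG (hadj i (by omega)) hmem
      rw [gge i (by omega) j (by omega) (by omega),
        gge i (by omega) (j + 1) (by omega) (by omega)] at this
      exact this rfl
    intro i hi j hj hij
    rcases Nat.lt_or_ge i j with h | h
    · exact key i j h hj
    · exact fun heq => key j i (by omega) hi heq.symm
  -- the non-transversality relation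
  set comp : ℕ → ℕ → Prop := fun i j =>
    ¬ Transverse G (J i) (J j) ∧ ¬ Transverse G (J j) (J i) with hcomp
  have comp_symm : ∀ i j, comp i j → comp j i := fun i j h => ⟨h.2, h.1⟩
  -- a transversality witness puts a vertex in both carriers
  have carrier_vertex : ∀ i j, i < d → j < d →
      (Transverse G (J i) (J j) ∨ Transverse G (J j) (J i)) →
      (Transverse G (J i) (J j) ∧ Transverse G (J j) (J i)) ∧
        ∃ P, P ∈ hypVerts (J i) ∧ P ∈ hypVerts (J j) := by
    intro i j hi hj hT
    rcases hT with hT | hT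
    · obtain ⟨p₁, q₁, w₁, p₁', h1, h2, h3, h4, hK1, hK2, hJ1, hJ2⟩ :=
        trans_to_square hG (hadj i hi) (hadj j hj) hT
      refine ⟨square_to_trans hT.1 h1 h2 h3 h4 hK1 hK2 hJ1 hJ2,
        p₁, ⟨s(p₁, p₁'), hJ1, Sym2.mem_mk_left _ _⟩, ⟨s(p₁, q₁), hK1, Sym2.mem_mk_left _ _⟩⟩
    · obtain ⟨p₁, q₁, w₁, p₁', h1, h2, h3, h4, hK1, hK2, hJ1, hJ2⟩ :=
        trans_to_square hG (hadj j hj) (hadj i hi) hT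
      have both := square_to_trans hT.1 h1 h2 h3 h4 hK1 hK2 hJ1 hJ2
      refine ⟨⟨both.2, both.1⟩,
        p₁, ⟨s(p₁, q₁), hK1, Sym2.mem_mk_left _ _⟩, ⟨s(p₁, p₁'), hJ1, Sym2.mem_mk_left _ _⟩⟩
  -- transitivity of comp along the geodesic
  have Ttrans : ∀ i j k, i < j → j < k → k < d → comp i j → comp j k → comp i k := by
    intro i j k hij hjk hkd hcij hcjk
    by_contra hc
    rw [hcomp] at hc
    simp only [not_and_or, not_not] at hc
    obtain ⟨_, P, hPi, hPk⟩ := carrier_vertex i k (by omega) hkd hc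
    have e1 : gate G (p j) (p (j + 1)) P = gate G (p j) (p (j + 1)) (p i) :=
      gate_const_carrier hG (hadj i (by omega)) (hadj j (by omega))
        (inj i (by omega) j (by omega) (by omega)) hcij.1 P hPi
    have e2 : gate G (p j) (p (j + 1)) P = gate G (p j) (p (j + 1)) (p k) :=
      gate_const_carrier hG (hadj k hkd) (hadj j (by omega))
        (inj k hkd j (by omega) (by omega)) hcjk.2 P hPk
    rw [gle j (by omega) i (by omega)] at e1
    rw [gge j (by omega) k (by omega) (by omega)] at e2
    exact (hadj j (by omega)).ne (e1.symm.trans e2)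
  -- non-comp pairs are fully transverse
  have bothT : ∀ i j, i < d → j < d → i ≠ j → ¬ comp i j →
      Transverse G (J i) (J j) ∧ Transverse G (J j) (J i) := by
    intro i j hi hj hij hnc
    rw [hcomp] at hnc
    simp only [not_and_or, not_not] at hnc
    exact (carrier_vertex i j hi hj hnc).1
  -- Mirsky-type argument
  set P : ℕ → ℕ → Prop := fun i n => ∃ c : Finset ℕ, c.card = n ∧ (∀ a ∈ c, a ≤ i) ∧
    i ∈ c ∧ (∀ a ∈ c, ∀ b ∈ c, a ≠ b → comp a b) ∧ (∀ a ∈ c, a < d) with hP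
  set h : ℕ → ℕ := fun i => Nat.findGreatest (P i) d with hh
  have hP1 : ∀ i, i < d → P i 1 := by
    intro i hi
    exact ⟨{i}, Finset.card_singleton i, by simp, Finset.mem_singleton_self i,
      by intro a ha b hb hab; simp at ha hb; omega, by simp [hi]⟩
  have h_ge1 : ∀ i, i < d → 1 ≤ h i := by
    intro i hi
    exact Nat.le_findGreatest (by omega) (hP1 i hi)
  have h_leN : ∀ i, i < d → h i ≤ N := by
    intro i hi
    have hspec : P i (h i) := Nat.findGreatest_spec (by omega : 1 ≤ d) (hP1 i hi)
    obtain ⟨c, hcard, hle, hmem, hpair, hlt⟩ := hspec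
    have hinj : Set.InjOn J ↑c := by
      intro a ha b hb hab
      by_contra hne
      exact inj a (hlt a ha) b (hlt b hb) hne hab
    have hcardim : (c.image J).card = h i := by
      rw [Finset.card_image_of_injOn hinj, hcard]
    rw [← hcardim]
    refine hN (c.image J) ?_ ?_
    · intro A hA
      obtain ⟨a, ha, rfl⟩ := Finset.mem_image.mp hA
      exact ⟨hyp a (hlt a ha), sep a (hlt a ha)⟩
    · intro A hA B hB hAB
      obtain ⟨a, ha, rfl⟩ := Finset.mem_image.mp hA
      obtain ⟨b, hb, rfl⟩ := Finset.mem_image.mp hB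
      have hab : a ≠ b := fun hh => hAB (by rw [hh])
      exact (hpair a ha b hb hab).1
  have h_strict : ∀ a i, a < i → i < d → comp a i → h a < h i := by
    intro a i hai hid hcai
    have had : a < d := by omega
    have hspec : P a (h a) := Nat.findGreatest_spec (by omega : 1 ≤ d) (hP1 a had)
    obtain ⟨c, hcard, hle, hmem, hpair, hlt⟩ := hspec
    have hinotc : i ∉ c := fun hic => by have := hle i hic; omega
    have hcompc : ∀ b ∈ c, comp b i := by
      intro b hb
      rcases Nat.eq_or_lt_of_le (hle b hb) with heq | hlt'
      · rw [heq]; exact hcai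
      · exact Ttrans b a i hlt' hai hid (hpair b hb a hmem (by omega)) hcai
    have hP' : P i (h a + 1) := by
      refine ⟨insert i c, ?_, ?_, Finset.mem_insert_self i c, ?_, ?_⟩
      · rw [Finset.card_insert_of_notMem hinotc, hcard]
      · intro b hb
        rcases Finset.mem_insert.mp hb with hbi | hb
        · omega
        · have := hle b hb; omega
      · intro b hb b' hb' hbb'
        rcases Finset.mem_insert.mp hb with hbi | hbc
        · rcases Finset.mem_insert.mp hb' with hb'i | hb'c
          · exact absurd (hbi.trans hb'i.symm) hbb'
          · rw [hbi]; exact comp_symm _ _ (hcompc b' hb'c)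
        · rcases Finset.mem_insert.mp hb' with hb'i | hb'c
          · rw [hb'i]; exact hcompc b hbc
          · exact hpair b hbc b' hb'c hbb'
      · intro b hb
        rcases Finset.mem_insert.mp hb with hbi | hb
        · omega
        · exact hlt b hb
    have hbound : h a + 1 ≤ d := by
      have hsub : insert i c ⊆ Finset.range d := by
        intro b hb
        rcases Finset.mem_insert.mp hb with hbi | hb
        · exact Finset.mem_range.mpr (by omega)
        · exact Finset.mem_range.mpr (hlt b hb)
      have := Finset.card_le_card hsub
      rw [Finset.card_insert_of_notMem hinotc, hcard, Finset.card_range] at this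
      exact this
    have h2 : h a + 1 ≤ h i := Nat.le_findGreatest hbound hP'
    omega
  -- fibers of h are pairwise transverse families
  have fiber_card : ∀ t, ((Finset.range d).filter (fun i => h i = t)).card ≤ D := by
    intro t
    set F := (Finset.range d).filter (fun i => h i = t) with hF
    have hinj : Set.InjOn J ↑F := by
      intro a ha b hb hab
      simp only [hF, Finset.coe_filter, Set.mem_setOf_eq, Finset.mem_range] at ha hb
      by_contra hne
      exact inj a ha.1 b hb.1 hne hab
    have hcardim : (F.image J).card = F.card := Finset.card_image_of_injOn hinj
    rw [← hcardim]
    refine hD (F.image J) ?_ ?_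
    · intro A hA
      obtain ⟨a, ha, rfl⟩ := Finset.mem_image.mp hA
      simp only [hF, Finset.mem_filter, Finset.mem_range] at ha
      exact hyp a ha.1
    · intro A hA B hB hAB
      obtain ⟨a, ha, rfl⟩ := Finset.mem_image.mp hA
      obtain ⟨b, hb, rfl⟩ := Finset.mem_image.mp hB
      simp only [hF, Finset.mem_filter, Finset.mem_range] at ha hb
      have hab : a ≠ b := fun hh => hAB (by rw [hh])
      have hnc : ¬ comp a b := by
        intro hcab
        rcases Nat.lt_or_ge a b with hlt | hge
        · have := h_strict a b hlt hb.1 hcab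
          omega
        · have hlt : b < a := by omega
          have := h_strict b a hlt ha.1 (comp_symm a b hcab)
          omega
      exact (bothT a b ha.1 hb.1 hab hnc).1
  -- count
  have hmemIcc : ∀ i ∈ Finset.range d, h i ∈ Finset.Icc 1 N := by
    intro i hi
    rw [Finset.mem_range] at hi
    exact Finset.mem_Icc.mpr ⟨h_ge1 i hi, h_leN i hi⟩
  have hcount : (Finset.range d).card =
      ∑ t ∈ Finset.Icc 1 N, ((Finset.range d).filter (fun i => h i = t)).card :=
    Finset.card_eq_sum_card_fiberwise hmemIcc
  have hsum : ∑ t ∈ Finset.Icc 1 N, ((Finset.range d).filter (fun i => h i = t)).card ≤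
      N * D := by
    calc ∑ t ∈ Finset.Icc 1 N, ((Finset.range d).filter (fun i => h i = t)).card
        ≤ ∑ _t ∈ Finset.Icc 1 N, D := Finset.sum_le_sum (fun t _ => fiber_card t)
      _ = N * D := by simp [Finset.sum_const, Nat.card_Icc]
  rw [Finset.card_range] at hcount
  have hfin : d ≤ N * D := by omega
  rw [Nat.mul_comm D N]
  exact hfin
end
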